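/- arXiv:2207.14253 — 3 statements merged into one kernel-verified Lean document; each statement's English description precedes it below -/
import Mathlib

section
/- For all positive integers m and n, the partial permutohedron P(m,n) is a simple polytope; concretely, every extreme point of P(m,n) is contained in exactly m faces of dimension m−1. -/
set_option maxHeartbeats 1000000
open Set Module Finset
open Set Module

variable {m : ℕ}

theorem ball_of_intrinsicInterior {V : Type*} [NormedAddCommGroup V] [NormedSpace ℝ V]
    {s : Set V} {w : V} (hw : w ∈ intrinsicInterior ℝ s) :
    ∃ ε > 0, ∀ y ∈ affineSpan ℝ s, dist y w < ε → y ∈ s := by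
  obtain ⟨w', hw', rfl⟩ := hw
  rw [mem_interior_iff_mem_nhds, Metric.mem_nhds_iff] at hw'
  obtain ⟨ε, hε, hball⟩ := hw'
  refine ⟨ε, hε, fun y hy hdist => ?_⟩
  have : (⟨y, hy⟩ : affineSpan ℝ s) ∈ Metric.ball w' ε := by
    rw [Metric.mem_ball, Subtype.dist_eq]; exact hdist
  exact hball this

theorem vectorSpan_levelset_le (s : Set (Fin m → ℝ)) (L : (Fin m → ℝ) →ₗ[ℝ] ℝ) (c : ℝ)
    (h : ∀ x ∈ s, L x = c) : vectorSpan ℝ s ≤ LinearMap.ker L := by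
  rw [vectorSpan_def, Submodule.span_le]
  rintro z hz
  rw [Set.mem_vsub] at hz
  obtain ⟨x, hx, y, hy, rfl⟩ := hz
  simp only [SetLike.mem_coe, LinearMap.mem_ker, vsub_eq_sub, map_sub, h x hx, h y hy, sub_self]

theorem biorth_li (L : Fin m → (Fin m → ℝ) →ₗ[ℝ] ℝ) (uu : Fin m → (Fin m → ℝ))
    (h0 : ∀ i j, i ≠ j → L i (uu j) = 0) (hne : ∀ i, L i (uu i) ≠ 0) :
    LinearIndependent ℝ uu := by
  rw [Fintype.linearIndependent_iff]
  intro g hg j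
  have h := congrArg (L j) hg
  simp only [map_sum, map_smul, smul_eq_mul, map_zero] at h
  rw [Finset.sum_eq_single j] at h
  · rcases mul_eq_zero.mp h with h' | h'
    · exact h'
    · exact absurd h' (hne j)
  · intro b _ hbj
    rw [h0 j b (Ne.symm hbj), mul_zero]
  · intro h'
    exact absurd (Finset.mem_univ j) h'

def Fface (P : Set (Fin m → ℝ)) (v : Fin m → ℝ) (L : Fin m → (Fin m → ℝ) →ₗ[ℝ] ℝ)
    (i : Fin m) : Set (Fin m → ℝ) := {x ∈ P | L i x = L i v}

variable {P : Set (Fin m → ℝ)} {v : Fin m → ℝ}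
  {L : Fin m → (Fin m → ℝ) →ₗ[ℝ] ℝ} {w : Fin m → (Fin m → ℝ)}

theorem completeness (hm : 0 < m) (hP : Convex ℝ P) (hv : v ∈ P)
    (valid : ∀ i, ∀ x ∈ P, L i x ≤ L i v)
    (hw : ∀ i, w i ∈ P)
    (horth : ∀ i j, i ≠ j → L i (w j) = L i v)
    (hneg : ∀ i, L i (w i) < L i v)
    {F : Set (Fin m → ℝ)} (hFc : Convex ℝ F) (hFe : IsExtreme ℝ P F)
    (hdim : finrank ℝ (affineSpan ℝ F).direction = m - 1) (hvF : v ∈ F) :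
    ∃ i, F = Fface P v L i := by
  classical
  haveI : Nonempty (Fin m) := ⟨⟨0, hm⟩⟩
  have hFP : F ⊆ P := hFe.1
  obtain ⟨w0, hw0⟩ := Set.Nonempty.intrinsicInterior hFc ⟨v, hvF⟩
  have hw0F : w0 ∈ F := intrinsicInterior_subset hw0
  obtain ⟨ε, hε, hball⟩ := ball_of_intrinsicInterior hw0
  set D := vectorSpan ℝ F with hD_def
  have hDrank : finrank ℝ D = m - 1 := by rw [← hdim, direction_affineSpan]
  -- build a functional with kernel D
  have hQ : finrank ℝ ((Fin m → ℝ) ⧸ D) = 1 := by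
    have h := Submodule.finrank_quotient_add_finrank D
    rw [finrank_fin_fun, hDrank] at h
    omega
  let e : ((Fin m → ℝ) ⧸ D) ≃ₗ[ℝ] ℝ := LinearEquiv.ofFinrankEq _ _ (by rw [hQ, finrank_self])
  let ℓ₀ : (Fin m → ℝ) →ₗ[ℝ] ℝ := (e : ((Fin m → ℝ) ⧸ D) →ₗ[ℝ] ℝ) ∘ₗ D.mkQ
  have hker₀ : LinearMap.ker ℓ₀ = D := by
    ext x
    simp only [LinearMap.mem_ker, LinearMap.comp_apply, ℓ₀]
    rw [show (e : ((Fin m → ℝ) ⧸ D) →ₗ[ℝ] ℝ) (D.mkQ x) = 0 ↔ D.mkQ x = 0 from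
      ⟨fun h => e.injective (by simpa using h), fun h => by simp [h]⟩]
    rw [Submodule.mkQ_apply, Submodule.Quotient.mk_eq_zero]
  -- the two-sided contradiction
  have key : ∀ ℓ : (Fin m → ℝ) →ₗ[ℝ] ℝ, LinearMap.ker ℓ = D →
      ∀ a ∈ P, ∀ b ∈ P, ℓ w0 < ℓ a → ℓ b < ℓ w0 → False := by
    intro ℓ hker a ha b hb hA hB
    set α := ℓ a - ℓ w0 with hα_def
    set β := ℓ b - ℓ w0 with hβ_def
    have hα : 0 < α := by simp only [hα_def]; linarith
    have hβ : β < 0 := by simp only [hβ_def]; linarith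
    have hden : β - α < 0 := by linarith
    set lam := β / (β - α) with hlam
    have hlamprod : lam * (β - α) = β := div_mul_cancel₀ _ hden.ne
    have h0 : 0 < lam := div_pos_of_neg_of_neg hβ hden
    have h1 : lam < 1 := by nlinarith
    have hbal : lam * α + (1 - lam) * β = 0 := by linear_combination -hlamprod
    set d := lam • (a - w0) + (1 - lam) • (b - w0) with hd
    have hld : ℓ d = 0 := by
      have : ℓ d = lam * α + (1 - lam) * β := by
        simp only [hd, map_add, map_smul, map_sub, smul_eq_mul, hα_def, hβ_def]
        try ring
      rw [this, hbal]
    set t := min 1 (ε / (2 * (‖d‖ + 1))) with ht_def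
    have ht0 : 0 < t := lt_min one_pos (by positivity)
    have ht1 : t ≤ 1 := min_le_left _ _
    have htd : ‖t • d‖ < ε := by
      rw [norm_smul, Real.norm_eq_abs, abs_of_pos ht0]
      calc t * ‖d‖ ≤ (ε / (2 * (‖d‖ + 1))) * ‖d‖ := by
            apply mul_le_mul_of_nonneg_right (min_le_right _ _) (norm_nonneg d)
        _ < ε := by
            rw [div_mul_eq_mul_div, div_lt_iff₀ (by positivity)]
            nlinarith [norm_nonneg d]
    set x := w0 + t • d with hx_def
    have hxspan : x ∈ affineSpan ℝ F := by
      have hdD : t • d ∈ D := by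
        rw [← hker]
        exact Submodule.smul_mem _ _ (by rw [LinearMap.mem_ker, hld])
      have h := AffineSubspace.vadd_mem_of_mem_direction
        (s := affineSpan ℝ F) (by rw [direction_affineSpan]; exact hdD)
        (subset_affineSpan ℝ F hw0F)
      simpa [hx_def, vadd_eq_add, add_comm] using h
    have hxF : x ∈ F := by
      apply hball x hxspan
      rw [dist_eq_norm]
      simpa [hx_def] using htd
    set x1 := w0 + t • (a - w0) with hx1_def
    set x2 := w0 + t • (b - w0) with hx2_def
    have hx1P : x1 ∈ P := by
      have h := hP (hFP hw0F) ha (by linarith : (0:ℝ) ≤ 1 - t) ht0.le (by ring)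
      convert h using 1
      module
    have hx2P : x2 ∈ P := by
      have h := hP (hFP hw0F) hb (by linarith : (0:ℝ) ≤ 1 - t) ht0.le (by ring)
      convert h using 1
      module
    have hseg : x ∈ openSegment ℝ x1 x2 := by
      refine ⟨lam, 1 - lam, h0, by linarith, by ring, ?_⟩
      simp only [hx1_def, hx2_def, hx_def, hd]
      module
    have hx1F : x1 ∈ F := hFe.2 hx1P hx2P hxF hseg
    have hx1lvl : ℓ x1 = ℓ w0 := by
      have hmem : x1 - w0 ∈ D := vsub_mem_vectorSpan ℝ hx1F hw0F
      rw [← hker, LinearMap.mem_ker, map_sub, sub_eq_zero] at hmem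
      exact hmem
    have : ℓ x1 = ℓ w0 + t * α := by
      simp only [hx1_def, map_add, map_smul, map_sub, smul_eq_mul, hα_def]
      try ring
    nlinarith
  -- orientation
  obtain ⟨ℓ, hker, hsupp⟩ : ∃ ℓ : (Fin m → ℝ) →ₗ[ℝ] ℝ,
      LinearMap.ker ℓ = D ∧ ∀ x ∈ P, ℓ x ≤ ℓ w0 := by
    by_cases hcase : ∀ x ∈ P, ℓ₀ x ≤ ℓ₀ w0
    · exact ⟨ℓ₀, hker₀, hcase⟩
    · push_neg at hcase
      obtain ⟨a, ha, hA⟩ := hcase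
      have hkerneg : LinearMap.ker (-ℓ₀) = D := by
        ext x
        simp only [LinearMap.mem_ker, LinearMap.neg_apply, neg_eq_zero]
        rw [← LinearMap.mem_ker, hker₀]
      refine ⟨-ℓ₀, hkerneg, fun x hx => ?_⟩
      simp only [LinearMap.neg_apply, neg_le_neg_iff]
      by_contra hlt
      push_neg at hlt
      exact key ℓ₀ hker₀ a ha x hx hA hlt
  have hFlvl : ∀ x ∈ F, ℓ x = ℓ w0 := by
    intro x hx
    have hmem : x - w0 ∈ D := vsub_mem_vectorSpan ℝ hx hw0F
    rw [← hker, LinearMap.mem_ker, map_sub, sub_eq_zero] at hmem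
    exact hmem
  have heq : F = {x ∈ P | ℓ x = ℓ w0} := by
    apply Set.Subset.antisymm
    · exact fun x hx => ⟨hFP hx, hFlvl x hx⟩
    · rintro x ⟨hxP, hxl⟩
      set δ := min 1 (ε / (2 * (‖w0 - x‖ + 1))) with hδ_def
      have hδ0 : 0 < δ := lt_min one_pos (by positivity)
      set z := w0 + δ • (w0 - x) with hz_def
      have hzspan : z ∈ affineSpan ℝ F := by
        have hmem : δ • (w0 - x) ∈ D := by
          rw [← hker]
          refine Submodule.smul_mem _ _ ?_
          rw [LinearMap.mem_ker, map_sub, hxl, sub_self]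
        have h := AffineSubspace.vadd_mem_of_mem_direction
          (s := affineSpan ℝ F) (by rw [direction_affineSpan]; exact hmem)
          (subset_affineSpan ℝ F hw0F)
        simpa [hz_def, vadd_eq_add, add_comm] using h
      have hzF : z ∈ F := by
        apply hball z hzspan
        rw [dist_eq_norm]
        have : z - w0 = δ • (w0 - x) := by rw [hz_def]; abel
        rw [this, norm_smul, Real.norm_eq_abs, abs_of_pos hδ0]
        calc δ * ‖w0 - x‖ ≤ (ε / (2 * (‖w0 - x‖ + 1))) * ‖w0 - x‖ := by
              apply mul_le_mul_of_nonneg_right (min_le_right _ _) (norm_nonneg _)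
          _ < ε := by
              rw [div_mul_eq_mul_div, div_lt_iff₀ (by positivity)]
              nlinarith [norm_nonneg (w0 - x)]
      have h1δ : (0:ℝ) < 1 + δ := by linarith
      have hseg : w0 ∈ openSegment ℝ x z := by
        refine ⟨δ / (1 + δ), 1 / (1 + δ), by positivity, by positivity, ?_, ?_⟩
        · field_simp
          ring
        · rw [hz_def]
          match_scalars <;> field_simp <;> ring
      exact hFe.2 hxP (hFP hzF) hw0F hseg
  -- decomposition of ℓ in the dual basis
  set uu : Fin m → (Fin m → ℝ) := fun i => w i - v with huu_def
  have hLu_ne : ∀ i j, i ≠ j → L i (uu j) = 0 := fun i j hij => by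
    simp only [huu_def, map_sub, horth i j hij, sub_self]
  have hLu_neg : ∀ i, L i (uu i) < 0 := fun i => by
    simp only [huu_def, map_sub]
    linarith [hneg i]
  have huli : LinearIndependent ℝ uu := biorth_li L uu hLu_ne (fun i => (hLu_neg i).ne)
  have hvlvl : ℓ v = ℓ w0 := hFlvl v hvF
  set a : Fin m → ℝ := fun j => ℓ (uu j) / L j (uu j) with ha_def
  have ha_nonneg : ∀ j, 0 ≤ a j := by
    intro j
    apply div_nonneg_of_nonpos
    · have := hsupp (w j) (hw j)
      simp only [huu_def, map_sub]
      linarith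
    · exact (hLu_neg j).le
  let B := basisOfLinearIndependentOfCardEqFinrank huli
    (by rw [Fintype.card_fin, finrank_fin_fun])
  have hBcoe : ∀ j, B j = uu j := fun j => by
    rw [show ⇑B = uu from coe_basisOfLinearIndependentOfCardEqFinrank _ _]
  have hdecomp : ℓ = ∑ t, a t • L t := by
    apply B.ext
    intro j
    rw [hBcoe, LinearMap.sum_apply]
    rw [Finset.sum_eq_single j]
    · rw [LinearMap.smul_apply, smul_eq_mul, ha_def]
      exact (div_mul_cancel₀ _ (hLu_neg j).ne).symm
    · intro b _ hbj
      rw [LinearMap.smul_apply, hLu_ne b j hbj, smul_zero]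
    · intro h'
      exact absurd (Finset.mem_univ j) h'
  have hexists : ∃ i, a i ≠ 0 := by
    by_contra h
    push_neg at h
    have hzero : ℓ = 0 := by
      rw [hdecomp]
      apply Finset.sum_eq_zero
      intro t _
      rw [h t, zero_smul]
    have hDtop : D = ⊤ := by rw [← hker, hzero]; exact LinearMap.ker_zero
    rw [hDtop] at hDrank
    rw [finrank_top, finrank_fin_fun] at hDrank
    omega
  obtain ⟨i, hai⟩ := hexists
  have hface : ∀ t, a t ≠ 0 → ∀ x ∈ F, L t x = L t v := by
    intro t hat x hx
    have hxP := hFP hx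
    have hsum : ∑ s, a s * (L s x - L s v) = 0 := by
      have e1 : ℓ x - ℓ v = 0 := by rw [hFlvl x hx, hvlvl, sub_self]
      calc ∑ s, a s * (L s x - L s v)
          = (∑ s, a s * L s x) - ∑ s, a s * L s v := by
            rw [← Finset.sum_sub_distrib]; congr 1; ext s; ring
        _ = ℓ x - ℓ v := by
            rw [hdecomp]; simp only [LinearMap.sum_apply, LinearMap.smul_apply, smul_eq_mul]
        _ = 0 := e1
    have hterms : ∀ s ∈ Finset.univ, a s * (L s x - L s v) ≤ 0 := by
      intro s _
      apply mul_nonpos_of_nonneg_of_nonpos (ha_nonneg s)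
      linarith [valid s x hxP]
    have := (Finset.sum_eq_zero_iff_of_nonpos hterms).mp hsum t (Finset.mem_univ t)
    rcases mul_eq_zero.mp this with h' | h'
    · exact absurd h' hat
    · linarith [sub_eq_zero.mp h']
  have huniq : ∀ j, j ≠ i → a j = 0 := by
    intro j hji
    by_contra haj
    have hle : D ≤ LinearMap.ker (L i) ⊓ LinearMap.ker (L j) := by
      refine le_inf ?_ ?_
      · exact vectorSpan_levelset_le F (L i) (L i v) (hface i hai)
      · exact vectorSpan_levelset_le F (L j) (L j v) (hface j haj)
    set K := LinearMap.ker (L i) ⊓ LinearMap.ker (L j) with hK_def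
    set g : Fin 2 → (Fin m → ℝ) := ![uu i, uu j] with hg_def
    have hgli : LinearIndependent ℝ g := by
      rw [Fintype.linearIndependent_iff]
      intro c hc
      rw [Fin.sum_univ_two] at hc
      simp only [hg_def, Matrix.cons_val_zero, Matrix.cons_val_one, Matrix.head_cons] at hc
      have hci : c 0 = 0 := by
        have h := congrArg (L i) hc
        simp only [map_add, map_smul, smul_eq_mul, map_zero,
          hLu_ne i j (fun h => hji h.symm), mul_zero, add_zero] at h
        rcases mul_eq_zero.mp h with h' | h'
        · exact h'
        · exact absurd h' (hLu_neg i).ne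
      have hcj : c 1 = 0 := by
        have h := congrArg (L j) hc
        simp only [map_add, map_smul, smul_eq_mul, map_zero,
          hLu_ne j i hji, mul_zero, zero_add] at h
        rcases mul_eq_zero.mp h with h' | h'
        · exact h'
        · exact absurd h' (hLu_neg j).ne
      intro t
      fin_cases t
      · exact hci
      · exact hcj
    set S := Submodule.span ℝ (Set.range g) with hS_def
    have hKS : K ⊓ S = ⊥ := by
      rw [eq_bot_iff]
      rintro y ⟨hyK, hyS⟩
      obtain ⟨c, hc⟩ := Submodule.mem_span_range_iff_exists_fun ℝ |>.mp hyS
      rw [Fin.sum_univ_two] at hc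
      simp only [hg_def, Matrix.cons_val_zero, Matrix.cons_val_one, Matrix.head_cons] at hc
      obtain ⟨hyi, hyj⟩ := Submodule.mem_inf.mp hyK
      rw [LinearMap.mem_ker] at hyi hyj
      have hci : c 0 = 0 := by
        have h := congrArg (L i) hc
        simp only [map_add, map_smul, smul_eq_mul,
          hLu_ne i j (fun h => hji h.symm), mul_zero, add_zero, hyi] at h
        rcases mul_eq_zero.mp h with h' | h'
        · exact h'
        · exact absurd h' (hLu_neg i).ne
      have hcj : c 1 = 0 := by
        have h := congrArg (L j) hc
        simp only [map_add, map_smul, smul_eq_mul,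
          hLu_ne j i hji, mul_zero, zero_add, hyj] at h
        rcases mul_eq_zero.mp h with h' | h'
        · exact h'
        · exact absurd h' (hLu_neg j).ne
      rw [Submodule.mem_bot, ← hc, hci, hcj, zero_smul, zero_smul, add_zero]
    have hSrank : finrank ℝ S = 2 := by
      rw [hS_def, finrank_span_eq_card hgli, Fintype.card_fin]
    have hKrank : m - 1 ≤ finrank ℝ K := by
      rw [← hDrank]
      exact Submodule.finrank_mono hle
    have hsum := Submodule.finrank_sup_add_finrank_inf_eq K S
    rw [hKS, finrank_bot, hSrank] at hsum
    have hle2 : finrank ℝ (K ⊔ S : Submodule ℝ (Fin m → ℝ)) ≤ finrank ℝ (Fin m → ℝ) :=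
      Submodule.finrank_le _
    rw [finrank_fin_fun] at hle2
    omega
  have hl_eq : ∀ y, ℓ y = a i * L i y := by
    intro y
    rw [hdecomp, LinearMap.sum_apply, Finset.sum_eq_single i]
    · rw [LinearMap.smul_apply, smul_eq_mul]
    · intro b _ hbi
      rw [huniq b hbi, LinearMap.smul_apply, zero_smul]
    · intro h'
      exact absurd (Finset.mem_univ i) h'
  refine ⟨i, ?_⟩
  rw [heq]
  ext x
  simp only [Fface, mem_setOf_eq]
  constructor
  · rintro ⟨hxP, hxl⟩
    refine ⟨hxP, ?_⟩
    have : a i * L i x = a i * L i v := by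
      rw [← hl_eq, ← hl_eq, hxl, hvlvl]
    exact mul_left_cancel₀ hai this
  · rintro ⟨hxP, hxl⟩
    refine ⟨hxP, ?_⟩
    rw [hl_eq, hxl, ← hl_eq, hvlvl]

theorem extreme_levelset (P : Set (Fin m → ℝ)) (L : (Fin m → ℝ) →ₗ[ℝ] ℝ) (c : ℝ)
    (valid : ∀ x ∈ P, L x ≤ c) : IsExtreme ℝ P {x ∈ P | L x = c} := by
  constructor
  · exact fun x hx => hx.1
  · rintro x1 hx1 x2 hx2 x ⟨hxP, hxL⟩ hseg
    obtain ⟨a, b, ha, hb, hab, rfl⟩ := hseg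
    have h1 : L x1 ≤ c := valid _ hx1
    have h2 : L x2 ≤ c := valid _ hx2
    have hL : a * L x1 + b * L x2 = c := by
      simpa [map_add, map_smul, smul_eq_mul] using hxL
    have hc : a * c + b * c = c := by linear_combination c * hab
    have k1 : b * L x2 ≤ b * c := mul_le_mul_of_nonneg_left h2 hb.le
    have k2 : a * L x1 ≤ a * c := mul_le_mul_of_nonneg_left h1 ha.le
    have e1 : L x1 = c := le_antisymm h1 ((mul_le_mul_iff_right₀ ha).mp (by linarith))
    have e2 : L x2 = c := le_antisymm h2 ((mul_le_mul_iff_right₀ hb).mp (by linarith))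
    exact ⟨hx1, e1⟩


theorem convex_levelset (P : Set (Fin m → ℝ)) (hP : Convex ℝ P) (L : (Fin m → ℝ) →ₗ[ℝ] ℝ) (c : ℝ) :
    Convex ℝ {x ∈ P | L x = c} := by
  intro x hx y hy a b ha hb hab
  refine ⟨hP hx.1 hy.1 ha hb hab, ?_⟩
  simp only [map_add, map_smul, smul_eq_mul, hx.2, hy.2]
  linear_combination c * hab


theorem finrank_ker_functional (L : (Fin m → ℝ) →ₗ[ℝ] ℝ) (hL : L ≠ 0) :
    finrank ℝ (LinearMap.ker L) = m - 1 := by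
  have hsurj : Function.Surjective L := by
    obtain ⟨x, hx⟩ : ∃ x, L x ≠ 0 := by
      by_contra h
      push_neg at h
      exact hL (LinearMap.ext fun x => h x)
    intro r
    exact ⟨(r / L x) • x, by simp [map_smul, div_mul_cancel₀, hx]⟩
  have h1 : finrank ℝ (LinearMap.range L) = 1 := by
    rw [LinearMap.range_eq_top.mpr hsurj]
    simpa using finrank_self ℝ
  have := LinearMap.finrank_range_add_finrank_ker L
  rw [h1, finrank_fin_fun] at this
  omega


variable {P : Set (Fin m → ℝ)} {v : Fin m → ℝ}

theorem core (hm : 0 < m) (hP : Convex ℝ P) (hv : v ∈ P)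
    (valid : ∀ i, ∀ x ∈ P, L i x ≤ L i v)
    (hw : ∀ i, w i ∈ P)
    (horth : ∀ i j, i ≠ j → L i (w j) = L i v)
    (hneg : ∀ i, L i (w i) < L i v) :
    {F : Set (Fin m → ℝ) | Convex ℝ F ∧ IsExtreme ℝ P F ∧
        finrank ℝ (affineSpan ℝ F).direction = m - 1 ∧ v ∈ F}.ncard = m := by
  classical
  set u : Fin m → (Fin m → ℝ) := fun i => w i - v with hu_def
  have hLu : ∀ i j, L i (u j) = L i (w j) - L i v := fun i j => by simp [hu_def, map_sub]
  have hLu_ne : ∀ i j, i ≠ j → L i (u j) = 0 := fun i j hij => by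
    rw [hLu, horth i j hij, sub_self]
  have hLu_neg : ∀ i, L i (u i) < 0 := fun i => by
    rw [hLu]; linarith [hneg i]
  -- each Fface qualifies
  have hmem : ∀ i, Fface P v L i ∈ {F : Set (Fin m → ℝ) | Convex ℝ F ∧ IsExtreme ℝ P F ∧
      finrank ℝ (affineSpan ℝ F).direction = m - 1 ∧ v ∈ F} := by
    intro i
    have hvi : v ∈ Fface P v L i := ⟨hv, rfl⟩
    have hwj : ∀ j, j ≠ i → w j ∈ Fface P v L i := fun j hj => ⟨hw j, horth i j (Ne.symm hj)⟩
    refine ⟨convex_levelset P hP (L i) (L i v), extreme_levelset P (L i) (L i v) (valid i), ?_, hvi⟩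
    rw [direction_affineSpan]
    refine le_antisymm ?_ ?_
    · calc finrank ℝ (vectorSpan ℝ (Fface P v L i))
          ≤ finrank ℝ (LinearMap.ker (L i)) := by
            apply Submodule.finrank_mono
            exact vectorSpan_levelset_le _ _ _ (fun x hx => hx.2)
        _ = m - 1 := finrank_ker_functional (L i) (by
            intro h0
            have := hLu_neg i
            rw [h0] at this
            simp at this)
    · -- lower bound via the m-1 independent vectors u j, j ≠ i
      have hui : LinearIndependent ℝ u := by
        rw [Fintype.linearIndependent_iff]
        intro g hg j
        have := congrArg (L j) hg
        simp only [map_sum, map_smul, smul_eq_mul, map_zero] at this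
        rw [Finset.sum_eq_single j] at this
        · rcases mul_eq_zero.mp this with h | h
          · exact h
          · exact absurd h (hLu_neg j).ne
        · intro b _ hbj
          rw [hLu_ne j b (Ne.symm hbj), mul_zero]
        · intro h
          exact absurd (Finset.mem_univ j) h
      have hsub : LinearIndependent ℝ (fun j : {j : Fin m // j ≠ i} => u j) :=
        hui.comp _ Subtype.val_injective
      have hspan : Submodule.span ℝ (Set.range (fun j : {j : Fin m // j ≠ i} => u j))
          ≤ vectorSpan ℝ (Fface P v L i) := by
        rw [Submodule.span_le]
        rintro z ⟨j, rfl⟩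
        exact vsub_mem_vectorSpan ℝ (hwj j j.2) ⟨hv, rfl⟩
      have hcard : Fintype.card {j : Fin m // j ≠ i} = m - 1 := by
        simp [Fintype.card_subtype_compl, Fintype.card_fin]
      calc m - 1 = finrank ℝ (Submodule.span ℝ
            (Set.range (fun j : {j : Fin m // j ≠ i} => u j))) := by
            rw [finrank_span_eq_card hsub, hcard]
        _ ≤ finrank ℝ (vectorSpan ℝ (Fface P v L i)) := Submodule.finrank_mono hspan
  -- injectivity
  have hinj : Function.Injective (Fface P v L) := by
    intro i j hij
    by_contra hne
    have h1 : w j ∈ Fface P v L i := ⟨hw j, horth i j hne⟩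
    rw [hij] at h1
    exact absurd h1.2 (hneg j).ne
  -- set equality
  have hset : {F : Set (Fin m → ℝ) | Convex ℝ F ∧ IsExtreme ℝ P F ∧
      finrank ℝ (affineSpan ℝ F).direction = m - 1 ∧ v ∈ F} = Set.range (Fface P v L) := by
    apply Set.eq_of_subset_of_subset
    · rintro F ⟨h1, h2, h3, h4⟩
      obtain ⟨i, rfl⟩ := completeness hm hP hv valid hw horth hneg h1 h2 h3 h4
      exact ⟨i, rfl⟩
    · rintro F ⟨i, rfl⟩
      exact hmem i
  rw [hset, ← Set.image_univ, Set.ncard_image_of_injective _ hinj, Set.ncard_univ,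
    Nat.card_eq_fintype_card, Fintype.card_fin]



def ppVertices (m n : ℕ) : Set (Fin m → ℝ) :=
  {x | (∀ i, ∃ k : ℕ, k ≤ n ∧ x i = k) ∧
       ∀ i j : Fin m, i ≠ j → x i ≠ 0 → x j ≠ 0 → x i ≠ x j}

def partialPermutohedron (m n : ℕ) : Set (Fin m → ℝ) :=
  convexHull ℝ (ppVertices m n)


/-- sum of distinct values in `[1,n]` is at most the sum of the top `card` values -/
theorem sum_distinct_le (n : ℕ) (A : Finset ℕ) (hA : A ⊆ Finset.Icc 1 n) :
    ∑ a ∈ A, (a : ℝ) ≤ ∑ j ∈ Finset.range A.card, ((n : ℝ) - j) := by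
  induction n generalizing A with
  | zero =>
    have : A = ∅ := by
      rw [← Finset.subset_empty]
      simpa using hA
    simp [this]
  | succ n ih =>
    by_cases h : n + 1 ∈ A
    · have hA' : A.erase (n+1) ⊆ Finset.Icc 1 n := by
        intro a ha
        have h1 := hA (Finset.mem_of_mem_erase ha)
        have h2 := Finset.ne_of_mem_erase ha
        rw [Finset.mem_Icc] at h1 ⊢
        omega
      have hcard : A.card = (A.erase (n+1)).card + 1 := by
        rw [Finset.card_erase_of_mem h]
        have : 0 < A.card := Finset.card_pos.mpr ⟨_, h⟩
        omega
      have hsum : ∑ a ∈ A, (a:ℝ) = (n+1 : ℝ) + ∑ a ∈ A.erase (n+1), (a:ℝ) := by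
        rw [← Finset.add_sum_erase _ _ h]
        push_cast
        ring
      rw [hsum, hcard]
      have hrhs : ∑ j ∈ Finset.range ((A.erase (n+1)).card + 1), ((n+1 : ℝ) - j)
          = (n+1 : ℝ) + ∑ j ∈ Finset.range ((A.erase (n+1)).card), ((n : ℝ) - j) := by
        rw [Finset.sum_range_succ']
        push_cast
        ring_nf
      push_cast
      rw [hrhs]
      have := ih _ hA'
      linarith
    · have hA' : A ⊆ Finset.Icc 1 n := by
        intro a ha
        have h1 := hA ha
        rw [Finset.mem_Icc] at h1 ⊢
        rcases Nat.lt_or_ge a (n+1) with h2 | h2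
        · omega
        · exfalso; have : a = n+1 := by omega
          exact h (this ▸ ha)
      have h2 := ih _ hA'
      have h3 : ∑ j ∈ Finset.range A.card, ((n:ℝ) - j)
          ≤ ∑ j ∈ Finset.range A.card, ((n:ℝ) + 1 - j) :=
        Finset.sum_le_sum (fun j _ => by linarith)
      push_cast
      linarith
  
/-- partial sums of `n - j` are monotone as long as we stay below `n` -/
theorem sum_top_mono (n c c' : ℕ) (h : c ≤ c') (h' : c' ≤ n) :
    ∑ j ∈ Finset.range c, ((n : ℝ) - j) ≤ ∑ j ∈ Finset.range c', ((n : ℝ) - j) := by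
  apply Finset.sum_le_sum_of_subset_of_nonneg
  · exact Finset.range_subset_range.mpr h
  · intro j hj _
    rw [Finset.mem_range] at hj
    have hjn : (j:ℝ) < (n:ℝ) := by exact_mod_cast by omega
    linarith

/-- the sum of the top `c` values -/
theorem sum_Icc_top (n c : ℕ) (hc : c ≤ n) :
    ∑ a ∈ Finset.Icc (n+1-c) n, (a:ℝ) = ∑ j ∈ Finset.range c, ((n:ℝ) - j) := by
  induction c with
  | zero => simp
  | succ c ih =>
    have hc' : c ≤ n := by omega
    have hin : Finset.Icc (n+1-(c+1)) n = insert (n-c) (Finset.Icc (n+1-c) n) := by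
      ext a
      simp only [Finset.mem_Icc, Finset.mem_insert]
      omega
    rw [hin, Finset.sum_insert (by rw [Finset.mem_Icc]; omega), ih hc',
      Finset.sum_range_succ]
    have : ((n - c : ℕ) : ℝ) = (n:ℝ) - c := by
      push_cast [Nat.cast_sub hc']
      ring
    rw [this]
    ring

theorem sum_update_finset {ι : Type*} [DecidableEq ι] (T : Finset ι) (f : ι → ℝ) (p : ι) (r : ℝ) :
    ∑ t ∈ T, Function.update f p r t
      = (∑ t ∈ T, f t) + (if p ∈ T then r - f p else 0) := by
  by_cases hp : p ∈ T
  · rw [if_pos hp, Finset.sum_update_of_mem hp, ← Finset.add_sum_erase _ f hp,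
      Finset.sdiff_singleton_eq_erase]
    ring
  · rw [if_neg hp, add_zero]
    apply Finset.sum_congr rfl
    intro t ht
    have : t ≠ p := by rintro rfl; exact hp ht
    rw [Function.update_of_ne this]

theorem pp_of_nat {m n : ℕ} (h : Fin m → ℕ) (hle : ∀ t, h t ≤ n)
    (hinj : ∀ t t', t ≠ t' → h t ≠ 0 → h t' ≠ 0 → h t ≠ h t') :
    (fun t => (h t : ℝ)) ∈ ppVertices m n := by
  constructor
  · exact fun t => ⟨h t, hle t, rfl⟩
  · intro t t' htt' h1 h2
    have h1' : h t ≠ 0 := fun hz => h1 (by simp [hz])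
    have h2' : h t' ≠ 0 := fun hz => h2 (by simp [hz])
    intro hc
    have hc' : ((h t : ℕ) : ℝ) = ((h t' : ℕ) : ℝ) := hc
    exact hinj t t' htt' h1' h2' (by exact_mod_cast hc')

theorem cast_update {m : ℕ} (g : Fin m → ℕ) (i : Fin m) (b : ℕ) :
    (fun t => ((Function.update g i b t : ℕ) : ℝ))
      = Function.update (fun t => ((g t : ℕ) : ℝ)) i (b : ℝ) := by
  funext t
  by_cases ht : t = i
  · subst ht; simp
  · simp [Function.update_of_ne ht]


theorem vertex_sum_le {m n : ℕ} (e : Fin m → ℝ) (he : e ∈ ppVertices m n)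
    (T : Finset (Fin m)) (c : ℕ) (hc1 : T.card ≤ c ∨ n ≤ c) (hc2 : c ≤ n) :
    ∑ t ∈ T, e t ≤ ∑ j ∈ Finset.range c, ((n:ℝ) - j) := by
  classical
  obtain ⟨ge, hge⟩ : ∃ ge : Fin m → ℕ, ∀ i, ge i ≤ n ∧ e i = ge i := by
    choose ge h1 h2 using he.1
    exact ⟨ge, fun i => ⟨h1 i, h2 i⟩⟩
  have hgeinj : ∀ t t', t ≠ t' → ge t ≠ 0 → ge t' ≠ 0 → ge t ≠ ge t' := by
    intro t t' htt' h1 h2 hc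
    refine he.2 t t' htt' ?_ ?_ ?_
    · rw [(hge t).2]; exact_mod_cast h1
    · rw [(hge t').2]; exact_mod_cast h2
    · rw [(hge t).2, (hge t').2]; exact_mod_cast hc
  set Tf := T.filter (fun t => ge t ≠ 0) with hTf
  have h1 : ∑ t ∈ T, e t = ∑ t ∈ Tf, (ge t : ℝ) := by
    rw [show ∑ t ∈ T, e t = ∑ t ∈ T, ((ge t : ℕ) : ℝ) from
      Finset.sum_congr rfl (fun t _ => (hge t).2)]
    rw [hTf]
    rw [Finset.sum_filter_of_ne]
    intro t _ hne
    intro h0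
    rw [h0] at hne
    simp at hne
  set A := Tf.image ge with hA_def
  have hinjOn : Set.InjOn ge Tf := by
    intro a ha b hb hab
    by_contra hne
    rw [hTf, Finset.coe_filter] at ha hb
    exact hgeinj a b hne ha.2 hb.2 hab
  have h2 : ∑ t ∈ Tf, (ge t:ℝ) = ∑ a ∈ A, (a:ℝ) := (Finset.sum_image
    (fun a ha b hb hab => hinjOn ha hb hab)).symm
  have hA : A ⊆ Finset.Icc 1 n := by
    intro a ha
    rw [hA_def, Finset.mem_image] at ha
    obtain ⟨t, ht, rfl⟩ := ha
    rw [hTf, Finset.mem_filter] at ht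
    rw [Finset.mem_Icc]
    exact ⟨Nat.one_le_iff_ne_zero.mpr ht.2, (hge t).1⟩
  have h3 := sum_distinct_le n A hA
  have h4 : A.card ≤ c := by
    rcases hc1 with hc1 | hc1
    · calc A.card ≤ Tf.card := Finset.card_image_le
        _ ≤ T.card := Finset.card_filter_le _ _
        _ ≤ c := hc1
    · calc A.card ≤ (Finset.Icc 1 n).card := Finset.card_le_card hA
        _ = n := by rw [Nat.card_Icc]; omega
        _ ≤ c := hc1
  have h5 := sum_top_mono n A.card c h4 hc2
  linarith

/-- `P(m,n)` is a simple polytope: every extreme point lies in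
exactly `m` faces of dimension `m - 1`. -/
theorem partialPermutohedron_simple (m n : ℕ) (hm : 0 < m) (hn : 0 < n) :
    ∀ v ∈ Set.extremePoints ℝ (partialPermutohedron m n),
      {F : Set (Fin m → ℝ) | Convex ℝ F ∧
          IsExtreme ℝ (partialPermutohedron m n) F ∧
          Module.finrank ℝ (affineSpan ℝ F).direction = m - 1 ∧
          v ∈ F}.ncard = m := by
  classical
  intro v hv
  have hvP : v ∈ partialPermutohedron m n := hv.1
  have hvE : v ∈ ppVertices m n := extremePoints_convexHull_subset hv
  obtain ⟨g, hg⟩ : ∃ g : Fin m → ℕ, ∀ i, g i ≤ n ∧ v i = g i := by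
    choose g hg1 hg2 using hvE.1
    exact ⟨g, fun i => ⟨hg1 i, hg2 i⟩⟩
  have hgn : ∀ i, g i ≤ n := fun i => (hg i).1
  have hvg : ∀ i, v i = g i := fun i => (hg i).2
  have hvfun : v = fun t => ((g t : ℕ) : ℝ) := funext hvg
  have hginj : ∀ i j, i ≠ j → g i ≠ 0 → g j ≠ 0 → g i ≠ g j := by
    intro i j hij hi hj hgij
    refine hvE.2 i j hij ?_ ?_ ?_
    · rw [hvg]; exact_mod_cast hi
    · rw [hvg]; exact_mod_cast hj
    · rw [hvg i, hvg j]; exact_mod_cast hgij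
  set supp : Finset (Fin m) := Finset.univ.filter (fun i => g i ≠ 0) with hsupp_def
  set k := supp.card with hk_def
  set Vals : Finset ℕ := supp.image g with hVals_def
  have hVinjOn : Set.InjOn g supp := by
    intro a ha b hb hab
    by_contra hne
    rw [hsupp_def, Finset.coe_filter] at ha hb
    exact hginj a b hne ha.2 hb.2 hab
  have hValscard : Vals.card = k := Finset.card_image_of_injOn hVinjOn
  have hValssub : Vals ⊆ Finset.Icc 1 n := by
    intro a ha
    rw [hVals_def, Finset.mem_image] at ha
    obtain ⟨t, ht, rfl⟩ := ha
    rw [hsupp_def, Finset.mem_filter] at ht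
    rw [Finset.mem_Icc]
    exact ⟨Nat.one_le_iff_ne_zero.mpr ht.2, hgn t⟩
  have hkn : k ≤ n := by
    rw [← hValscard]
    calc Vals.card ≤ (Finset.Icc 1 n).card := Finset.card_le_card hValssub
      _ = n := by rw [Nat.card_Icc]; omega
  have hgVals : ∀ t, g t ≠ 0 → g t ∈ Vals := fun t ht =>
    Finset.mem_image.mpr ⟨t, Finset.mem_filter.mpr ⟨Finset.mem_univ t, ht⟩, rfl⟩
  -- upward closedness from extremality
  have hup : ∀ a ∈ Vals, a < n → a + 1 ∈ Vals := by
    intro a haV han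
    by_contra hnot
    rw [hVals_def, Finset.mem_image] at haV
    obtain ⟨i, hi, hgi⟩ := haV
    rw [hsupp_def, Finset.mem_filter] at hi
    have ha0 : a ≠ 0 := hgi ▸ hi.2
    have hapos : (0:ℝ) < a := by exact_mod_cast Nat.pos_of_ne_zero ha0
    set x₁ : Fin m → ℝ := fun t => ((Function.update g i (a+1) t : ℕ) : ℝ) with hx1
    set x₀ : Fin m → ℝ := fun t => ((Function.update g i 0 t : ℕ) : ℝ) with hx0
    have hx₁pp : x₁ ∈ ppVertices m n := by
      apply pp_of_nat
      · intro t
        rw [Function.update_apply]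
        by_cases ht : t = i
        · rw [if_pos ht]; omega
        · rw [if_neg ht]; exact hgn t
      · intro t t' htt' h1 h2
        simp only [Function.update_apply] at h1 h2 ⊢
        by_cases ht : t = i
        · rw [if_pos ht] at h1 ⊢
          have ht' : ¬ (t' = i) := fun h => htt' (ht.trans h.symm)
          rw [if_neg ht'] at h2 ⊢
          intro hc
          exact hnot (hc ▸ hgVals t' h2)
        · rw [if_neg ht] at h1 ⊢
          by_cases ht' : t' = i
          · rw [if_pos ht'] at h2 ⊢
            intro hc
            exact hnot (hc ▸ hgVals t h1)
          · rw [if_neg ht'] at h2 ⊢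
            exact hginj t t' htt' h1 h2
    have hx₀pp : x₀ ∈ ppVertices m n := by
      apply pp_of_nat
      · intro t
        rw [Function.update_apply]
        by_cases ht : t = i
        · rw [if_pos ht]; omega
        · rw [if_neg ht]; exact hgn t
      · intro t t' htt' h1 h2
        simp only [Function.update_apply] at h1 h2 ⊢
        by_cases ht : t = i
        · rw [if_pos ht] at h1; omega
        · rw [if_neg ht] at h1 ⊢
          by_cases ht' : t' = i
          · rw [if_pos ht'] at h2; omega
          · rw [if_neg ht'] at h2 ⊢
            exact hginj t t' htt' h1 h2
    have ha1 : (0:ℝ) < (a:ℝ) + 1 := by linarith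
    have hseg : v ∈ openSegment ℝ x₁ x₀ := by
      refine ⟨(a:ℝ)/((a:ℝ)+1), 1/((a:ℝ)+1), div_pos hapos ha1, by positivity, by field_simp, ?_⟩
      funext t
      simp only [Pi.add_apply, Pi.smul_apply, smul_eq_mul]
      rw [hx1, hx0]
      simp only [Function.update_apply]
      by_cases ht : t = i
      · rw [if_pos ht, if_pos ht, ht, hvg i, hgi]
        push_cast
        field_simp
        ring
      · rw [if_neg ht, if_neg ht, hvg t]
        field_simp
    have hcon := hv.2 (subset_convexHull ℝ _ hx₁pp) (subset_convexHull ℝ _ hx₀pp) hseg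
    have : x₁ i = v i := by rw [hcon]
    rw [hx1] at this
    simp only at this
    rw [Function.update_self, hvg i, hgi] at this
    have : (a:ℝ) + 1 = (a:ℝ) := by exact_mod_cast this
    linarith
  -- the values are the top k values
  have hVals : Vals = Finset.Icc (n+1-k) n := by
    rcases Nat.eq_zero_or_pos k with hk0 | hkpos
    · have hVe : Vals = ∅ := Finset.card_eq_zero.mp (by rw [hValscard, hk0])
      rw [hVe, hk0]
      symm
      apply Finset.Icc_eq_empty
      omega
    · have hne : Vals.Nonempty := Finset.card_pos.mp (by rw [hValscard]; exact hkpos)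
      set a₀ := Vals.min' hne with ha₀
      have ha₀V : a₀ ∈ Vals := Finset.min'_mem _ _
      have ha₀Icc := Finset.mem_Icc.mp (hValssub ha₀V)
      have hsub1 : Vals ⊆ Finset.Icc a₀ n := by
        intro b hb
        rw [Finset.mem_Icc]
        exact ⟨Finset.min'_le _ _ hb, (Finset.mem_Icc.mp (hValssub hb)).2⟩
      have hsub2 : Finset.Icc a₀ n ⊆ Vals := by
        intro b hb
        obtain ⟨h1, h2⟩ := Finset.mem_Icc.mp hb
        clear hb
        revert h2
        induction b, h1 using Nat.le_induction with
        | base => intro _; exact ha₀V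
        | succ b hb IH => intro h2; exact hup b (IH (by omega)) (by omega)
      have heq : Vals = Finset.Icc a₀ n := Finset.Subset.antisymm hsub1 hsub2
      have hcard : k = n + 1 - a₀ := by rw [← hValscard, heq, Nat.card_Icc]
      have ha₀k : a₀ = n + 1 - k := by omega
      rw [heq, ha₀k]
  -- lookup positions for values
  have hfind : ∀ a, n+1-k ≤ a → a ≤ n → ∃ q, g q = a := by
    intro a h2 h3
    have ha : a ∈ Vals := by rw [hVals, Finset.mem_Icc]; exact ⟨h2, h3⟩
    rw [hVals_def, Finset.mem_image] at ha
    obtain ⟨q, _, hq⟩ := ha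
    exact ⟨q, hq⟩
  have hvalrange : ∀ i, g i ≠ 0 → n+1-k ≤ g i ∧ g i ≤ n := fun i hi =>
    Finset.mem_Icc.mp (hVals ▸ hgVals i hi)
  have huniqpos : ∀ i j, g i = g j → g i ≠ 0 → i = j := by
    intro i j hij hi
    by_contra hne
    exact hginj i j hne hi (hij ▸ hi) hij
  -- the constraints
  set Tset : Fin m → Finset (Fin m) := fun i =>
    if g i = 1 then Finset.univ else Finset.univ.filter (fun t => g i ≤ g t) with hT_def
  set L : Fin m → ((Fin m → ℝ) →ₗ[ℝ] ℝ) := fun i =>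
    if g i = 0 then -(LinearMap.proj i) else ∑ t ∈ Tset i, LinearMap.proj t with hL_def
  have hL0 : ∀ i x, g i = 0 → L i x = -(x i) := by
    intro i x h
    simp [hL_def, h]
  have hLs : ∀ i x, g i ≠ 0 → L i x = ∑ t ∈ Tset i, x t := by
    intro i x h
    simp [hL_def, h, LinearMap.sum_apply]
  have hTmem : ∀ i t, t ∈ Tset i ↔ (g i = 1 ∨ g i ≤ g t) := by
    intro i t
    rw [hT_def]
    by_cases h : g i = 1
    · simp [h]
    · simp [h, Finset.mem_filter]
  have hk_eq_n : ∀ i, g i = 1 → k = n := by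
    intro i h
    have h1 := (hvalrange i (by omega)).1
    rw [h] at h1
    omega
  have hTinj : ∀ i, g i ≠ 0 → g i ≠ 1 → Set.InjOn g (Tset i) := by
    intro i h0 h1 a ha b hb hab
    rw [Finset.mem_coe, hTmem] at ha hb
    have hga : g i ≤ g a := ha.resolve_left h1
    exact huniqpos a b hab (by omega)
  have hTimage : ∀ i, g i ≠ 0 → g i ≠ 1 → Finset.image g (Tset i) = Finset.Icc (g i) n := by
    intro i h0 h1
    apply Finset.Subset.antisymm
    · intro a ha
      rw [Finset.mem_image] at ha
      obtain ⟨t, ht, rfl⟩ := ha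
      rw [hTmem] at ht
      have := ht.resolve_left h1
      rw [Finset.mem_Icc]
      exact ⟨this, hgn t⟩
    · intro a ha
      rw [Finset.mem_Icc] at ha
      have hr := hvalrange i h0
      obtain ⟨q, hq⟩ := hfind a (by omega) ha.2
      rw [Finset.mem_image]
      exact ⟨q, (hTmem i q).mpr (Or.inr (by omega)), hq⟩
  have hTcard : ∀ i, g i ≠ 0 → g i ≠ 1 → (Tset i).card = n + 1 - g i := by
    intro i h0 h1
    rw [← Finset.card_image_of_injOn (hTinj i h0 h1), hTimage i h0 h1, Nat.card_Icc]
  have hLv : ∀ i, g i ≠ 0 → g i ≠ 1 →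
      L i v = ∑ j ∈ Finset.range (n+1-g i), ((n:ℝ) - j) := by
    intro i h0 h1
    rw [hLs i v h0]
    have e1 : ∑ t ∈ Tset i, v t = ∑ a ∈ Finset.image g (Tset i), (a:ℝ) := by
      rw [Finset.sum_image (fun a ha b hb hab => hTinj i h0 h1 ha hb hab)]
      exact Finset.sum_congr rfl (fun t _ => hvg t)
    rw [e1, hTimage i h0 h1]
    have hr := hvalrange i h0
    have e2 : g i = n + 1 - (n + 1 - g i) := by omega
    rw [show Finset.Icc (g i) n = Finset.Icc (n+1-(n+1-g i)) n by rw [← e2]]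
    exact sum_Icc_top n (n+1-g i) (by omega)
  have hLv1 : ∀ i, g i = 1 → L i v = ∑ j ∈ Finset.range n, ((n:ℝ) - j) := by
    intro i h1
    rw [hLs i v (by omega)]
    have hTuniv : Tset i = Finset.univ := by rw [hT_def]; simp [h1]
    rw [hTuniv]
    have e0 : ∑ t ∈ Finset.univ, v t = ∑ t ∈ supp, v t := by
      rw [hsupp_def]
      rw [Finset.sum_filter_of_ne]
      intro t _ hne h0
      rw [hvg t, h0] at hne
      simp at hne
    have e1 : ∑ t ∈ supp, v t = ∑ a ∈ Vals, (a:ℝ) := by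
      rw [hVals_def, Finset.sum_image (fun a ha b hb hab => hVinjOn ha hb hab)]
      exact Finset.sum_congr rfl (fun t _ => hvg t)
    rw [e0, e1, hVals, sum_Icc_top n k hkn, hk_eq_n i h1]
  -- validity on vertices
  have hvalidV : ∀ i, ∀ e ∈ ppVertices m n, L i e ≤ L i v := by
    intro i e he
    by_cases h0 : g i = 0
    · rw [hL0 i e h0, hL0 i v h0, hvg i, h0]
      obtain ⟨c, _, hc⟩ := he.1 i
      rw [hc]
      simp
    · by_cases h1 : g i = 1
      · rw [hLs i e h0, hLv1 i h1]
        exact vertex_sum_le e he (Tset i) n (Or.inr le_rfl) le_rfl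
      · rw [hLs i e h0, hLv i h0 h1]
        have hr := hvalrange i h0
        exact vertex_sum_le e he (Tset i) (n+1-g i)
          (Or.inl (le_of_eq (hTcard i h0 h1))) (by omega)
  have hvalid : ∀ i, ∀ x ∈ partialPermutohedron m n, L i x ≤ L i v := by
    intro i x hx
    exact convexHull_min (fun e he => hvalidV i e he) (convex_halfSpace_le (L i).isLinear _) hx
  -- helpers for updated vertices
  have hv0 : ∀ t, g t = 0 → v t = 0 := fun t h => by rw [hvg, h]; simp
  have hLupd' : ∀ j (f : Fin m → ℝ) p r, g j ≠ 0 →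
      L j (Function.update f p r) = L j f + (if p ∈ Tset j then r - f p else 0) := by
    intro j f p r hj
    rw [hLs j _ hj, hLs j f hj, sum_update_finset]
  have hupdate1 : ∀ (p : Fin m) (b : ℕ),
      (fun t => ((Function.update g p b t : ℕ):ℝ)) = Function.update v p (b:ℝ) := by
    intro p b
    rw [cast_update g p b, ← hvfun]
  have hupdate2 : ∀ (p p' : Fin m) (b b' : ℕ),
      (fun t => ((Function.update (Function.update g p b) p' b' t : ℕ):ℝ))
        = Function.update (Function.update v p (b:ℝ)) p' (b':ℝ) := by
    intro p p' b b'
    rw [cast_update (Function.update g p b) p' b', hupdate1 p b]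
  -- the neighbours
  have hex : ∀ i : Fin m, ∃ wi, wi ∈ ppVertices m n ∧
      (∀ j, j ≠ i → L j wi = L j v) ∧ L i wi < L i v := by
    intro i
    by_cases hgi0 : g i = 0
    · by_cases hkn' : k = n
      · -- case B : move the 1 to position i
        obtain ⟨q, hq⟩ := hfind 1 (by omega) (by omega)
        have hqi : q ≠ i := fun h => by rw [h, hgi0] at hq; omega
        refine ⟨fun t => ((Function.update (Function.update g q 0) i 1 t : ℕ):ℝ), ?_, ?_, ?_⟩
        · apply pp_of_nat
          · intro t
            have := hgn t
            simp only [Function.update_apply]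
            split_ifs <;> omega
          · intro t t' htt' h1 h2
            simp only [Function.update_apply] at h1 h2 ⊢
            by_cases ht : t = i
            · rw [if_pos ht] at h1 ⊢
              rw [if_neg (fun h => htt' (ht.trans h.symm))] at h2 ⊢
              by_cases htq' : t' = q
              · rw [if_pos htq'] at h2; omega
              · rw [if_neg htq'] at h2 ⊢
                intro hc
                exact htq' (huniqpos t' q (by omega) (by omega))
            · rw [if_neg ht] at h1 ⊢
              by_cases htq : t = q
              · rw [if_pos htq] at h1; omega
              · rw [if_neg htq] at h1 ⊢
                by_cases ht' : t' = i
                · rw [if_pos ht'] at h2 ⊢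
                  intro hc
                  exact htq (huniqpos t q (by omega) (by omega))
                · rw [if_neg ht'] at h2 ⊢
                  by_cases htq' : t' = q
                  · rw [if_pos htq'] at h2; omega
                  · rw [if_neg htq'] at h2 ⊢
                    exact hginj t t' htt' h1 h2
        · intro j hji
          rw [hupdate2]
          by_cases hj0 : g j = 0
          · rw [hL0 j _ hj0, hL0 j v hj0]
            have hjq : j ≠ q := fun h => by rw [h] at hj0; omega
            rw [Function.update_of_ne hji, Function.update_of_ne hjq]
          · rw [hLupd' j _ i _ hj0, hLupd' j v q _ hj0]
            by_cases hj1 : g j = 1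
            · have hiT : i ∈ Tset j := (hTmem j i).mpr (Or.inl hj1)
              have hqT : q ∈ Tset j := (hTmem j q).mpr (Or.inl hj1)
              rw [if_pos hiT, if_pos hqT, Function.update_of_ne hqi.symm, hv0 i hgi0,
                hvg q, hq]
              push_cast
              ring
            · have hiT : i ∉ Tset j := by
                intro hmem
                rcases (hTmem j i).mp hmem with h | h
                · exact hj1 h
                · omega
              have hqT : q ∉ Tset j := by
                intro hmem
                rcases (hTmem j q).mp hmem with h | h
                · exact hj1 h
                · omega
              rw [if_neg hiT, if_neg hqT]
              ring
        · rw [hupdate2, hL0 i _ hgi0, hL0 i v hgi0, Function.update_self, hv0 i hgi0]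
          norm_num
      · -- case A : add the value n - k at position i
        refine ⟨fun t => ((Function.update g i (n-k) t : ℕ):ℝ), ?_, ?_, ?_⟩
        · apply pp_of_nat
          · intro t
            have := hgn t
            simp only [Function.update_apply]
            split_ifs <;> omega
          · intro t t' htt' h1 h2
            simp only [Function.update_apply] at h1 h2 ⊢
            by_cases ht : t = i
            · rw [if_pos ht] at h1 ⊢
              rw [if_neg (fun h => htt' (ht.trans h.symm))] at h2 ⊢
              intro hc
              have := (hvalrange t' h2).1
              omega
            · rw [if_neg ht] at h1 ⊢
              by_cases ht' : t' = i
              · rw [if_pos ht'] at h2 ⊢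
                intro hc
                have := (hvalrange t h1).1
                omega
              · rw [if_neg ht'] at h2 ⊢
                exact hginj t t' htt' h1 h2
        · intro j hji
          rw [hupdate1]
          by_cases hj0 : g j = 0
          · rw [hL0 j _ hj0, hL0 j v hj0, Function.update_of_ne hji]
          · rw [hLupd' j v i _ hj0]
            have hiT : i ∉ Tset j := by
              intro hmem
              rcases (hTmem j i).mp hmem with h | h
              · exact hkn' (hk_eq_n j h)
              · omega
            rw [if_neg hiT]
            ring
        · rw [hupdate1, hL0 i _ hgi0, hL0 i v hgi0, Function.update_self, hv0 i hgi0]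
          have : (0:ℝ) < ((n - k : ℕ):ℝ) := by
            exact_mod_cast Nat.pos_of_ne_zero (by omega)
          linarith
    · by_cases hgi1 : g i = 1
      · -- case C : delete the 1
        refine ⟨fun t => ((Function.update g i 0 t : ℕ):ℝ), ?_, ?_, ?_⟩
        · apply pp_of_nat
          · intro t
            have := hgn t
            simp only [Function.update_apply]
            split_ifs <;> omega
          · intro t t' htt' h1 h2
            simp only [Function.update_apply] at h1 h2 ⊢
            by_cases ht : t = i
            · rw [if_pos ht] at h1; omega
            · rw [if_neg ht] at h1 ⊢
              by_cases ht' : t' = i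
              · rw [if_pos ht'] at h2; omega
              · rw [if_neg ht'] at h2 ⊢
                exact hginj t t' htt' h1 h2
        · intro j hji
          rw [hupdate1]
          by_cases hj0 : g j = 0
          · rw [hL0 j _ hj0, hL0 j v hj0, Function.update_of_ne hji]
          · rw [hLupd' j v i _ hj0]
            have hiT : i ∉ Tset j := by
              intro hmem
              rcases (hTmem j i).mp hmem with h | h
              · exact hji (huniqpos j i (by omega) (by omega))
              · exact hji (huniqpos j i (by omega) (by omega))
            rw [if_neg hiT]
            ring
        · rw [hupdate1, hLupd' i v i _ hgi0]
          have hiT : i ∈ Tset i := (hTmem i i).mpr (Or.inl hgi1)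
          rw [if_pos hiT, hvg i, hgi1]
          norm_num
      · by_cases hgik : g i = n + 1 - k
        · -- case D : decrement the lowest value
          refine ⟨fun t => ((Function.update g i (g i - 1) t : ℕ):ℝ), ?_, ?_, ?_⟩
          · apply pp_of_nat
            · intro t
              have := hgn t
              have := hgn i
              simp only [Function.update_apply]
              split_ifs <;> omega
            · intro t t' htt' h1 h2
              simp only [Function.update_apply] at h1 h2 ⊢
              by_cases ht : t = i
              · rw [if_pos ht] at h1 ⊢
                rw [if_neg (fun h => htt' (ht.trans h.symm))] at h2 ⊢
                intro hc
                have := (hvalrange t' h2).1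
                omega
              · rw [if_neg ht] at h1 ⊢
                by_cases ht' : t' = i
                · rw [if_pos ht'] at h2 ⊢
                  intro hc
                  have := (hvalrange t h1).1
                  omega
                · rw [if_neg ht'] at h2 ⊢
                  exact hginj t t' htt' h1 h2
          · intro j hji
            rw [hupdate1]
            by_cases hj0 : g j = 0
            · rw [hL0 j _ hj0, hL0 j v hj0, Function.update_of_ne hji]
            · rw [hLupd' j v i _ hj0]
              have hiT : i ∉ Tset j := by
                intro hmem
                rcases (hTmem j i).mp hmem with h | h
                · have := hk_eq_n j h
                  omega
                · have := (hvalrange j hj0).1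
                  exact hji (huniqpos j i (by omega) (by omega))
              rw [if_neg hiT]
              ring
          · rw [hupdate1, hLupd' i v i _ hgi0]
            have hiT : i ∈ Tset i := (hTmem i i).mpr (Or.inr le_rfl)
            rw [if_pos hiT, hvg i]
            have hcast : ((g i - 1 : ℕ):ℝ) = ((g i : ℕ):ℝ) - 1 := by
              have : (1:ℕ) ≤ g i := by omega
              push_cast [Nat.cast_sub this]
              ring
            rw [hcast]
            linarith
        · -- case E : swap with the next lower value
          obtain ⟨q, hq⟩ := hfind (g i - 1) (by have := (hvalrange i hgi0).1; omega)
            (by have := hgn i; omega)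
          have hqi : q ≠ i := fun h => by rw [h] at hq; omega
          have hq0 : g q ≠ 0 := by omega
          refine ⟨fun t => ((Function.update (Function.update g i (g i - 1)) q (g i) t : ℕ):ℝ),
            ?_, ?_, ?_⟩
          · apply pp_of_nat
            · intro t
              have := hgn t
              have := hgn i
              simp only [Function.update_apply]
              split_ifs <;> omega
            · intro t t' htt' h1 h2
              simp only [Function.update_apply] at h1 h2 ⊢
              by_cases htq : t = q
              · rw [if_pos htq] at h1 ⊢
                by_cases htq' : t' = q
                · exact absurd (htq.trans htq'.symm) htt'
                · rw [if_neg htq'] at h2 ⊢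
                  by_cases ht' : t' = i
                  · rw [if_pos ht'] at h2 ⊢
                    omega
                  · rw [if_neg ht'] at h2 ⊢
                    intro hc
                    exact ht' (huniqpos t' i (by omega) (by omega))
              · rw [if_neg htq] at h1 ⊢
                by_cases ht : t = i
                · rw [if_pos ht] at h1 ⊢
                  by_cases htq' : t' = q
                  · rw [if_pos htq'] at h2 ⊢
                    omega
                  · rw [if_neg htq'] at h2 ⊢
                    by_cases ht' : t' = i
                    · exact absurd (ht.trans ht'.symm) htt'
                    · rw [if_neg ht'] at h2 ⊢
                      intro hc
                      exact htq' (huniqpos t' q (by omega) (by omega))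
                · rw [if_neg ht] at h1 ⊢
                  by_cases htq' : t' = q
                  · rw [if_pos htq'] at h2 ⊢
                    intro hc
                    exact ht (huniqpos t i (by omega) (by omega))
                  · rw [if_neg htq'] at h2 ⊢
                    by_cases ht' : t' = i
                    · rw [if_pos ht'] at h2 ⊢
                      intro hc
                      exact htq (huniqpos t q (by omega) (by omega))
                    · rw [if_neg ht'] at h2 ⊢
                      exact hginj t t' htt' h1 h2
          · intro j hji
            rw [hupdate2]
            by_cases hj0 : g j = 0
            · rw [hL0 j _ hj0, hL0 j v hj0]
              have hjq : j ≠ q := fun h => by rw [h] at hj0; omega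
              rw [Function.update_of_ne hjq, Function.update_of_ne hji]
            · rw [hLupd' j _ q _ hj0, hLupd' j v i _ hj0]
              have hcast : ((g i - 1 : ℕ):ℝ) = ((g i : ℕ):ℝ) - 1 := by
                have : (1:ℕ) ≤ g i := by omega
                push_cast [Nat.cast_sub this]
                ring
              have hupdq : Function.update v i ((g i - 1 : ℕ):ℝ) q = v q :=
                Function.update_of_ne hqi _ _
              rw [hupdq]
              by_cases hjle : g j ≤ g i - 1
              · have hiT : i ∈ Tset j := (hTmem j i).mpr (Or.inr (by omega))
                have hqT : q ∈ Tset j := (hTmem j q).mpr (Or.inr (by omega))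
                rw [if_pos hiT, if_pos hqT, hvg q, hq, hvg i]
                push_cast [Nat.cast_sub (show (1:ℕ) ≤ g i by omega)]
                ring
              · have hiT : i ∉ Tset j := by
                  intro hmem
                  rcases (hTmem j i).mp hmem with h | h
                  · omega
                  · exact hji (huniqpos j i (by omega) (by omega))
                have hqT : q ∉ Tset j := by
                  intro hmem
                  rcases (hTmem j q).mp hmem with h | h
                  · omega
                  · omega
                rw [if_neg hiT, if_neg hqT]
                ring
          · rw [hupdate2]
            rw [hLupd' i _ q _ hgi0, hLupd' i v i _ hgi0]
            have hiT : i ∈ Tset i := (hTmem i i).mpr (Or.inr le_rfl)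
            have hqT : q ∉ Tset i := by
              intro hmem
              rcases (hTmem i q).mp hmem with h | h
              · exact hgi1 h
              · omega
            have hupdq : Function.update v i ((g i - 1 : ℕ):ℝ) q = v q :=
              Function.update_of_ne hqi _ _
            rw [hupdq, if_pos hiT, if_neg hqT, hvg i]
            have hcast : ((g i - 1 : ℕ):ℝ) = ((g i : ℕ):ℝ) - 1 := by
              have : (1:ℕ) ≤ g i := by omega
              push_cast [Nat.cast_sub this]
              ring
            rw [hcast]
            linarith
  -- apply the abstract core result
  choose W hW1 hW2 hW3 using hex
  exact core hm (convex_convexHull ℝ (ppVertices m n)) hvP hvalid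
    (fun i => subset_convexHull ℝ _ (hW1 i)) (fun i j hij => hW2 j i hij) hW3
end

section
/- For every positive integer m and all integers n₁, n₂ ≥ m, the partial permutohedra P(m,n₁) and P(m,n₂) are combinatorially equivalent: there exists a bijection between the set of nonempty faces of P(m,n₁) and the set of nonempty faces of P(m,n₂) such that both the bijection and its inverse preserve inclusion of faces. -/
namespace PPaux

open Finset
open scoped Classical

noncomputable section

variable {m : ℕ}

/-! ### The dot product -/

def dot (c x : Fin m → ℝ) : ℝ := ∑ i, c i * x i

lemma dot_isLinear (c : Fin m → ℝ) : IsLinearMap ℝ (dot c) := by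
  constructor
  · intro x y; simp [dot, mul_add, Finset.sum_add_distrib]
  · intro t x
    simp only [dot, Pi.smul_apply, smul_eq_mul, Finset.mul_sum]
    exact Finset.sum_congr rfl (fun i _ => by ring)

lemma dot_add_right (c x y : Fin m → ℝ) : dot c (x + y) = dot c x + dot c y :=
  (dot_isLinear c).map_add x y

lemma dot_smul_right (c : Fin m → ℝ) (t : ℝ) (x : Fin m → ℝ) :
    dot c (t • x) = t * dot c x := (dot_isLinear c).map_smul t x

lemma dot_sub_right (c x y : Fin m → ℝ) : dot c (x - y) = dot c x - dot c y := by
  simp [dot, mul_sub, Finset.sum_sub_distrib]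

lemma dot_add_smul_left (c₀ c₁ : Fin m → ℝ) (ε : ℝ) (x : Fin m → ℝ) :
    dot (c₀ + ε • c₁) x = dot c₀ x + ε * dot c₁ x := by
  simp [dot, add_mul, Finset.sum_add_distrib, Finset.mul_sum, mul_assoc]

lemma dot_sum (c : Fin m → ℝ) {ι : Type*} (s : Finset ι) (f : ι → Fin m → ℝ) :
    dot c (∑ i ∈ s, f i) = ∑ i ∈ s, dot c (f i) := by
  classical
  induction s using Finset.induction with
  | empty => simp [dot]
  | insert _ _ h ih => rw [Finset.sum_insert h, dot_add_right, ih, Finset.sum_insert h]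

/-! ### Generic facts about maximizing faces of `convexHull ↑B` -/

variable {B : Finset (Fin m → ℝ)}

def Amax (c : Fin m → ℝ) (B : Finset (Fin m → ℝ)) : Finset (Fin m → ℝ) :=
  B.filter (fun b => ∀ b' ∈ B, dot c b' ≤ dot c b)

lemma mem_Amax {c : Fin m → ℝ} {b : Fin m → ℝ} :
    b ∈ Amax c B ↔ b ∈ B ∧ ∀ b' ∈ B, dot c b' ≤ dot c b := by
  simp [Amax]

lemma Amax_subset {c : Fin m → ℝ} : Amax c B ⊆ B := Finset.filter_subset _ _

lemma Amax_nonempty (c : Fin m → ℝ) (hB : B.Nonempty) : (Amax c B).Nonempty := by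
  obtain ⟨b, hb, hmax⟩ := B.exists_max_image (dot c) hB
  exact ⟨b, mem_Amax.2 ⟨hb, hmax⟩⟩

lemma dot_le_on_hull {c a : Fin m → ℝ} (ha : a ∈ Amax c B) :
    ∀ x ∈ convexHull ℝ (B : Set (Fin m → ℝ)), dot c x ≤ dot c a := by
  intro x hx
  have : convexHull ℝ (B : Set (Fin m → ℝ)) ⊆ {y | dot c y ≤ dot c a} :=
    convexHull_min (fun b hb => (mem_Amax.1 ha).2 b hb) (convex_halfSpace_le (dot_isLinear c) _)
  exact this hx

lemma dot_eq_on_Amax {c a b : Fin m → ℝ} (ha : a ∈ Amax c B) (hb : b ∈ Amax c B) :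
    dot c b = dot c a :=
  le_antisymm ((mem_Amax.1 ha).2 b (Amax_subset hb)) ((mem_Amax.1 hb).2 a (Amax_subset ha))

lemma dot_eq_on_hull_Amax {c a : Fin m → ℝ} (ha : a ∈ Amax c B) :
    ∀ x ∈ convexHull ℝ ((Amax c B : Finset (Fin m → ℝ)) : Set (Fin m → ℝ)),
      dot c x = dot c a := by
  intro x hx
  have : convexHull ℝ ((Amax c B : Finset (Fin m → ℝ)) : Set (Fin m → ℝ))
      ⊆ {y | dot c y = dot c a} :=
    convexHull_min (fun b hb => dot_eq_on_Amax ha hb) (convex_hyperplane (dot_isLinear c) _)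
  exact this hx

/-- Absorption: an extreme subset of `convexHull B` contains every element of `B`
appearing with positive weight in a representation of one of its points. -/
lemma absorb {F : Set (Fin m → ℝ)} (hext : IsExtreme ℝ (convexHull ℝ (B : Set (Fin m → ℝ))) F)
    (t : Finset (Fin m → ℝ)) (hsub : t ⊆ B) (w : (Fin m → ℝ) → ℝ)
    (hw : ∀ y ∈ t, 0 < w y) (hsum : ∑ y ∈ t, w y = 1)
    (hmem : t.centerMass w id ∈ F) : (t : Set (Fin m → ℝ)) ⊆ F := by
  intro a ha
  have hat : a ∈ t := ha
  by_cases hrest : (t.erase a).Nonempty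
  · have hW : ∑ y ∈ t.erase a, w y = 1 - w a := by
      have := Finset.add_sum_erase t w hat
      linarith
    have hWpos : 0 < ∑ y ∈ t.erase a, w y := by
      obtain ⟨b, hb⟩ := hrest
      have hbpos := hw b (Finset.mem_of_mem_erase hb)
      have hnn : ∀ y ∈ t.erase a, 0 ≤ w y := fun y hy => (hw y (Finset.mem_of_mem_erase hy)).le
      calc (0:ℝ) < w b := hbpos
        _ ≤ ∑ y ∈ t.erase a, w y := Finset.single_le_sum hnn hb
    have hwa : 0 < w a := hw a hat
    have hwa1 : w a + ∑ y ∈ t.erase a, w y = 1 := by rw [hW]; ring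
    have hy'mem : (t.erase a).centerMass w id ∈ convexHull ℝ (B : Set (Fin m → ℝ)) := by
      apply Finset.centerMass_mem_convexHull
      · exact fun y hy => (hw y (Finset.mem_of_mem_erase hy)).le
      · exact hWpos
      · intro i hi; exact Finset.mem_coe.2 (hsub (Finset.mem_of_mem_erase hi))
    have hfold : (∑ y ∈ t.erase a, w y) • (t.erase a).centerMass w id
        = ∑ y ∈ t.erase a, w y • id y := by
      rw [Finset.centerMass, smul_smul, mul_inv_cancel₀ (ne_of_gt hWpos), one_smul]
    have hid : t.centerMass w id
        = w a • a + (∑ y ∈ t.erase a, w y) • (t.erase a).centerMass w id := by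
      rw [Finset.centerMass_eq_of_sum_1 _ _ hsum, hfold,
        ← Finset.add_sum_erase t (fun y => w y • id y) hat]
      simp [id]
    have hseg : t.centerMass w id ∈ openSegment ℝ a ((t.erase a).centerMass w id) :=
      ⟨w a, ∑ y ∈ t.erase a, w y, hwa, hWpos, hwa1, hid.symm⟩
    exact (hext.2 (subset_convexHull ℝ (B : Set (Fin m → ℝ)) (hsub hat)) hy'mem hmem hseg)
  · have ht : t = {a} := by
      apply Finset.eq_singleton_iff_unique_mem.2
      refine ⟨hat, fun b hb => ?_⟩
      by_contra hne
      exact hrest ⟨b, Finset.mem_erase.2 ⟨hne, hb⟩⟩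
    have hcm : t.centerMass w id = a := by
      rw [ht]
      refine Finset.centerMass_singleton a id ?_
      rw [ht] at hsum; simp at hsum; rw [hsum]; norm_num
    rwa [hcm] at hmem

/-- An extreme convex subset of the hull of `B` is the hull of its vertices. -/
lemma face_eq_hull_inter {F : Set (Fin m → ℝ)} (hconv : Convex ℝ F)
    (hext : IsExtreme ℝ (convexHull ℝ (B : Set (Fin m → ℝ))) F) :
    F = convexHull ℝ ((B.filter (· ∈ F) : Finset (Fin m → ℝ)) : Set (Fin m → ℝ)) := by
  apply Set.Subset.antisymm
  · intro x hx
    have hxB : x ∈ convexHull ℝ (B : Set (Fin m → ℝ)) := hext.1 hx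
    rw [Finset.convexHull_eq] at hxB
    obtain ⟨w, hw0, hw1, hwx⟩ := hxB
    set t := B.filter (fun y => w y ≠ 0) with ht
    have htsub : t ⊆ B := Finset.filter_subset _ _
    have htpos : ∀ y ∈ t, 0 < w y := by
      intro y hy
      rw [ht, Finset.mem_filter] at hy
      exact lt_of_le_of_ne (hw0 y hy.1) (Ne.symm hy.2)
    have htsum : ∑ y ∈ t, w y = 1 := by rw [ht, Finset.sum_filter_ne_zero]; exact hw1
    have htcm : t.centerMass w id = x := by
      rw [ht, Finset.centerMass_filter_ne_zero]; exact hwx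
    have habs : (t : Set (Fin m → ℝ)) ⊆ F := by
      apply absorb hext t htsub w htpos htsum
      rw [htcm]; exact hx
    have : t.centerMass w id ∈ convexHull ℝ ((B.filter (· ∈ F) :
        Finset (Fin m → ℝ)) : Set (Fin m → ℝ)) := by
      apply Finset.centerMass_mem_convexHull t (fun y hy => (htpos y hy).le)
        (by rw [htsum]; norm_num)
      intro i hi
      simp only [Finset.coe_filter, Set.mem_setOf_eq]
      exact ⟨htsub hi, habs hi⟩
    rwa [htcm] at this
  · apply convexHull_min _ hconv
    intro y hy
    simp only [Finset.coe_filter, Set.mem_setOf_eq] at hy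
    exact hy.2

/-- Points of the hull on the maximal hyperplane lie in the hull of the maximizers. -/
lemma hull_inter_hyperplane_subset {c a₀ : Fin m → ℝ} (ha₀ : a₀ ∈ Amax c B) :
    ∀ x ∈ convexHull ℝ (B : Set (Fin m → ℝ)), dot c x = dot c a₀ →
      x ∈ convexHull ℝ ((Amax c B : Finset (Fin m → ℝ)) : Set (Fin m → ℝ)) := by
  intro x hx hdot
  rw [Finset.convexHull_eq] at hx
  obtain ⟨w, hw0, hw1, hwx⟩ := hx
  have hdotx : dot c x = ∑ y ∈ B, w y * dot c y := by
    rw [← hwx, Finset.centerMass_eq_of_sum_1 _ _ hw1, dot_sum]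
    congr 1; funext y; exact dot_smul_right c (w y) y
  have hzero : ∑ y ∈ B, w y * (dot c a₀ - dot c y) = 0 := by
    have : ∑ y ∈ B, w y * (dot c a₀ - dot c y)
        = (∑ y ∈ B, w y) * dot c a₀ - ∑ y ∈ B, w y * dot c y := by
      rw [Finset.sum_mul]
      rw [← Finset.sum_sub_distrib]
      congr 1; funext y; ring
    rw [this, hw1, one_mul, ← hdotx, hdot]; ring
  have hterms : ∀ y ∈ B, w y ≠ 0 → dot c y = dot c a₀ := by
    intro y hy hwy
    have hnn : ∀ y ∈ B, 0 ≤ w y * (dot c a₀ - dot c y) := by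
      intro y' hy'
      have h1 := hw0 y' hy'
      have h2 := (mem_Amax.1 ha₀).2 y' hy'
      nlinarith
    have := (Finset.sum_eq_zero_iff_of_nonneg hnn).1 hzero y hy
    have hwpos : 0 < w y := lt_of_le_of_ne (hw0 y hy) (Ne.symm hwy)
    nlinarith [this]
  set t := B.filter (fun y => w y ≠ 0) with ht
  have htsum : ∑ y ∈ t, w y = 1 := by rw [ht, Finset.sum_filter_ne_zero]; exact hw1
  have : t.centerMass w id ∈ convexHull ℝ
      ((Amax c B : Finset (Fin m → ℝ)) : Set (Fin m → ℝ)) := by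
    apply Finset.centerMass_mem_convexHull t
    · intro y hy; rw [ht, Finset.mem_filter] at hy; exact hw0 y hy.1
    · rw [htsum]; norm_num
    · intro y hy
      rw [ht, Finset.mem_filter] at hy
      apply Finset.mem_coe.2
      apply mem_Amax.2
      refine ⟨hy.1, fun b' hb' => ?_⟩
      simp only [id_eq]
      rw [hterms y hy.1 hy.2]
      exact (mem_Amax.1 ha₀).2 b' hb'
  rw [ht, Finset.centerMass_filter_ne_zero, hwx] at this
  exact this

/-- The hull of the maximizers is extreme in the hull. -/
lemma Amax_isExtreme (c : Fin m → ℝ) (hB : B.Nonempty) :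
    IsExtreme ℝ (convexHull ℝ (B : Set (Fin m → ℝ)))
      (convexHull ℝ ((Amax c B : Finset (Fin m → ℝ)) : Set (Fin m → ℝ))) := by
  obtain ⟨a₀, ha₀⟩ := Amax_nonempty c hB
  constructor
  · exact convexHull_mono (by exact_mod_cast Amax_subset)
  · rintro x₁ hx₁ x₂ hx₂ x hx ⟨θ₁, θ₂, hθ₁, hθ₂, hθsum, hcomb⟩
    have hdx : dot c x = dot c a₀ := dot_eq_on_hull_Amax ha₀ x hx
    have hd1 : dot c x₁ ≤ dot c a₀ := dot_le_on_hull ha₀ x₁ hx₁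
    have hd2 : dot c x₂ ≤ dot c a₀ := dot_le_on_hull ha₀ x₂ hx₂
    have hlin : θ₁ * dot c x₁ + θ₂ * dot c x₂ = dot c a₀ := by
      rw [← hdx, ← hcomb, dot_add_right, dot_smul_right, dot_smul_right]
    have key : θ₁ * (dot c a₀ - dot c x₁) + θ₂ * (dot c a₀ - dot c x₂) = 0 := by
      linear_combination (dot c a₀) * hθsum - hlin
    have e1 : 0 ≤ θ₁ * (dot c a₀ - dot c x₁) := mul_nonneg hθ₁.le (by linarith)
    have e2 : 0 ≤ θ₂ * (dot c a₀ - dot c x₂) := mul_nonneg hθ₂.le (by linarith)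
    have z1 : θ₁ * (dot c a₀ - dot c x₁) = 0 := by linarith
    have z2 : θ₂ * (dot c a₀ - dot c x₂) = 0 := by linarith
    have he1 : dot c x₁ = dot c a₀ := by
      rcases mul_eq_zero.1 z1 with h | h
      · exact absurd h (ne_of_gt hθ₁)
      · linarith
    have he2 : dot c x₂ = dot c a₀ := by
      rcases mul_eq_zero.1 z2 with h | h
      · exact absurd h (ne_of_gt hθ₂)
      · linarith
    exact hull_inter_hyperplane_subset ha₀ x₁ hx₁ he1


lemma dot_add_left (c c' x : Fin m → ℝ) : dot (c + c') x = dot c x + dot c' x := by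
  simp [dot, add_mul, Finset.sum_add_distrib]

lemma dot_smul_left (a : ℝ) (c x : Fin m → ℝ) : dot (a • c) x = a * dot c x := by
  simp [dot, Finset.mul_sum, mul_assoc]

lemma isExtreme_mono {s t F : Set (Fin m → ℝ)} (hext : IsExtreme ℝ s F)
    (hts : t ⊆ s) (hFt : F ⊆ t) : IsExtreme ℝ t F := by
  refine ⟨hFt, ?_⟩
  intro x₁ h₁ x₂ h₂ x hx hseg
  exact hext.2 (hts h₁) (hts h₂) hx hseg

/-- Gluing: perturbing `c₀` slightly by `c₁` picks out the `c₁`-maximizers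
among the `c₀`-maximizers. -/
lemma glue (hB : B.Nonempty) (c₀ c₁ : Fin m → ℝ) :
    ∃ ε : ℝ, 0 < ε ∧ Amax (c₀ + ε • c₁) B = Amax c₁ (Amax c₀ B) := by
  obtain ⟨a₀, ha₀⟩ := Amax_nonempty c₀ hB
  by_cases hD : (B \ Amax c₀ B).Nonempty
  · -- proper case
    set δ := (B \ Amax c₀ B).inf' hD (fun d => dot c₀ a₀ - dot c₀ d) with hδdef
    have hδpos : 0 < δ := by
      rw [hδdef, Finset.lt_inf'_iff]
      intro d hd
      rw [Finset.mem_sdiff] at hd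
      have : ¬ (∀ b' ∈ B, dot c₀ b' ≤ dot c₀ d) := by
        intro hcon; exact hd.2 (mem_Amax.2 ⟨hd.1, hcon⟩)
      push_neg at this
      obtain ⟨b', hb', hlt⟩ := this
      have := (mem_Amax.1 ha₀).2 b' hb'
      linarith
    set R := B.sup' hB (fun b => |dot c₁ b|) + 1 with hRdef
    have hRb : ∀ b ∈ B, |dot c₁ b| ≤ R - 1 := by
      intro b hb; rw [hRdef]; simp only [add_sub_cancel_right]
      exact Finset.le_sup' (fun b => |dot c₁ b|) hb
    have hRpos : 0 < R := by
      have := hRb a₀ (Amax_subset ha₀)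
      have := abs_nonneg (dot c₁ a₀)
      linarith
    set ε := δ / (2 * R) with hεdef
    have hεpos : 0 < ε := by rw [hεdef]; positivity
    have hδε : δ = 2 * R * ε := by rw [hεdef]; field_simp
    have key : ∀ d ∈ B \ Amax c₀ B, ∀ x ∈ Amax c₀ B,
        dot (c₀ + ε • c₁) d < dot (c₀ + ε • c₁) x := by
      intro d hd x hx
      have hd1 : δ ≤ dot c₀ a₀ - dot c₀ d := Finset.inf'_le _ hd
      have hx1 : dot c₀ x = dot c₀ a₀ := dot_eq_on_Amax ha₀ hx
      have hd2 := hRb d (Finset.mem_sdiff.1 hd).1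
      have hx2 := hRb x (Amax_subset hx)
      rw [dot_add_smul_left, dot_add_smul_left, hx1]
      rcases abs_le.1 hd2 with ⟨hd2l, hd2r⟩
      rcases abs_le.1 hx2 with ⟨hx2l, hx2r⟩
      nlinarith
    refine ⟨ε, hεpos, ?_⟩
    ext b
    rw [mem_Amax, mem_Amax]
    constructor
    · rintro ⟨hbB, hbmax⟩
      have hbA₀ : b ∈ Amax c₀ B := by
        by_contra hbn
        have hbD : b ∈ B \ Amax c₀ B := Finset.mem_sdiff.2 ⟨hbB, hbn⟩
        exact absurd (hbmax a₀ (Amax_subset ha₀)) (not_le.2 (key b hbD a₀ ha₀))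
      refine ⟨hbA₀, fun b' hb' => ?_⟩
      have h := hbmax b' (Amax_subset hb')
      have e : dot c₀ b' = dot c₀ b :=
        (dot_eq_on_Amax hbA₀ hb').trans (dot_eq_on_Amax hbA₀ hbA₀).symm
      rw [dot_add_smul_left, dot_add_smul_left, e] at h
      have := (mul_le_mul_iff_right₀ hεpos).1 (by linarith : ε * dot c₁ b' ≤ ε * dot c₁ b)
      exact this
    · rintro ⟨hbA₀, hbmax⟩
      refine ⟨Amax_subset hbA₀, fun y hy => ?_⟩
      by_cases hyA : y ∈ Amax c₀ B
      · have e : dot c₀ y = dot c₀ b :=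
          (dot_eq_on_Amax hbA₀ hyA).trans (dot_eq_on_Amax hbA₀ hbA₀).symm
        rw [dot_add_smul_left, dot_add_smul_left, e]
        have := hbmax y hyA
        nlinarith
      · exact (key y (Finset.mem_sdiff.2 ⟨hy, hyA⟩) b hbA₀).le
  · -- B = Amax c₀ B
    rw [Finset.not_nonempty_iff_eq_empty, Finset.sdiff_eq_empty_iff_subset] at hD
    have hEq : Amax c₀ B = B := Finset.Subset.antisymm Amax_subset hD
    refine ⟨1, one_pos, ?_⟩
    rw [hEq]
    ext b
    rw [mem_Amax, mem_Amax]
    have hall : ∀ y ∈ B, dot c₀ y = dot c₀ a₀ := by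
      intro y hy
      exact dot_eq_on_Amax ha₀ (hD hy)
    constructor
    · rintro ⟨hbB, hbmax⟩
      refine ⟨hbB, fun b' hb' => ?_⟩
      have h := hbmax b' hb'
      rw [dot_add_smul_left, dot_add_smul_left, one_mul, one_mul,
        hall b' hb', hall b hbB] at h
      linarith
    · rintro ⟨hbB, hbmax⟩
      refine ⟨hbB, fun b' hb' => ?_⟩
      rw [dot_add_smul_left, dot_add_smul_left, one_mul, one_mul,
        hall b' hb', hall b hbB]
      have := hbmax b' hb'
      linarith


lemma centroid_eq (t : Finset (Fin m → ℝ)) (ht : t.Nonempty) :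
    t.centerMass (fun _ => (t.card : ℝ)⁻¹) id = (t.card : ℝ)⁻¹ • ∑ y ∈ t, y := by
  have hcard : (t.card : ℝ) ≠ 0 := Nat.cast_ne_zero.2 (Finset.card_ne_zero_of_mem ht.choose_spec)
  rw [Finset.centerMass]
  rw [Finset.sum_const, nsmul_eq_mul, mul_inv_cancel₀ hcard, inv_one]
  rw [one_smul, ← Finset.smul_sum]
  simp [id]

lemma centroid_weights_sum (t : Finset (Fin m → ℝ)) (ht : t.Nonempty) :
    ∑ _y ∈ t, (t.card : ℝ)⁻¹ = 1 := by
  have hcard : (t.card : ℝ) ≠ 0 := Nat.cast_ne_zero.2 (Finset.card_ne_zero_of_mem ht.choose_spec)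
  rw [Finset.sum_const, nsmul_eq_mul, mul_inv_cancel₀ hcard]

lemma clm_eq_dot (g : (Fin m → ℝ) →L[ℝ] ℝ) (x : Fin m → ℝ) :
    dot (fun i => g (fun j => if i = j then (1:ℝ) else 0)) x = g x := by
  conv_rhs => rw [pi_eq_sum_univ x]
  rw [map_sum]
  unfold dot
  refine Finset.sum_congr rfl (fun i _ => ?_)
  rw [map_smul]
  simp [mul_comm]

/-- The supporting-hyperplane step: a proper extreme convex subset of the hull of `B`
is contained in the hull of the maximizers of some functional which is not constant
on `B`. -/
lemma exists_proper_support (hB : B.Nonempty) {F : Set (Fin m → ℝ)} (hne : F.Nonempty)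
    (hconv : Convex ℝ F) (hext : IsExtreme ℝ (convexHull ℝ (B : Set (Fin m → ℝ))) F)
    (hneq : F ≠ convexHull ℝ (B : Set (Fin m → ℝ))) :
    ∃ c, F ⊆ convexHull ℝ ((Amax c B : Finset (Fin m → ℝ)) : Set (Fin m → ℝ))
      ∧ Amax c B ≠ B := by
  classical
  set S := B.filter (· ∈ F) with hSdef
  have hFS : F = convexHull ℝ (S : Set (Fin m → ℝ)) := face_eq_hull_inter hconv hext
  have hSne : S.Nonempty := by
    rcases hne with ⟨x, hx⟩
    by_contra h
    rw [Finset.not_nonempty_iff_eq_empty] at h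
    rw [hFS, h] at hx
    simp at hx
  have hSsub : S ⊆ B := Finset.filter_subset _ _
  have hScard : (S.card : ℝ) ≠ 0 := Nat.cast_ne_zero.2 (Finset.card_ne_zero_of_mem hSne.choose_spec)
  have hBcard : (B.card : ℝ) ≠ 0 := Nat.cast_ne_zero.2 (Finset.card_ne_zero_of_mem (hSsub hSne.choose_spec))
  -- centroids
  set z := (S.card : ℝ)⁻¹ • ∑ y ∈ S, y with hzdef
  set wB := (B.card : ℝ)⁻¹ • ∑ y ∈ B, y with hwdef
  clear_value z wB
  have hzF : z ∈ F := by
    rw [hFS, hzdef, ← centroid_eq S hSne]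
    exact Finset.centerMass_mem_convexHull S (fun _ _ => inv_nonneg.2 (Nat.cast_nonneg _))
      (by rw [centroid_weights_sum S hSne]; norm_num) (fun i hi => Finset.mem_coe.2 hi)
  have hzB : z ∈ convexHull ℝ (B : Set (Fin m → ℝ)) := hext.1 hzF
  have hwB : wB ∈ convexHull ℝ (B : Set (Fin m → ℝ)) := by
    rw [hwdef, ← centroid_eq B hB]
    exact Finset.centerMass_mem_convexHull B (fun _ _ => inv_nonneg.2 (Nat.cast_nonneg _))
      (by rw [centroid_weights_sum B hB]; norm_num) (fun i hi => Finset.mem_coe.2 hi)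
  have hwBF : wB ∉ F := by
    intro hwF
    have habs : (B : Set (Fin m → ℝ)) ⊆ F := by
      apply absorb hext B Finset.Subset.rfl (fun _ => (B.card : ℝ)⁻¹)
        (fun _ _ => inv_pos.2 (Nat.cast_pos.2 (Finset.card_pos.2 hB))) (centroid_weights_sum B hB)
      rw [centroid_eq B hB, ← hwdef]
      exact hwF
    have : convexHull ℝ (B : Set (Fin m → ℝ)) ⊆ F := convexHull_min habs hconv
    exact hneq (Set.Subset.antisymm hext.1 this)
  -- the outward ray avoids the hull
  have hq : ∀ t : ℝ, 0 < t → z + t • (z - wB) ∉ convexHull ℝ (B : Set (Fin m → ℝ)) := by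
    intro t ht hmem
    have hcomb : (1/(1+t)) • (z + t • (z - wB)) + (t/(1+t)) • wB = z := by
      funext i
      simp only [Pi.add_apply, Pi.smul_apply, Pi.sub_apply, smul_eq_mul]
      have h1t : (1:ℝ) + t ≠ 0 := by positivity
      field_simp
      ring
    have hseg : z ∈ openSegment ℝ (z + t • (z - wB)) wB :=
      ⟨1/(1+t), t/(1+t), by positivity, by positivity, by field_simp, hcomb⟩
    exact hwBF (hext.right_mem_of_mem_openSegment hmem hwB hzF hseg)
  -- separation for a sequence of outside points
  have hclosed : IsClosed (convexHull ℝ (B : Set (Fin m → ℝ))) :=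
    (B.finite_toSet.isCompact_convexHull ℝ).isClosed
  have hconvB : Convex ℝ (convexHull ℝ (B : Set (Fin m → ℝ))) := convex_convexHull ℝ _
  have htpos : ∀ k : ℕ, (0:ℝ) < ((k:ℝ)+1)⁻¹ := fun k => by positivity
  choose f u hfu hufq using fun k : ℕ =>
    geometric_hahn_banach_closed_point (x := z + ((k:ℝ)+1)⁻¹ • (z - wB)) hconvB hclosed
      (hq ((k:ℝ)+1)⁻¹ (htpos k))
  haveI : Nonempty {x // x ∈ B} := ⟨⟨hB.choose, hB.choose_spec⟩⟩
  set ι := {x // x ∈ B}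
  set t : ℕ → ℝ := fun k => ((k:ℝ)+1)⁻¹ with htdef
  set q : ℕ → (Fin m → ℝ) := fun k => z + t k • (z - wB) with hqdef
  set d : ℕ → ℝ := fun k => f k (q k) - f k z with hddef
  clear_value t q d
  have hfz : ∀ k, f k z < u k := fun k => hfu k z hzB
  have hdpos : ∀ k, 0 < d k := fun k => by
    have h1 := hfz k
    have h2 := hufq k
    simp only [hddef, hqdef, htdef]
    linarith
  have hterm_pos : ∀ k : ℕ, ∀ b : ι, 0 < f k (q k) - f k b.1 := by
    intro k b
    have h1 := hfu k b.1 (subset_convexHull ℝ _ (Finset.mem_coe.2 b.2))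
    have h2 := hufq k
    simp only [hqdef, htdef] at h2 ⊢
    linarith
  have hs_ex : ∀ k : ℕ, ∃ sk : ℝ, (∀ b : ι, f k (q k) - f k b.1 ≤ sk)
      ∧ ∃ b : ι, f k (q k) - f k b.1 = sk := by
    intro k
    obtain ⟨b, _, hb⟩ := Finset.exists_mem_eq_sup' (Finset.univ_nonempty (α := ι))
      (fun b : ι => f k (q k) - f k b.1)
    exact ⟨_, fun b' => Finset.le_sup' (fun b : ι => f k (q k) - f k b.1)
      (Finset.mem_univ b'), ⟨b, hb.symm⟩⟩
  choose s hle_s hatt using hs_ex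
  have hspos : ∀ k, 0 < s k := fun k =>
    lt_of_lt_of_le (hterm_pos k (Classical.arbitrary ι)) (hle_s k (Classical.arbitrary ι))
  have hfw : ∀ k, f k wB = (B.card : ℝ)⁻¹ * ∑ y ∈ B, f k y := by
    intro k
    rw [hwdef, map_smul, map_sum]
    simp
  have hd_le : ∀ k, d k ≤ s k * t k := by
    intro k
    have hsum : ∑ y ∈ B, (f k (q k) - f k y) ≤ B.card • s k :=
      Finset.sum_le_card_nsmul _ _ _ (fun y hy => hle_s k ⟨y, hy⟩)
    have hexp : ∑ y ∈ B, (f k (q k) - f k y)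
        = (B.card : ℝ) * f k (q k) - ∑ y ∈ B, f k y := by
      rw [Finset.sum_sub_distrib, Finset.sum_const, nsmul_eq_mul]
    rw [hexp, nsmul_eq_mul] at hsum
    have hinv : (B.card : ℝ) * ((B.card:ℝ)⁻¹ * ∑ y ∈ B, f k y) = ∑ y ∈ B, f k y := by
      field_simp
    have hsum' : (B.card : ℝ) * f k (q k) - (B.card : ℝ) * f k wB ≤ (B.card : ℝ) * s k := by
      rw [hfw k, hinv]
      linarith
    have hqw : f k (q k) - f k wB ≤ s k := by
      have hc : (0:ℝ) < B.card := lt_of_le_of_ne (Nat.cast_nonneg _) (Ne.symm hBcard)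
      have hmul : (B.card:ℝ) * (f k (q k) - f k wB) ≤ (B.card:ℝ) * s k := by linarith
      exact le_of_mul_le_mul_left hmul hc
    have hqz : d k = t k * (f k z - f k wB) := by
      simp only [hddef, hqdef]
      rw [map_add, map_smul]
      simp only [smul_eq_mul, map_sub]
      ring
    have htk : 0 < t k := by rw [htdef]; exact htpos k
    have htne : t k ≠ 0 := ne_of_gt htk
    have hzw : f k z - f k wB = d k / t k := by
      rw [hqz]; field_simp
    have hqw2 : d k + d k / t k ≤ s k := by
      have hh : f k (q k) - f k wB = d k + (f k z - f k wB) := by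
        simp only [hddef]; ring
      rw [hh, hzw] at hqw
      exact hqw
    have hdk := hdpos k
    have hdc : d k / t k * t k = d k := div_mul_cancel₀ _ htne
    have hexp2 : (d k + d k / t k) * t k = d k * t k + d k := by rw [add_mul, hdc]
    have hdtpos : 0 < d k * t k := mul_pos hdk htk
    have hmul2 := mul_le_mul_of_nonneg_right hqw2 htk.le
    linarith
  -- normalized value vectors
  set φ : ℕ → ι → ℝ := fun k b => (f k b.1 - f k z) / s k with hφdef
  have hub : ∀ k b, φ k b ≤ t k := by
    intro k b
    have h1 := hterm_pos k b
    have h3 : f k b.1 - f k z < d k := by simp only [hddef]; linarith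
    have h4 := hd_le k
    have h5 := hspos k
    simp only [hφdef]
    rw [div_le_iff₀ h5]
    calc f k b.1 - f k z ≤ d k := h3.le
      _ ≤ s k * t k := h4
      _ = t k * s k := by ring
  have hlb : ∀ k b, -1 ≤ φ k b := by
    intro k b
    have h1 := hle_s k b
    have h2 := hdpos k
    have h5 := hspos k
    simp only [hφdef]
    rw [le_div_iff₀ h5]
    simp only [hddef] at h2
    linarith
  have htle1 : ∀ k, t k ≤ 1 := by
    intro k
    simp only [htdef]
    rw [inv_le_one_iff₀]
    right
    have : (0:ℝ) ≤ (k:ℝ) := Nat.cast_nonneg k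
    linarith
  -- membership in the range of the evaluation map
  set Λ : ((Fin m → ℝ) →L[ℝ] ℝ) →ₗ[ℝ] (ι → ℝ) :=
    { toFun := fun g => fun b => g (b.1 - z)
      map_add' := by intro g g'; funext b; simp
      map_smul' := by intro a g; funext b; simp } with hΛdef
  set W := LinearMap.range Λ with hWdef2
  have hφW : ∀ k, φ k ∈ (W : Set (ι → ℝ)) := by
    intro k
    refine ⟨(s k)⁻¹ • f k, ?_⟩
    funext b
    simp only [hΛdef, LinearMap.coe_mk, AddHom.coe_mk, hφdef]
    rw [ContinuousLinearMap.smul_apply, map_sub]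
    simp only [smul_eq_mul]
    field_simp
  -- compactness
  have hK : IsCompact (Set.univ.pi (fun _ : ι => Set.Icc (-1:ℝ) 1)) :=
    isCompact_univ_pi (fun _ => isCompact_Icc)
  have hφK : ∀ k, φ k ∈ Set.univ.pi (fun _ : ι => Set.Icc (-1:ℝ) 1) := by
    intro k
    rw [Set.mem_univ_pi]
    intro b
    exact ⟨hlb k b, (hub k b).trans (htle1 k)⟩
  obtain ⟨φ₀, hφ₀K, σ, hσmono, hσtend⟩ := hK.tendsto_subseq hφK
  have htt : Filter.Tendsto (fun j => t (σ j)) Filter.atTop (nhds 0) := by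
    have h1 : Filter.Tendsto (fun n : ℕ => 1 / ((n : ℝ) + 1)) Filter.atTop (nhds 0) :=
      tendsto_one_div_add_atTop_nhds_zero_nat
    have h2 : Filter.Tendsto (fun n : ℕ => t n) Filter.atTop (nhds 0) := by
      simp only [htdef, ← one_div]
      exact h1
    exact h2.comp hσmono.tendsto_atTop
  have hWclosed : IsClosed (W : Set (ι → ℝ)) := Submodule.closed_of_finiteDimensional W
  have hφ₀W : φ₀ ∈ (W : Set (ι → ℝ)) :=
    hWclosed.mem_of_tendsto hσtend (Filter.Eventually.of_forall (fun j => hφW (σ j)))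
  have hφ₀le : ∀ b, φ₀ b ≤ 0 := by
    intro b
    refine le_of_tendsto_of_tendsto' ((tendsto_pi_nhds.1 hσtend) b) htt (fun j => ?_)
    exact hub (σ j) b
  have hattainφ : ∀ k, ∃ b : ι, φ k b = d k / s k - 1 := by
    intro k
    obtain ⟨b, hb⟩ := hatt k
    refine ⟨b, ?_⟩
    have h5 : s k ≠ 0 := (hspos k).ne'
    have hfb : f k b.1 - f k z = d k - s k := by simp only [hddef]; linarith
    simp only [hφdef]
    rw [hfb, sub_div, div_self h5]
  have hφ₀ne : ∃ b, φ₀ b < 0 := by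
    by_contra h
    push_neg at h
    have hz0 : φ₀ = 0 := funext fun b => le_antisymm (hφ₀le b) (h b)
    have hlow : ∀ j, 1 - t (σ j) ≤ ‖φ (σ j)‖ := by
      intro j
      obtain ⟨b, hb⟩ := hattainφ (σ j)
      have h1 : |φ (σ j) b| ≤ ‖φ (σ j)‖ := by
        have := norm_le_pi_norm (φ (σ j)) b
        simpa [Real.norm_eq_abs] using this
      have hds : 0 < d (σ j) / s (σ j) := div_pos (hdpos _) (hspos _)
      have hds2 : d (σ j) / s (σ j) ≤ t (σ j) := by
        rw [div_le_iff₀ (hspos _)]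
        have h4 := hd_le (σ j)
        linarith [mul_comm (s (σ j)) (t (σ j))]
      have habs2 : |φ (σ j) b| = 1 - d (σ j) / s (σ j) := by
        rw [hb, abs_of_nonpos (by linarith [htle1 (σ j)] : d (σ j) / s (σ j) - 1 ≤ 0)]
        ring
      linarith
    have hnorm : Filter.Tendsto (fun j => ‖φ (σ j)‖) Filter.atTop (nhds ‖φ₀‖) :=
      hσtend.norm
    have hone : Filter.Tendsto (fun j => 1 - t (σ j)) Filter.atTop (nhds 1) := by
      have := (tendsto_const_nhds (x := (1:ℝ)) (f := Filter.atTop (α := ℕ))).sub htt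
      simpa using this
    have h1le : (1:ℝ) ≤ ‖φ₀‖ := le_of_tendsto_of_tendsto' hone hnorm hlow
    rw [hz0] at h1le
    simp at h1le
    linarith
  obtain ⟨b₀, hb₀⟩ := hφ₀ne
  obtain ⟨g₀, hg₀⟩ := hφ₀W
  set cstar := fun i => g₀ (fun j => if i = j then (1:ℝ) else 0) with hcdef
  have hgd : ∀ x, dot cstar x = g₀ x := fun x => clm_eq_dot g₀ x
  have hval : ∀ (b : ι), dot cstar b.1 - dot cstar z = φ₀ b := by
    intro b
    have hh := congrFun hg₀ b
    simp only [hΛdef, LinearMap.coe_mk, AddHom.coe_mk] at hh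
    rw [hgd, hgd, ← map_sub]
    exact hh
  have hble : ∀ y ∈ B, dot cstar y ≤ dot cstar z := by
    intro y hy
    have h1 := hval ⟨y, hy⟩
    have h2 := hφ₀le ⟨y, hy⟩
    linarith
  have hzS : (S.card : ℝ) * dot cstar z = ∑ y ∈ S, dot cstar y := by
    have hh : dot cstar z = (S.card:ℝ)⁻¹ * ∑ y ∈ S, dot cstar y := by
      rw [hzdef, dot_smul_right, dot_sum]
    rw [hh]
    field_simp
  have hSmax : ∀ y ∈ S, dot cstar y = dot cstar z := by
    have hsum0 : ∑ y ∈ S, (dot cstar z - dot cstar y) = 0 := by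
      rw [Finset.sum_sub_distrib, Finset.sum_const, nsmul_eq_mul, hzS]
      ring
    intro y hy
    have hh := (Finset.sum_eq_zero_iff_of_nonneg
      (fun y' hy' => by have := hble y' (hSsub hy'); linarith)).1 hsum0 y hy
    linarith
  refine ⟨cstar, ?_, ?_⟩
  · rw [hFS]
    apply convexHull_mono
    intro y hy
    rw [Finset.mem_coe] at hy ⊢
    exact mem_Amax.2 ⟨hSsub hy, fun b' hb' => by rw [hSmax y hy]; exact hble b' hb'⟩
  · intro hEq
    obtain ⟨s₀, hs₀⟩ := hSne
    have hb₀A : b₀.1 ∈ Amax cstar B := by rw [hEq]; exact b₀.2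
    have h1 := (mem_Amax.1 hb₀A).2 s₀ (hSsub hs₀)
    have h2 := hval b₀
    have h3 := hSmax s₀ hs₀
    linarith

/-- Every nonempty convex extreme subset of the hull of a finite set is the hull
of the maximizers of some linear functional. -/
lemma face_eq_Amax_aux :
    ∀ (N : ℕ) (c₀ : Fin m → ℝ) {F : Set (Fin m → ℝ)},
      (Amax c₀ B).card ≤ N → B.Nonempty → F.Nonempty → Convex ℝ F →
      IsExtreme ℝ (convexHull ℝ (B : Set (Fin m → ℝ))) F →
      F ⊆ convexHull ℝ ((Amax c₀ B : Finset (Fin m → ℝ)) : Set (Fin m → ℝ)) →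
      ∃ c, F = convexHull ℝ ((Amax c B : Finset (Fin m → ℝ)) : Set (Fin m → ℝ)) := by
  intro N
  induction N with
  | zero =>
    intro c₀ F hcard hB hne hconv hext hsub
    obtain ⟨a, ha⟩ := Amax_nonempty c₀ hB
    have := Finset.card_pos.2 ⟨a, ha⟩
    omega
  | succ N ih =>
    intro c₀ F hcard hB hne hconv hext hsub
    by_cases heq : F = convexHull ℝ ((Amax c₀ B : Finset (Fin m → ℝ)) : Set (Fin m → ℝ))
    · exact ⟨c₀, heq⟩
    · have hextA : IsExtreme ℝ
          (convexHull ℝ ((Amax c₀ B : Finset (Fin m → ℝ)) : Set (Fin m → ℝ))) F :=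
        isExtreme_mono hext (convexHull_mono (by exact_mod_cast Amax_subset)) hsub
      obtain ⟨c₁, hc₁sub, hc₁ne⟩ :=
        exists_proper_support (B := Amax c₀ B) (Amax_nonempty c₀ hB) hne hconv hextA heq
      obtain ⟨ε, hε, hgl⟩ := glue hB c₀ c₁
      apply ih (c₀ + ε • c₁) ?_ hB hne hconv hext ?_
      · rw [hgl]
        have hss : Amax c₁ (Amax c₀ B) ⊂ Amax c₀ B :=
          Finset.ssubset_iff_subset_ne.2 ⟨Amax_subset, hc₁ne⟩
        have := Finset.card_lt_card hss
        omega
      · rw [hgl]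
        exact hc₁sub

lemma face_eq_Amax (hB : B.Nonempty) {F : Set (Fin m → ℝ)} (hne : F.Nonempty)
    (hconv : Convex ℝ F) (hext : IsExtreme ℝ (convexHull ℝ (B : Set (Fin m → ℝ))) F) :
    ∃ c, F = convexHull ℝ ((Amax c B : Finset (Fin m → ℝ)) : Set (Fin m → ℝ)) := by
  have h0 : Amax (0 : Fin m → ℝ) B = B := by
    ext b
    simp [mem_Amax, dot]
  apply face_eq_Amax_aux B.card 0 (by rw [h0]) hB hne hconv hext
  rw [h0]
  exact hext.1

lemma hull_Amax_subset_iff (hB : B.Nonempty) (c c' : Fin m → ℝ) :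
    convexHull ℝ ((Amax c B : Finset (Fin m → ℝ)) : Set (Fin m → ℝ)) ⊆
      convexHull ℝ ((Amax c' B : Finset (Fin m → ℝ)) : Set (Fin m → ℝ))
    ↔ Amax c B ⊆ Amax c' B := by
  constructor
  · intro h a ha
    have h1 : (a : Fin m → ℝ) ∈ convexHull ℝ ((Amax c' B : Finset (Fin m → ℝ)) : Set _) :=
      h (subset_convexHull ℝ _ (Finset.mem_coe.2 ha))
    obtain ⟨a', ha'⟩ := Amax_nonempty c' hB
    have h2 : dot c' a = dot c' a' := dot_eq_on_hull_Amax ha' a h1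
    exact mem_Amax.2 ⟨Amax_subset ha, fun y hy => by
      rw [h2]; exact (mem_Amax.1 ha').2 y hy⟩
  · intro h
    exact convexHull_mono (by exact_mod_cast h)

/-! ### The vertex sets of the partial permutohedra -/

lemma ppVertices_finite (m n : ℕ) : (ppVertices m n).Finite := by
  have hsub : ppVertices m n ⊆ Set.univ.pi
      (fun _ : Fin m => (fun k : ℕ => (k:ℝ)) '' (Set.Iic n)) := by
    intro x hx
    rw [Set.mem_univ_pi]
    intro i
    obtain ⟨k, hk, hxk⟩ := hx.1 i
    exact ⟨k, hk, hxk.symm⟩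
  exact (Set.Finite.pi (fun _ => (Set.finite_Iic n).image _)).subset hsub

def TV (m n : ℕ) : Finset (Fin m → ℝ) := (ppVertices_finite m n).toFinset

lemma mem_TV {n : ℕ} {x : Fin m → ℝ} : x ∈ TV m n ↔ x ∈ ppVertices m n :=
  Set.Finite.mem_toFinset _

lemma TV_coe (m n : ℕ) : ((TV m n : Finset (Fin m → ℝ)) : Set (Fin m → ℝ)) = ppVertices m n :=
  Set.Finite.coe_toFinset _

lemma zero_mem_V (m n : ℕ) : (0 : Fin m → ℝ) ∈ ppVertices m n :=
  ⟨fun _ => ⟨0, Nat.zero_le n, by simp⟩, fun i _ _ hi _ _ => absurd rfl hi⟩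

lemma TV_nonempty (m n : ℕ) : (TV m n).Nonempty := ⟨0, mem_TV.2 (zero_mem_V m n)⟩

lemma V_nonneg {n : ℕ} {x : Fin m → ℝ} (hx : x ∈ ppVertices m n) (i : Fin m) : 0 ≤ x i := by
  obtain ⟨k, _, hk⟩ := hx.1 i
  rw [hk]
  exact Nat.cast_nonneg k

lemma update_mem_V {n : ℕ} {x : Fin m → ℝ} (hx : x ∈ ppVertices m n) (i : Fin m)
    (v : ℕ) (hv : v ≤ n) (hfree : ∀ j, j ≠ i → x j ≠ (v:ℝ)) :
    Function.update x i (v:ℝ) ∈ ppVertices m n := by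
  constructor
  · intro j
    by_cases hj : j = i
    · subst hj; exact ⟨v, hv, by simp⟩
    · rw [Function.update_of_ne hj]
      exact hx.1 j
  · intro a b hab ha hb
    by_cases haa : a = i
    · subst haa
      rw [Function.update_self] at *
      rw [Function.update_of_ne (Ne.symm hab)] at *
      exact fun hh => (hfree b (Ne.symm hab)) hh.symm
    · by_cases hbb : b = i
      · subst hbb
        rw [Function.update_of_ne haa] at *
        rw [Function.update_self] at *
        exact fun hh => (hfree a haa) hh
      · rw [Function.update_of_ne haa, Function.update_of_ne hbb] at *
        exact hx.2 a b hab ha hb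

lemma update_zero_mem_V {n : ℕ} {x : Fin m → ℝ} (hx : x ∈ ppVertices m n) (i : Fin m) :
    Function.update x i (0:ℝ) ∈ ppVertices m n := by
  constructor
  · intro j
    by_cases hj : j = i
    · subst hj; exact ⟨0, Nat.zero_le n, by simp⟩
    · rw [Function.update_of_ne hj]
      exact hx.1 j
  · intro a b hab ha hb
    by_cases haa : a = i
    · subst haa; rw [Function.update_self] at ha; exact absurd rfl ha
    · by_cases hbb : b = i
      · subst hbb; rw [Function.update_self] at hb; exact absurd rfl hb
      · rw [Function.update_of_ne haa, Function.update_of_ne hbb] at *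
        exact hx.2 a b hab ha hb

lemma exists_unused {n : ℕ} {x : Fin m → ℝ} (hx : x ∈ ppVertices m n) {N : ℕ}
    (h : (Finset.univ.filter (fun j => x j ≠ (0:ℝ))).card < N) :
    ∃ v : ℕ, 1 ≤ v ∧ v ≤ N ∧ ∀ j, x j ≠ (v:ℝ) := by
  classical
  set used := (Finset.univ.filter (fun j => x j ≠ (0:ℝ))).image (fun j => ⌊x j⌋₊) with hused
  have hcard : used.card < N := lt_of_le_of_lt Finset.card_image_le h
  have hns : ¬ (Finset.Icc 1 N ⊆ used) := by
    intro hsub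
    have := Finset.card_le_card hsub
    rw [Nat.card_Icc] at this
    omega
  obtain ⟨v, hvIcc, hvn⟩ := Finset.not_subset.1 hns
  rw [Finset.mem_Icc] at hvIcc
  refine ⟨v, hvIcc.1, hvIcc.2, fun j hj => ?_⟩
  apply hvn
  rw [hused]
  apply Finset.mem_image.2
  refine ⟨j, ?_, ?_⟩
  · rw [Finset.mem_filter]
    refine ⟨Finset.mem_univ j, ?_⟩
    rw [hj]
    exact Nat.cast_ne_zero.2 (by omega)
  · rw [hj, Nat.floor_natCast]

/-! ### Shifting vertices -/

def shiftV (x : Fin m → ℝ) : Fin m → ℝ := fun i => if x i = 0 then 0 else x i + 1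

def unshiftV (x : Fin m → ℝ) : Fin m → ℝ := fun i => if x i = 0 then 0 else x i - 1

lemma shift_mem {n : ℕ} {x : Fin m → ℝ} (hx : x ∈ ppVertices m n) :
    shiftV x ∈ ppVertices m (n+1) := by
  constructor
  · intro i
    by_cases hi : x i = 0
    · exact ⟨0, Nat.zero_le _, by simp [shiftV, hi]⟩
    · obtain ⟨k, hk, hxk⟩ := hx.1 i
      refine ⟨k + 1, by omega, ?_⟩
      simp only [shiftV]
      rw [if_neg hi, hxk]
      push_cast
      ring
  · intro a b hab ha hb
    have hxa : x a ≠ 0 := by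
      intro hh; rw [shiftV] at ha; simp [hh] at ha
    have hxb : x b ≠ 0 := by
      intro hh; rw [shiftV] at hb; simp [hh] at hb
    have := hx.2 a b hab hxa hxb
    simp only [shiftV, if_neg hxa, if_neg hxb]
    intro hh
    apply this
    linarith

lemma unshift_mem {n : ℕ} {x : Fin m → ℝ} (hx : x ∈ ppVertices m (n+1)) :
    unshiftV x ∈ ppVertices m n := by
  constructor
  · intro i
    by_cases hi : x i = 0
    · exact ⟨0, Nat.zero_le _, by simp [unshiftV, hi]⟩
    · obtain ⟨k, hk, hxk⟩ := hx.1 i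
      have hk1 : 1 ≤ k := by
        rcases Nat.eq_zero_or_pos k with h | h
        · exfalso; apply hi; rw [hxk, h]; simp
        · omega
      refine ⟨k - 1, by omega, ?_⟩
      simp only [unshiftV]
      rw [if_neg hi, hxk]
      have hcast : ((k - 1 : ℕ) : ℝ) = (k : ℝ) - 1 := by
        rw [Nat.cast_sub hk1]; simp
      rw [hcast]
  · intro a b hab ha hb
    have hxa : x a ≠ 0 := by
      intro hh; rw [unshiftV] at ha; simp [hh] at ha
    have hxb : x b ≠ 0 := by
      intro hh; rw [unshiftV] at hb; simp [hh] at hb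
    have := hx.2 a b hab hxa hxb
    simp only [unshiftV, if_neg hxa, if_neg hxb]
    intro hh
    apply this
    linarith

lemma shift_unshift {n : ℕ} {x : Fin m → ℝ} (hx : x ∈ ppVertices m (n+1))
    (hones : ∀ i, x i ≠ 1) : shiftV (unshiftV x) = x := by
  funext i
  by_cases hi : x i = 0
  · simp [shiftV, unshiftV, hi]
  · have h1 : unshiftV x i = x i - 1 := by simp [unshiftV, hi]
    have h2 : x i - 1 ≠ 0 := fun hh => (hones i) (by linarith)
    simp only [shiftV, h1, if_neg h2]
    ring

lemma unshift_shift {n : ℕ} {x : Fin m → ℝ} (hx : x ∈ ppVertices m n) :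
    unshiftV (shiftV x) = x := by
  funext i
  by_cases hi : x i = 0
  · simp [shiftV, unshiftV, hi]
  · have hnn := V_nonneg hx i
    have h1 : shiftV x i = x i + 1 := by simp [shiftV, hi]
    have h2 : x i + 1 ≠ 0 := by
      intro hh
      have : x i > 0 := lt_of_le_of_ne hnn (Ne.symm hi)
      linarith
    simp only [unshiftV, h1, if_neg h2]
    ring

/-! ### Values of `dot` on shifted vertices -/

def spos (c : Fin m → ℝ) : ℝ := ∑ i, max (c i) 0

lemma sum_supp_le_spos (c x : Fin m → ℝ) :
    ∑ i ∈ Finset.univ.filter (fun i => x i ≠ (0:ℝ)), c i ≤ spos c := by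
  unfold spos
  calc ∑ i ∈ Finset.univ.filter (fun i => x i ≠ (0:ℝ)), c i
      ≤ ∑ i ∈ Finset.univ.filter (fun i => x i ≠ (0:ℝ)), max (c i) 0 :=
        Finset.sum_le_sum (fun i _ => le_max_left _ _)
    _ ≤ ∑ i, max (c i) 0 :=
        Finset.sum_le_sum_of_subset_of_nonneg (Finset.filter_subset _ _)
          (fun i _ _ => le_max_right _ _)

lemma sum_supp_eq_spos {c x : Fin m → ℝ} (h1 : ∀ i, c i < 0 → x i = 0)
    (h2 : ∀ i, 0 < c i → x i ≠ 0) :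
    ∑ i ∈ Finset.univ.filter (fun i => x i ≠ (0:ℝ)), c i = spos c := by
  rw [Finset.sum_filter]
  unfold spos
  refine Finset.sum_congr rfl (fun i _ => ?_)
  rcases lt_trichotomy (c i) 0 with hc | hc | hc
  · rw [if_neg (not_not.2 (h1 i hc)), max_eq_right hc.le]
  · simp [hc]
  · rw [if_pos (h2 i hc), max_eq_left hc.le]

lemma dot_shift (c x : Fin m → ℝ) :
    dot c (shiftV x) = dot c x + ∑ i ∈ Finset.univ.filter (fun i => x i ≠ (0:ℝ)), c i := by
  unfold dot
  rw [Finset.sum_filter, ← Finset.sum_add_distrib]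
  refine Finset.sum_congr rfl (fun i _ => ?_)
  by_cases h : x i = 0
  · simp [shiftV, h]
  · simp only [shiftV, if_neg h, if_pos h]
    ring

lemma dot_unshift (c x : Fin m → ℝ) :
    dot c (unshiftV x) = dot c x - ∑ i ∈ Finset.univ.filter (fun i => x i ≠ (0:ℝ)), c i := by
  unfold dot
  rw [Finset.sum_filter, ← Finset.sum_sub_distrib]
  refine Finset.sum_congr rfl (fun i _ => ?_)
  by_cases h : x i = 0
  · simp [unshiftV, h]
  · simp only [unshiftV, if_neg h, if_pos h]
    ring

lemma dot_update (c b : Fin m → ℝ) (i : Fin m) (r : ℝ) :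
    dot c (Function.update b i r) = dot c b - c i * b i + c i * r := by
  unfold dot
  have hfe : (fun j => c j * Function.update b i r j)
      = Function.update (fun j => c j * b j) i (c i * r) := by
    funext j
    by_cases hj : j = i
    · subst hj; simp
    · simp [Function.update_of_ne hj]
  calc ∑ j, c j * Function.update b i r j
      = ∑ j, Function.update (fun j => c j * b j) i (c i * r) j := by rw [hfe]
    _ = c i * r + ∑ j ∈ Finset.univ \ {i}, c j * b j := by
        rw [Finset.sum_update_of_mem (Finset.mem_univ i)]
    _ = dot c b - c i * b i + c i * r := by
        have : dot c b = c i * b i + ∑ j ∈ Finset.univ \ {i}, c j * b j := by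
          unfold dot
          rw [Finset.sdiff_singleton_eq_erase, ← Finset.add_sum_erase _ _ (Finset.mem_univ i)]
        rw [Finset.sdiff_singleton_eq_erase] at *
        rw [this]
        ring

/-! ### Structure of maximizers -/

lemma Amax_neg_zero {n : ℕ} {c b : Fin m → ℝ} {i : Fin m}
    (hb : b ∈ Amax c (TV m n)) (hci : c i < 0) : b i = 0 := by
  by_contra hbi
  obtain ⟨hbT, hmax⟩ := mem_Amax.1 hb
  have hbV := mem_TV.1 hbT
  have hbV' : Function.update b i (0:ℝ) ∈ ppVertices m n := update_zero_mem_V hbV i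
  have hy := hmax _ (mem_TV.2 hbV')
  rw [dot_update] at hy
  have hbipos : 0 < b i := lt_of_le_of_ne (V_nonneg hbV i) (Ne.symm hbi)
  nlinarith [mul_neg_of_neg_of_pos hci hbipos]

lemma Amax_pos_ne_zero {n : ℕ} (hmn : m ≤ n) {c b : Fin m → ℝ} {i : Fin m}
    (hb : b ∈ Amax c (TV m n)) (hci : 0 < c i) : b i ≠ 0 := by
  intro hbi
  obtain ⟨hbT, hmax⟩ := mem_Amax.1 hb
  have hbV := mem_TV.1 hbT
  have hm1 : 1 ≤ m := i.pos
  have hsub : Finset.univ.filter (fun j => b j ≠ (0:ℝ)) ⊆ Finset.univ.erase i := by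
    intro j hj
    rw [Finset.mem_filter] at hj
    refine Finset.mem_erase.2 ⟨fun hji => ?_, Finset.mem_univ j⟩
    subst hji
    exact hj.2 hbi
  have hcard : (Finset.univ.filter (fun j => b j ≠ (0:ℝ))).card < n := by
    have h1 := Finset.card_le_card hsub
    have h2 : (Finset.univ.erase i).card = m - 1 := by
      rw [Finset.card_erase_of_mem (Finset.mem_univ i), Finset.card_univ, Fintype.card_fin]
    omega
  obtain ⟨v, hv1, hvn, hvfree⟩ := exists_unused hbV hcard
  have hupd : Function.update b i (v:ℝ) ∈ ppVertices m n :=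
    update_mem_V hbV i v hvn (fun j _ => hvfree j)
  have hy := hmax _ (mem_TV.2 hupd)
  rw [dot_update, hbi] at hy
  have hv1' : (1:ℝ) ≤ v := by exact_mod_cast hv1
  nlinarith

lemma Amax_pos_ne_one {n : ℕ} (hmn : m ≤ n) {c b : Fin m → ℝ} {i : Fin m}
    (hb : b ∈ Amax c (TV m (n+1))) (hci : 0 < c i) : b i ≠ 1 := by
  intro hbi
  obtain ⟨hbT, hmax⟩ := mem_Amax.1 hb
  have hbV := mem_TV.1 hbT
  have hcard : (Finset.univ.filter (fun j => b j ≠ (0:ℝ))).card < n + 1 := by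
    have h1 := Finset.card_filter_le Finset.univ (fun j => b j ≠ (0:ℝ))
    rw [Finset.card_univ, Fintype.card_fin] at h1
    omega
  obtain ⟨v, hv1, hvn, hvfree⟩ := exists_unused hbV hcard
  have hvne1 : v ≠ 1 := by
    intro hh
    exact hvfree i (by rw [hbi, hh]; norm_num)
  have hv2 : 2 ≤ v := by omega
  have hupd : Function.update b i (v:ℝ) ∈ ppVertices m (n+1) :=
    update_mem_V hbV i v hvn (fun j _ => hvfree j)
  have hy := hmax _ (mem_TV.2 hupd)
  rw [dot_update, hbi] at hy
  have hv2' : (2:ℝ) ≤ v := by exact_mod_cast hv2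
  nlinarith

lemma Amax_level_succ {n : ℕ} (hmn : m ≤ n) {c a b : Fin m → ℝ}
    (ha : a ∈ Amax c (TV m n)) (hb : b ∈ Amax c (TV m (n+1))) :
    dot c b = dot c a + spos c := by
  have haV := mem_TV.1 (mem_Amax.1 ha).1
  have hbV := mem_TV.1 (mem_Amax.1 hb).1
  apply le_antisymm
  · have huV : unshiftV b ∈ ppVertices m n := unshift_mem hbV
    have h1 : dot c (unshiftV b) ≤ dot c a := (mem_Amax.1 ha).2 _ (mem_TV.2 huV)
    have h2 := dot_unshift c b
    have h3 := sum_supp_le_spos c b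
    linarith
  · have hsV : shiftV a ∈ ppVertices m (n+1) := shift_mem haV
    have h1 : dot c (shiftV a) ≤ dot c b := (mem_Amax.1 hb).2 _ (mem_TV.2 hsV)
    have h2 := dot_shift c a
    have h3 : ∑ i ∈ Finset.univ.filter (fun i => a i ≠ (0:ℝ)), c i = spos c :=
      sum_supp_eq_spos (fun i hci => Amax_neg_zero ha hci)
        (fun i hci => Amax_pos_ne_zero hmn ha hci)
    linarith

lemma shift_mem_Amax {n : ℕ} (hmn : m ≤ n) {c a : Fin m → ℝ}
    (ha : a ∈ Amax c (TV m n)) : shiftV a ∈ Amax c (TV m (n+1)) := by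
  obtain ⟨b, hb⟩ := Amax_nonempty c (TV_nonempty m (n+1))
  have haV := mem_TV.1 (mem_Amax.1 ha).1
  refine mem_Amax.2 ⟨mem_TV.2 (shift_mem haV), fun y hy => ?_⟩
  have h1 := (mem_Amax.1 hb).2 y hy
  have h2 := dot_shift c a
  have h3 : ∑ i ∈ Finset.univ.filter (fun i => a i ≠ (0:ℝ)), c i = spos c :=
    sum_supp_eq_spos (fun i hci => Amax_neg_zero ha hci)
      (fun i hci => Amax_pos_ne_zero hmn ha hci)
  have h4 := Amax_level_succ hmn ha hb
  linarith

lemma unshift_of_shift_mem_Amax {n : ℕ} (hmn : m ≤ n) {c a : Fin m → ℝ}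
    (haT : a ∈ TV m n) (hs : shiftV a ∈ Amax c (TV m (n+1))) : a ∈ Amax c (TV m n) := by
  obtain ⟨a', ha'⟩ := Amax_nonempty c (TV_nonempty m n)
  refine mem_Amax.2 ⟨haT, fun y hy => ?_⟩
  have h1 := dot_shift c a
  have h2 : dot c (shiftV a) = dot c a' + spos c := Amax_level_succ hmn ha' hs
  have h3 := sum_supp_le_spos c a
  have h4 : dot c a ≤ dot c a' := (mem_Amax.1 ha').2 a haT
  have h5 : dot c a = dot c a' := by linarith
  rw [h5]
  exact (mem_Amax.1 ha').2 y hy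

lemma Amax_no_ones_mem_shift {n : ℕ} (hmn : m ≤ n) {c x : Fin m → ℝ}
    (hx : x ∈ Amax c (TV m (n+1))) (hones : ∀ i, x i ≠ (1:ℝ)) :
    x ∈ (Amax c (TV m n)).image shiftV := by
  have hxV := mem_TV.1 (mem_Amax.1 hx).1
  have huV : unshiftV x ∈ ppVertices m n := unshift_mem hxV
  have hsu : shiftV (unshiftV x) = x := shift_unshift hxV hones
  refine Finset.mem_image.2 ⟨unshiftV x, ?_, hsu⟩
  apply unshift_of_shift_mem_Amax hmn (mem_TV.2 huV)
  rw [hsu]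
  exact hx

lemma Amax_succ_subset_hull_shift {n : ℕ} (hmn : m ≤ n) {c : Fin m → ℝ} :
    ∀ x ∈ Amax c (TV m (n+1)),
      x ∈ convexHull ℝ (((Amax c (TV m n)).image shiftV : Finset (Fin m → ℝ)) :
        Set (Fin m → ℝ)) := by
  classical
  suffices H : ∀ (K : ℕ) (x : Fin m → ℝ), x ∈ Amax c (TV m (n+1)) →
      (Finset.univ.filter (fun i => x i = (1:ℝ))).card ≤ K →
      x ∈ convexHull ℝ (((Amax c (TV m n)).image shiftV : Finset (Fin m → ℝ)) :
        Set (Fin m → ℝ)) by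
    intro x hx
    exact H _ x hx le_rfl
  intro K
  induction K with
  | zero =>
    intro x hx hcard
    have hones : ∀ i, x i ≠ (1:ℝ) := by
      intro i hi
      have : i ∈ Finset.univ.filter (fun i => x i = (1:ℝ)) :=
        Finset.mem_filter.2 ⟨Finset.mem_univ i, hi⟩
      have := Finset.card_pos.2 ⟨i, this⟩
      omega
    exact subset_convexHull ℝ _ (Finset.mem_coe.2 (Amax_no_ones_mem_shift hmn hx hones))
  | succ K ih =>
    intro x hx hcard
    by_cases hone : ∃ i, x i = (1:ℝ)
    · obtain ⟨i, hi⟩ := hone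
      have hci0 : c i = 0 := by
        rcases lt_trichotomy (c i) 0 with h | h | h
        · have := Amax_neg_zero hx h
          rw [this] at hi
          norm_num at hi
        · exact h
        · exact absurd hi (Amax_pos_ne_one hmn hx h)
      have hxV := mem_TV.1 (mem_Amax.1 hx).1
      have hcard2 : (Finset.univ.filter (fun j => x j ≠ (0:ℝ))).card < n + 1 := by
        have h1 := Finset.card_filter_le Finset.univ (fun j => x j ≠ (0:ℝ))
        rw [Finset.card_univ, Fintype.card_fin] at h1
        omega
      obtain ⟨v, hv1, hvn1, hvfree⟩ := exists_unused hxV hcard2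
      have hvne1 : v ≠ 1 := by
        intro hh
        exact hvfree i (by rw [hi, hh]; norm_num)
      have hv2 : 2 ≤ v := by omega
      have hv2' : (2:ℝ) ≤ v := by exact_mod_cast hv2
      have hupdV : Function.update x i (v:ℝ) ∈ ppVertices m (n+1) :=
        update_mem_V hxV i v hvn1 (fun j _ => hvfree j)
      have hdownV : Function.update x i (0:ℝ) ∈ ppVertices m (n+1) :=
        update_zero_mem_V hxV i
      have hdotup : dot c (Function.update x i (v:ℝ)) = dot c x := by
        rw [dot_update, hci0]; ring
      have hdotdown : dot c (Function.update x i (0:ℝ)) = dot c x := by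
        rw [dot_update, hci0]; ring
      have hupA : Function.update x i (v:ℝ) ∈ Amax c (TV m (n+1)) :=
        mem_Amax.2 ⟨mem_TV.2 hupdV, fun y hy => by
          rw [hdotup]; exact (mem_Amax.1 hx).2 y hy⟩
      have hdownA : Function.update x i (0:ℝ) ∈ Amax c (TV m (n+1)) :=
        mem_Amax.2 ⟨mem_TV.2 hdownV, fun y hy => by
          rw [hdotdown]; exact (mem_Amax.1 hx).2 y hy⟩
      have himem : i ∈ Finset.univ.filter (fun j => x j = (1:ℝ)) :=
        Finset.mem_filter.2 ⟨Finset.mem_univ i, hi⟩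
      have hup_count : (Finset.univ.filter
          (fun j => Function.update x i (v:ℝ) j = (1:ℝ))).card ≤ K := by
        have hsub : Finset.univ.filter (fun j => Function.update x i (v:ℝ) j = (1:ℝ))
            ⊆ (Finset.univ.filter (fun j => x j = (1:ℝ))).erase i := by
          intro j hj
          rw [Finset.mem_filter] at hj
          by_cases hji : j = i
          · exfalso
            subst hji
            rw [Function.update_self] at hj
            have : (v:ℝ) ≠ 1 := by
              intro hh
              have : v = 1 := by exact_mod_cast hh
              omega
            exact this hj.2
          · rw [Function.update_of_ne hji] at hj
            exact Finset.mem_erase.2 ⟨hji, Finset.mem_filter.2 ⟨Finset.mem_univ j, hj.2⟩⟩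
        have h1 := Finset.card_le_card hsub
        rw [Finset.card_erase_of_mem himem] at h1
        omega
      have hdown_count : (Finset.univ.filter
          (fun j => Function.update x i (0:ℝ) j = (1:ℝ))).card ≤ K := by
        have hsub : Finset.univ.filter (fun j => Function.update x i (0:ℝ) j = (1:ℝ))
            ⊆ (Finset.univ.filter (fun j => x j = (1:ℝ))).erase i := by
          intro j hj
          rw [Finset.mem_filter] at hj
          by_cases hji : j = i
          · exfalso
            subst hji
            rw [Function.update_self] at hj
            norm_num at hj
          · rw [Function.update_of_ne hji] at hj
            exact Finset.mem_erase.2 ⟨hji, Finset.mem_filter.2 ⟨Finset.mem_univ j, hj.2⟩⟩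
        have h1 := Finset.card_le_card hsub
        rw [Finset.card_erase_of_mem himem] at h1
        omega
      have h1 := ih _ hupA hup_count
      have h2 := ih _ hdownA hdown_count
      have hv0 : (0:ℝ) < v := by linarith
      have hinvle : ((v:ℝ))⁻¹ ≤ 1 := by
        rw [inv_le_one_iff₀]
        right
        linarith
      have hcomb : x = ((v:ℝ))⁻¹ • Function.update x i (v:ℝ)
          + (1 - ((v:ℝ))⁻¹) • Function.update x i (0:ℝ) := by
        funext j
        by_cases hj : j = i
        · subst hj
          simp only [Pi.add_apply, Pi.smul_apply, Function.update_self, smul_eq_mul, hi]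
          field_simp
          ring
        · simp only [Pi.add_apply, Pi.smul_apply, Function.update_of_ne hj, smul_eq_mul]
          ring
      rw [hcomb]
      exact (convex_convexHull ℝ _) h1 h2 (by positivity) (by linarith) (by ring)
    · push_neg at hone
      exact subset_convexHull ℝ _ (Finset.mem_coe.2 (Amax_no_ones_mem_shift hmn hx hone))

/-! ### Transfer of inclusions between levels -/

lemma transfer_up {n : ℕ} (hmn : m ≤ n) {c c' : Fin m → ℝ}
    (h : Amax c (TV m n) ⊆ Amax c' (TV m n)) :
    Amax c (TV m (n+1)) ⊆ Amax c' (TV m (n+1)) := by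
  intro x hx
  have h1 := Amax_succ_subset_hull_shift hmn x hx
  have himg : (Amax c (TV m n)).image shiftV ⊆ Amax c' (TV m (n+1)) := by
    intro y hy
    obtain ⟨a, ha, rfl⟩ := Finset.mem_image.1 hy
    exact shift_mem_Amax hmn (h ha)
  obtain ⟨b', hb'⟩ := Amax_nonempty c' (TV_nonempty m (n+1))
  have hxval : dot c' x = dot c' b' := by
    have hsub2 : (((Amax c (TV m n)).image shiftV : Finset (Fin m → ℝ)) :
        Set (Fin m → ℝ)) ⊆ {y | dot c' y = dot c' b'} := by
      intro y hy
      exact dot_eq_on_Amax hb' (himg (Finset.mem_coe.1 hy))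
    exact convexHull_min hsub2 (convex_hyperplane (dot_isLinear c') _) h1
  exact mem_Amax.2 ⟨(mem_Amax.1 hx).1, fun y hy => by
    rw [hxval]; exact (mem_Amax.1 hb').2 y hy⟩

lemma transfer_down {n : ℕ} (hmn : m ≤ n) {c c' : Fin m → ℝ}
    (h : Amax c (TV m (n+1)) ⊆ Amax c' (TV m (n+1))) :
    Amax c (TV m n) ⊆ Amax c' (TV m n) := by
  intro a ha
  have h1 : shiftV a ∈ Amax c (TV m (n+1)) := shift_mem_Amax hmn ha
  exact unshift_of_shift_mem_Amax hmn (mem_Amax.1 ha).1 (h h1)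

lemma transfer {n₁ n₂ : ℕ} (h₁ : m ≤ n₁) (h₂ : m ≤ n₂) {c c' : Fin m → ℝ}
    (h : Amax c (TV m n₁) ⊆ Amax c' (TV m n₁)) :
    Amax c (TV m n₂) ⊆ Amax c' (TV m n₂) := by
  have up : ∀ (n : ℕ), m ≤ n → ∀ k : ℕ, (Amax c (TV m n) ⊆ Amax c' (TV m n)) →
      Amax c (TV m (n + k)) ⊆ Amax c' (TV m (n + k)) := by
    intro n hn k
    induction k with
    | zero => exact fun hh => hh
    | succ k ihk =>
      intro hh
      exact transfer_up (le_trans hn (Nat.le_add_right n k)) (ihk hh)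
  have down : ∀ (n : ℕ), m ≤ n → ∀ k : ℕ,
      (Amax c (TV m (n + k)) ⊆ Amax c' (TV m (n + k))) →
      Amax c (TV m n) ⊆ Amax c' (TV m n) := by
    intro n hn k
    induction k with
    | zero => exact fun hh => hh
    | succ k ihk =>
      intro hh
      exact ihk (transfer_down (le_trans hn (Nat.le_add_right n k)) hh)
  rcases le_total n₁ n₂ with hle | hle
  · obtain ⟨k, rfl⟩ := Nat.exists_eq_add_of_le hle
    exact up n₁ h₁ k h
  · obtain ⟨k, rfl⟩ := Nat.exists_eq_add_of_le hle
    exact down n₂ h₂ k h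

end

end PPaux

open PPaux in
/-- For fixed `m`, all partial permutohedra `P(m,n)` with `n ≥ m` are
combinatorially equivalent: there is an inclusion-preserving bijection (in
both directions) between their nonempty faces. -/
theorem partialPermutohedron_combinatorially_equivalent
    (m : ℕ) (hm : 0 < m) (n₁ n₂ : ℕ) (h₁ : m ≤ n₁) (h₂ : m ≤ n₂) :
    ∃ e : {F : Set (Fin m → ℝ) // F.Nonempty ∧ Convex ℝ F ∧
            IsExtreme ℝ (partialPermutohedron m n₁) F} ≃
          {F : Set (Fin m → ℝ) // F.Nonempty ∧ Convex ℝ F ∧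
            IsExtreme ℝ (partialPermutohedron m n₂) F},
      ∀ F G, F.1 ⊆ G.1 ↔ (e F).1 ⊆ (e G).1 := by
  classical
  have hpp : ∀ n : ℕ, partialPermutohedron m n
      = convexHull ℝ ((TV m n : Finset (Fin m → ℝ)) : Set (Fin m → ℝ)) := by
    intro n
    rw [TV_coe]
    rfl
  have hrep : ∀ (n : ℕ) (F : Set (Fin m → ℝ)), F.Nonempty → Convex ℝ F →
      IsExtreme ℝ (partialPermutohedron m n) F →
      ∃ c, F = convexHull ℝ ((Amax c (TV m n) : Finset (Fin m → ℝ)) : Set (Fin m → ℝ)) := by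
    intro n F hne hconv hext
    rw [hpp n] at hext
    exact face_eq_Amax (TV_nonempty m n) hne hconv hext
  have hface : ∀ (n : ℕ) (c : Fin m → ℝ),
      (convexHull ℝ ((Amax c (TV m n) : Finset (Fin m → ℝ)) : Set (Fin m → ℝ))).Nonempty ∧
      Convex ℝ (convexHull ℝ ((Amax c (TV m n) : Finset (Fin m → ℝ)) : Set (Fin m → ℝ))) ∧
      IsExtreme ℝ (partialPermutohedron m n)
        (convexHull ℝ ((Amax c (TV m n) : Finset (Fin m → ℝ)) : Set (Fin m → ℝ))) := by
    intro n c
    obtain ⟨a, ha⟩ := Amax_nonempty c (TV_nonempty m n)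
    refine ⟨⟨a, subset_convexHull ℝ _ (Finset.mem_coe.2 ha)⟩, convex_convexHull ℝ _, ?_⟩
    rw [hpp n]
    exact Amax_isExtreme c (TV_nonempty m n)
  have hsub_iff : ∀ (n : ℕ) (c c' : Fin m → ℝ),
      convexHull ℝ ((Amax c (TV m n) : Finset (Fin m → ℝ)) : Set (Fin m → ℝ)) ⊆
        convexHull ℝ ((Amax c' (TV m n) : Finset (Fin m → ℝ)) : Set (Fin m → ℝ))
      ↔ Amax c (TV m n) ⊆ Amax c' (TV m n) :=
    fun n c c' => hull_Amax_subset_iff (TV_nonempty m n) c c'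
  choose c₁of hc₁of using fun (F : {F : Set (Fin m → ℝ) // F.Nonempty ∧ Convex ℝ F ∧
      IsExtreme ℝ (partialPermutohedron m n₁) F}) =>
    hrep n₁ F.1 F.2.1 F.2.2.1 F.2.2.2
  choose c₂of hc₂of using fun (G : {F : Set (Fin m → ℝ) // F.Nonempty ∧ Convex ℝ F ∧
      IsExtreme ℝ (partialPermutohedron m n₂) F}) =>
    hrep n₂ G.1 G.2.1 G.2.2.1 G.2.2.2
  refine ⟨{
      toFun := fun F => ⟨convexHull ℝ
        ((Amax (c₁of F) (TV m n₂) : Finset (Fin m → ℝ)) : Set (Fin m → ℝ)),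
        hface n₂ (c₁of F)⟩
      invFun := fun G => ⟨convexHull ℝ
        ((Amax (c₂of G) (TV m n₁) : Finset (Fin m → ℝ)) : Set (Fin m → ℝ)),
        hface n₁ (c₂of G)⟩
      left_inv := ?_
      right_inv := ?_ }, ?_⟩
  · intro F
    apply Subtype.ext
    set G : {F : Set (Fin m → ℝ) // F.Nonempty ∧ Convex ℝ F ∧
        IsExtreme ℝ (partialPermutohedron m n₂) F} :=
      ⟨convexHull ℝ ((Amax (c₁of F) (TV m n₂) : Finset (Fin m → ℝ)) : Set (Fin m → ℝ)),
        hface n₂ (c₁of F)⟩ with hG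
    show convexHull ℝ ((Amax (c₂of G) (TV m n₁) : Finset (Fin m → ℝ)) : Set (Fin m → ℝ)) = F.1
    have heq2 : convexHull ℝ ((Amax (c₂of G) (TV m n₂) : Finset (Fin m → ℝ)) : Set (Fin m → ℝ))
        = convexHull ℝ ((Amax (c₁of F) (TV m n₂) : Finset (Fin m → ℝ)) : Set (Fin m → ℝ)) :=
      (hc₂of G).symm
    have hs1 : Amax (c₂of G) (TV m n₂) ⊆ Amax (c₁of F) (TV m n₂) :=
      (hsub_iff n₂ _ _).1 heq2.subset
    have hs2 : Amax (c₁of F) (TV m n₂) ⊆ Amax (c₂of G) (TV m n₂) :=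
      (hsub_iff n₂ _ _).1 heq2.symm.subset
    have ht1 := transfer h₂ h₁ hs1
    have ht2 := transfer h₂ h₁ hs2
    have hAeq : Amax (c₂of G) (TV m n₁) = Amax (c₁of F) (TV m n₁) :=
      Finset.Subset.antisymm ht1 ht2
    rw [hAeq]
    exact (hc₁of F).symm
  · intro G
    apply Subtype.ext
    set F : {F : Set (Fin m → ℝ) // F.Nonempty ∧ Convex ℝ F ∧
        IsExtreme ℝ (partialPermutohedron m n₁) F} :=
      ⟨convexHull ℝ ((Amax (c₂of G) (TV m n₁) : Finset (Fin m → ℝ)) : Set (Fin m → ℝ)),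
        hface n₁ (c₂of G)⟩ with hF
    show convexHull ℝ ((Amax (c₁of F) (TV m n₂) : Finset (Fin m → ℝ)) : Set (Fin m → ℝ)) = G.1
    have heq2 : convexHull ℝ ((Amax (c₁of F) (TV m n₁) : Finset (Fin m → ℝ)) : Set (Fin m → ℝ))
        = convexHull ℝ ((Amax (c₂of G) (TV m n₁) : Finset (Fin m → ℝ)) : Set (Fin m → ℝ)) :=
      (hc₁of F).symm
    have hs1 : Amax (c₁of F) (TV m n₁) ⊆ Amax (c₂of G) (TV m n₁) :=
      (hsub_iff n₁ _ _).1 heq2.subset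
    have hs2 : Amax (c₂of G) (TV m n₁) ⊆ Amax (c₁of F) (TV m n₁) :=
      (hsub_iff n₁ _ _).1 heq2.symm.subset
    have ht1 := transfer h₁ h₂ hs1
    have ht2 := transfer h₁ h₂ hs2
    have hAeq : Amax (c₁of F) (TV m n₂) = Amax (c₂of G) (TV m n₂) :=
      Finset.Subset.antisymm ht1 ht2
    rw [hAeq]
    exact (hc₂of G).symm
  · intro F G
    show F.1 ⊆ G.1 ↔
      convexHull ℝ ((Amax (c₁of F) (TV m n₂) : Finset (Fin m → ℝ)) : Set (Fin m → ℝ)) ⊆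
      convexHull ℝ ((Amax (c₁of G) (TV m n₂) : Finset (Fin m → ℝ)) : Set (Fin m → ℝ))
    constructor
    · intro h
      have hh : convexHull ℝ ((Amax (c₁of F) (TV m n₁) : Finset (Fin m → ℝ)) :
          Set (Fin m → ℝ)) ⊆ convexHull ℝ ((Amax (c₁of G) (TV m n₁) : Finset (Fin m → ℝ)) :
          Set (Fin m → ℝ)) := by
        rw [← hc₁of F, ← hc₁of G]
        exact h
      exact (hsub_iff n₂ _ _).2 (transfer h₁ h₂ ((hsub_iff n₁ _ _).1 hh))
    · intro h
      have hh := transfer h₂ h₁ ((hsub_iff n₂ _ _).1 h)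
      rw [hc₁of F, hc₁of G]
      exact (hsub_iff n₁ _ _).2 hh
end

section
/- For every positive integer m, there exists a polynomial p with real coefficients of degree exactly m such that for every integer n ≥ max(m−1, 1), v(m,n) = p(n). -/
open MeasureTheory

/-- The normalized volume `v(m,n) = m!·vol(P(m,n))`. -/
noncomputable def nvol (m n : ℕ) : ℝ :=
  (m.factorial : ℝ) * (volume (partialPermutohedron m n)).toReal


open Set Pointwise Polynomial Filter

namespace PPAux


variable {m : ℕ}

/-- entries are bounded by `N` -/
theorem entry_le {N : ℕ} {y : Fin m → ℕ}
    (hy : ∀ k : ℕ, 1 ≤ k → k ≤ N + 1 →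
      (Finset.univ.filter fun i => k ≤ y i).card + k ≤ N + 1) (i : Fin m) : y i ≤ N := by
  by_contra h
  push_neg at h
  have h2 := hy (N + 1) (by omega) (by omega)
  have hmem : i ∈ Finset.univ.filter fun i => N + 1 ≤ y i := by
    simp [Finset.mem_filter]; omega
  have : 0 < (Finset.univ.filter fun i => N + 1 ≤ y i).card := Finset.card_pos.mpr ⟨i, hmem⟩
  omega

/-- the double update used in the exchange argument -/
def upd2 (y : Fin m → ℕ) (i j : Fin m) (c : ℕ) : Fin m → ℕ :=
  Function.update (Function.update y i (c + 1)) j (c - 1)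

theorem upd2_apply (y : Fin m → ℕ) {i j : Fin m} (hij : i ≠ j) (c : ℕ) (l : Fin m) :
    upd2 y i j c l = if l = j then c - 1 else if l = i then c + 1 else y l := by
  rcases eq_or_ne l j with rfl | hlj
  · simp [upd2]
  · rcases eq_or_ne l i with rfl | hli
    · simp [upd2, hij, hlj]
    · simp [upd2, hlj, hli]

theorem child_hyp {N : ℕ} {y : Fin m → ℕ} {i j : Fin m} (hij : i ≠ j) {c : ℕ} (hc : 1 ≤ c)
    (hyi : y i = c) (hyj : y j = c)
    (hy : ∀ k : ℕ, 1 ≤ k → k ≤ N + 1 →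
      (Finset.univ.filter fun i => k ≤ y i).card + k ≤ N + 1) :
    ∀ k : ℕ, 1 ≤ k → k ≤ N + 1 →
      (Finset.univ.filter fun l => k ≤ upd2 y i j c l).card + k ≤ N + 1 := by
  intro k hk hkN
  rcases lt_trichotomy k (c + 1) with hk1 | hk1 | hk1
  · -- k ≤ c
    have hsub : (Finset.univ.filter fun l => k ≤ upd2 y i j c l) ⊆
        (Finset.univ.filter fun l => k ≤ y l) := by
      intro l hl
      simp only [Finset.mem_filter, Finset.mem_univ, true_and] at hl ⊢
      rw [upd2_apply y hij c l] at hl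
      split_ifs at hl with h1 h2
      · subst h1; omega
      · subst h2; omega
      · exact hl
    have := hy k hk hkN
    have := Finset.card_le_card hsub
    omega
  · -- k = c + 1
    subst hk1
    have hiy : i ∉ (Finset.univ.filter fun l => c + 1 ≤ y l) := by
      simp only [Finset.mem_filter, Finset.mem_univ, true_and, not_le]
      omega
    have hjy : j ∉ insert i (Finset.univ.filter fun l => c + 1 ≤ y l) := by
      simp only [Finset.mem_insert, Finset.mem_filter, Finset.mem_univ, true_and, not_or, not_le]
      exact ⟨fun h => hij h.symm, by omega⟩
    have hsub2 : insert j (insert i (Finset.univ.filter fun l => c + 1 ≤ y l)) ⊆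
        (Finset.univ.filter fun l => c ≤ y l) := by
      intro l hl
      simp only [Finset.mem_insert, Finset.mem_filter, Finset.mem_univ, true_and] at hl ⊢
      rcases hl with rfl | rfl | h
      · omega
      · omega
      · omega
    have hcard2 := Finset.card_le_card hsub2
    rw [Finset.card_insert_of_notMem hjy, Finset.card_insert_of_notMem hiy] at hcard2
    have hsub3 : (Finset.univ.filter fun l => c + 1 ≤ upd2 y i j c l) ⊆
        insert i (Finset.univ.filter fun l => c + 1 ≤ y l) := by
      intro l hl
      simp only [Finset.mem_filter, Finset.mem_univ, true_and] at hl
      rw [upd2_apply y hij c l] at hl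
      simp only [Finset.mem_insert, Finset.mem_filter, Finset.mem_univ, true_and]
      split_ifs at hl with h1 h2
      · exact absurd hl (by omega)
      · exact Or.inl h2
      · exact Or.inr hl
    have hcard3 := Finset.card_le_card hsub3
    have hcard4 := Finset.card_insert_le i (Finset.univ.filter fun l => c + 1 ≤ y l)
    have hC := hy c hc (by omega)
    omega
  · -- k ≥ c + 2
    have hsub : (Finset.univ.filter fun l => k ≤ upd2 y i j c l) ⊆
        (Finset.univ.filter fun l => k ≤ y l) := by
      intro l hl
      simp only [Finset.mem_filter, Finset.mem_univ, true_and] at hl ⊢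
      rw [upd2_apply y hij c l] at hl
      split_ifs at hl with h1 h2
      · subst h1; omega
      · subst h2; omega
      · exact hl
    have := hy k hk hkN
    have := Finset.card_le_card hsub
    omega

theorem sum_sq_upd2 {y : Fin m → ℕ} {i j : Fin m} (hij : i ≠ j) {c : ℕ} (hc : 1 ≤ c)
    (hyi : y i = c) (hyj : y j = c) :
    (∑ l, upd2 y i j c l * upd2 y i j c l) = (∑ l, y l * y l) + 2 := by
  have hjmem : j ∈ (Finset.univ : Finset (Fin m)) := Finset.mem_univ j
  have himem : i ∈ (Finset.univ : Finset (Fin m)) \ {j} := by simp [hij]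
  have h1 : (∑ l, upd2 y i j c l * upd2 y i j c l) =
      (c - 1) * (c - 1) + ∑ l ∈ Finset.univ \ {j}, (Function.update y i (c+1) l) *
        (Function.update y i (c+1) l) := by
    rw [show (fun l => upd2 y i j c l * upd2 y i j c l) =
      (fun l => (Function.update (fun l' => Function.update y i (c+1) l' *
        Function.update y i (c+1) l') j ((c-1)*(c-1))) l) from ?_]
    · exact Finset.sum_update_of_mem hjmem _ _
    · funext l
      rcases eq_or_ne l j with rfl | hlj
      · simp [upd2]
      · simp [upd2, Function.update_apply, hlj]
  have h2 : (∑ l ∈ Finset.univ \ {j}, (Function.update y i (c+1) l) *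
      (Function.update y i (c+1) l)) = (c+1)*(c+1) + ∑ l ∈ (Finset.univ \ {j}) \ {i}, y l * y l := by
    rw [show (fun l => Function.update y i (c+1) l * Function.update y i (c+1) l) =
      (fun l => (Function.update (fun l' => y l' * y l') i ((c+1)*(c+1))) l) from ?_]
    · exact Finset.sum_update_of_mem himem _ _
    · funext l
      rcases eq_or_ne l i with rfl | hli
      · simp
      · simp [Function.update_apply, hli]
  have h3 : (∑ l, y l * y l) = y j * y j + ∑ l ∈ Finset.univ \ {j}, y l * y l :=
    (Finset.add_sum_erase _ _ hjmem).symm.trans (by rw [Finset.erase_eq])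
  have h4 : (∑ l ∈ Finset.univ \ {j}, y l * y l) =
      y i * y i + ∑ l ∈ (Finset.univ \ {j}) \ {i}, y l * y l :=
    (Finset.add_sum_erase _ _ himem).symm.trans (by rw [Finset.erase_eq])
  rw [h1, h2, h3, h4, hyi, hyj]
  obtain ⟨c', rfl⟩ : ∃ c', c = c' + 1 := ⟨c - 1, by omega⟩
  simp only [Nat.add_sub_cancel]
  ring

theorem aux_mem (N : ℕ) : ∀ (d : ℕ) (y : Fin m → ℕ),
    (∀ k : ℕ, 1 ≤ k → k ≤ N + 1 →
      (Finset.univ.filter fun i => k ≤ y i).card + k ≤ N + 1) →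
    m * (N * N) ≤ (∑ l, y l * y l) + d →
    (fun i => (y i : ℝ)) ∈ convexHull ℝ (ppVertices m N) := by
  intro d
  induction d using Nat.strong_induction_on with
  | _ d IH =>
    intro y hy hd
    by_cases hcol : ∃ i j, i ≠ j ∧ 1 ≤ y i ∧ y i = y j
    · obtain ⟨i, j, hij, hc, hcij⟩ := hcol
      set c := y i with hc'
      have hyi : y i = c := rfl
      have hyj : y j = c := hcij.symm
      -- the two children
      have hhyp1 := child_hyp hij hc hyi hyj hy
      have hhyp2 := child_hyp hij.symm hc hyj hyi hy
      have hsum1 := sum_sq_upd2 hij hc hyi hyj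
      have hsum2 := sum_sq_upd2 hij.symm hc hyj hyi
      -- children entries bounded, so sums bounded
      have hb1 : (∑ l, upd2 y i j c l * upd2 y i j c l) ≤ m * (N * N) := by
        calc (∑ l, upd2 y i j c l * upd2 y i j c l) ≤ ∑ _l : Fin m, N * N :=
              Finset.sum_le_sum fun l _ =>
                Nat.mul_le_mul (entry_le hhyp1 l) (entry_le hhyp1 l)
          _ = m * (N * N) := by simp [Finset.sum_const, mul_comm]
      have hd2 : 2 ≤ d := by omega
      have h1 := IH (d - 2) (by omega) (upd2 y i j c) hhyp1 (by omega)
      have h2 := IH (d - 2) (by omega) (upd2 y j i c) hhyp2 (by omega)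
      have hmid : (fun l => (y l : ℝ)) =
          (1/2 : ℝ) • (fun l => ((upd2 y i j c l : ℕ) : ℝ)) +
          (1/2 : ℝ) • (fun l => ((upd2 y j i c l : ℕ) : ℝ)) := by
        funext l
        simp only [Pi.add_apply, Pi.smul_apply, smul_eq_mul]
        rw [upd2_apply y hij c l, upd2_apply y hij.symm c l]
        have hcast : ((c - 1 : ℕ) : ℝ) = (c : ℝ) - 1 := by
          have := Nat.cast_sub hc (R := ℝ); simpa using this
        rcases eq_or_ne l j with rfl | hlj
        · rw [if_pos rfl, if_neg hij.symm, if_pos rfl, hyj, hcast]; push_cast; ring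
        · rcases eq_or_ne l i with rfl | hli
          · rw [if_neg hij, if_pos rfl, if_pos rfl, hyi, hcast]; push_cast; ring
          · rw [if_neg hlj, if_neg hli, if_neg hli, if_neg hlj]; ring
      rw [hmid]
      exact (convex_convexHull ℝ (ppVertices m N)) h1 h2 (by norm_num) (by norm_num) (by norm_num)
    · push_neg at hcol
      apply subset_convexHull
      refine ⟨fun i => ⟨y i, entry_le hy i, rfl⟩, fun i j hij h0i h0j heq => ?_⟩
      have hyij : y i = y j := Nat.cast_injective heq
      have h1 : 1 ≤ y i := by
        by_contra h
        push_neg at h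
        exact h0i (by simp [show y i = 0 by omega])
      exact (hcol i j hij h1) hyij

theorem lemC (N : ℕ) (y : Fin m → ℕ)
    (hy : ∀ k : ℕ, 1 ≤ k → k ≤ N + 1 →
      (Finset.univ.filter fun i => k ≤ y i).card + k ≤ N + 1) :
    (fun i => (y i : ℝ)) ∈ convexHull ℝ (ppVertices m N) :=
  aux_mem N (m * (N * N)) y hy (Nat.le_add_left _ _)



/-! ### boxes -/

def cube (m : ℕ) (t : ℝ) : Set (Fin m → ℝ) := Set.pi Set.univ fun _ => Set.Icc 0 t

theorem cube_convex (m : ℕ) (t : ℝ) : Convex ℝ (cube m t) :=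
  convex_pi fun _ _ => convex_Icc 0 t

theorem cube_compact (m : ℕ) (t : ℝ) : IsCompact (cube m t) :=
  isCompact_univ_pi fun _ => isCompact_Icc

theorem Icc_add_Icc0 {c d t : ℝ} (hcd : c ≤ d) (ht : 0 ≤ t) :
    Set.Icc c d + Set.Icc 0 t = Set.Icc c (d + t) := by
  ext x
  constructor
  · rintro ⟨u, hu, v, hv, rfl⟩
    exact ⟨le_add_of_le_of_nonneg hu.1 hv.1, add_le_add hu.2 hv.2⟩
  · intro hx
    refine ⟨min x d, ⟨le_min hx.1 hcd, min_le_right _ _⟩, x - min x d,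
      ⟨by simp [sub_nonneg, min_le_left], ?_⟩, by ring⟩
    rcases le_total x d with h | h
    · simpa [min_eq_left h] using ht
    · rw [min_eq_right h]
      linarith [hx.2]

theorem univ_pi_add_univ_pi {ι : Type*} {A B : ι → Set ℝ} :
    Set.pi Set.univ A + Set.pi Set.univ B = Set.pi Set.univ fun i => A i + B i := by
  ext x
  constructor
  · rintro ⟨u, hu, v, hv, rfl⟩ i _
    exact ⟨u i, hu i trivial, v i, hv i trivial, rfl⟩
  · intro hx
    have h := fun i => hx i trivial
    choose u hu v hv hx using h
    exact ⟨u, fun i _ => hu i, v, fun i _ => hv i, by funext i; exact (hx i)⟩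

theorem cube_add_cube (m : ℕ) {a b : ℝ} (ha : 0 ≤ a) (hb : 0 ≤ b) :
    cube m a + cube m b = cube m (a + b) := by
  unfold cube
  rw [univ_pi_add_univ_pi]
  exact Set.pi_congr rfl fun i _ => Icc_add_Icc0 ha hb

theorem cube_zero (m : ℕ) : cube m 0 = {(0 : Fin m → ℝ)} := by
  ext x
  simp only [cube, Set.mem_pi, Set.mem_univ, true_implies, Set.Icc_self, Set.mem_singleton_iff]
  constructor
  · intro h; funext i; exact h i
  · intro h i; rw [h]; rfl

/-! ### the unit cube is the hull of its vertices -/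

theorem cube_subset_hull (m : ℕ) :
    cube m 1 ⊆ convexHull ℝ {x : Fin m → ℝ | ∀ i, x i = 0 ∨ x i = 1} := by
  suffices h : ∀ (d : ℕ) (x : Fin m → ℝ), (∀ i, x i ∈ Set.Icc (0:ℝ) 1) →
      (Finset.univ.filter fun i => x i ≠ 0 ∧ x i ≠ 1).card ≤ d →
      x ∈ convexHull ℝ {x : Fin m → ℝ | ∀ i, x i = 0 ∨ x i = 1} by
    intro x hx
    exact h _ x (fun i => hx i trivial) le_rfl
  intro d
  induction d with
  | zero =>
    intro x hx hcard
    apply subset_convexHull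
    intro i
    by_contra hcon
    push_neg at hcon
    have : i ∈ Finset.univ.filter fun i => x i ≠ 0 ∧ x i ≠ 1 := by
      simp [hcon.1, hcon.2]
    have := Finset.card_pos.mpr ⟨i, this⟩
    omega
  | succ d IH =>
    intro x hx hcard
    by_cases hfrac : ∃ i, x i ≠ 0 ∧ x i ≠ 1
    · obtain ⟨i, hi0, hi1⟩ := hfrac
      have himem : i ∈ Finset.univ.filter fun i => x i ≠ 0 ∧ x i ≠ 1 := by simp [hi0, hi1]
      have hsub : ∀ c : ℝ, (c = 0 ∨ c = 1) →
          (Finset.univ.filter fun l => Function.update x i c l ≠ 0 ∧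
            Function.update x i c l ≠ 1).card ≤ d := by
        intro c hc
        have hss : (Finset.univ.filter fun l => Function.update x i c l ≠ 0 ∧
            Function.update x i c l ≠ 1) ⊆
            (Finset.univ.filter fun l => x l ≠ 0 ∧ x l ≠ 1).erase i := by
          intro l hl
          simp only [Finset.mem_filter, Finset.mem_univ, true_and] at hl
          rcases eq_or_ne l i with rfl | hli
          · rw [Function.update_self] at hl
            rcases hc with rfl | rfl
            · exact absurd rfl hl.1
            · exact absurd rfl hl.2
          · rw [Function.update_of_ne hli] at hl
            exact Finset.mem_erase.mpr ⟨hli, by simp [hl.1, hl.2]⟩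
        have := Finset.card_le_card hss
        have := Finset.card_erase_of_mem himem
        omega
      have hupd : ∀ c : ℝ, c ∈ Set.Icc (0:ℝ) 1 → ∀ l, Function.update x i c l ∈ Set.Icc (0:ℝ) 1 := by
        intro c hc l
        rcases eq_or_ne l i with rfl | hli
        · rwa [Function.update_self]
        · rw [Function.update_of_ne hli]; exact hx l
      have h0 := IH (Function.update x i 0) (hupd 0 (by norm_num)) (hsub 0 (Or.inl rfl))
      have h1 := IH (Function.update x i 1) (hupd 1 (by norm_num)) (hsub 1 (Or.inr rfl))
      have hxi := hx i
      have hmid : x = (1 - x i) • Function.update x i 0 + (x i) • Function.update x i 1 := by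
        funext l
        simp only [Pi.add_apply, Pi.smul_apply, smul_eq_mul]
        rcases eq_or_ne l i with rfl | hli
        · rw [Function.update_self, Function.update_self]; ring
        · rw [Function.update_of_ne hli, Function.update_of_ne hli]; ring
      rw [hmid]
      exact (convex_convexHull ℝ _) h0 h1 (by linarith [hxi.2]) hxi.1 (by ring)
    · push_neg at hfrac
      apply subset_convexHull
      intro i
      by_cases h : x i = 0
      · exact Or.inl h
      · exact Or.inr (hfrac i h)

/-! ### basic facts about ppVertices -/

theorem ppVertices_subset_cube (m n : ℕ) : ppVertices m n ⊆ cube m n := by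
  rintro x ⟨h1, _⟩ i _
  obtain ⟨k, hk, hxk⟩ := h1 i
  rw [hxk]
  exact ⟨by positivity, by exact_mod_cast hk⟩

theorem ppVertices_finite (m n : ℕ) : (ppVertices m n).Finite := by
  apply Set.Finite.subset (Set.Finite.pi fun i : Fin m =>
    (Set.finite_Iic n).image (fun k : ℕ => (k : ℝ)))
  rintro x ⟨h1, _⟩
  intro i _
  obtain ⟨k, hk, hxk⟩ := h1 i
  exact ⟨k, hk, hxk.symm⟩

theorem zero_mem_ppVertices (m n : ℕ) : (0 : Fin m → ℝ) ∈ ppVertices m n := by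
  refine ⟨fun i => ⟨0, n.zero_le, by simp⟩, fun i j _ h0i _ => ?_⟩
  exact absurd (Pi.zero_apply i) h0i

/-! ### the recursion for the hulls -/

theorem hull_succ (m n : ℕ) (hmn : m ≤ n + 1) :
    convexHull ℝ (ppVertices m (n + 1)) = convexHull ℝ (ppVertices m n) + cube m 1 := by
  apply le_antisymm
  · -- ⊆
    apply convexHull_min ?_ (Convex.add (convex_convexHull ℝ _) (cube_convex m 1))
    rintro w ⟨h1, h2⟩
    choose kk hk hwk using h1
    refine ⟨fun i => ((kk i - (if kk i = 0 then 0 else 1) : ℕ) : ℝ),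
      subset_convexHull ℝ _ ?_, fun i => if kk i = 0 then (0:ℝ) else 1, ?_, ?_⟩
    · refine ⟨fun i => ⟨kk i - (if kk i = 0 then 0 else 1), by have := hk i; split <;> omega, rfl⟩,
        fun i j hij h0i h0j heq => ?_⟩
      have hki : 2 ≤ kk i := by
        by_contra h
        push_neg at h
        apply h0i
        have h0 : kk i = 0 ∨ kk i = 1 := by omega
        rcases h0 with h0 | h0 <;> simp [h0]
      have hkj : 2 ≤ kk j := by
        by_contra h
        push_neg at h
        apply h0j
        have h0 : kk j = 0 ∨ kk j = 1 := by omega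
        rcases h0 with h0 | h0 <;> simp [h0]
      have hkk : kk i = kk j := by
        have hcst : ((kk i - 1 : ℕ) : ℝ) = ((kk j - 1 : ℕ) : ℝ) := by
          simpa [if_neg (by omega : ¬ kk i = 0), if_neg (by omega : ¬ kk j = 0)] using heq
        have := Nat.cast_injective (R := ℝ) hcst
        omega
      exact h2 i j hij (by rw [hwk i]; exact Nat.cast_ne_zero.mpr (by omega))
        (by rw [hwk j]; exact Nat.cast_ne_zero.mpr (by omega))
        (by rw [hwk i, hwk j, hkk])
    · intro i _
      by_cases h : kk i = 0 <;> simp [h, Set.mem_Icc] <;> norm_num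
    · funext i
      simp only [Pi.add_apply]
      rw [hwk i]
      by_cases h : kk i = 0
      · simp [h]
      · rw [if_neg h, if_neg h, Nat.cast_sub (by omega)]
        ring
  · -- ⊇
    have hcube : cube m 1 = convexHull ℝ {x : Fin m → ℝ | ∀ i, x i = 0 ∨ x i = 1} := by
      apply le_antisymm (cube_subset_hull m)
      apply convexHull_min ?_ (cube_convex m 1)
      intro x hx i _
      rcases hx i with h | h <;> rw [h]
      · exact ⟨le_rfl, by norm_num⟩
      · exact ⟨by norm_num, le_rfl⟩
    rw [hcube, ← convexHull_add]
    apply convexHull_min ?_ (convex_convexHull ℝ _)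
    rintro z ⟨v, hv, ε, hε, rfl⟩
    obtain ⟨h1, h2⟩ := hv
    choose kk hk hwk using h1
    set eN : Fin m → ℕ := fun i => if ε i = 0 then 0 else 1 with heN
    have heN1 : ∀ i, eN i ≤ 1 := by
      intro i
      simp only [heN]
      split <;> omega
    have hεn : ∀ i, ε i = (eN i : ℝ) := by
      intro i
      rcases hε i with h | h <;> simp [heN, h]
    have hz : v + ε = fun i => ((kk i + eN i : ℕ) : ℝ) := by
      funext i
      simp only [Pi.add_apply]
      rw [hwk i, hεn i]
      push_cast
      ring
    show v + ε ∈ _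
    rw [hz]
    apply lemC (n + 1)
    intro k hk1 hkN
    rcases Nat.lt_or_ge k 2 with hk2 | hk2
    · -- k = 1
      have hkeq : k = 1 := by omega
      have := Finset.card_filter_le (Finset.univ : Finset (Fin m))
        (fun i => k ≤ kk i + eN i)
      simp only [Finset.card_univ, Fintype.card_fin] at this
      omega
    · -- k ≥ 2
      have hcard : (Finset.univ.filter fun i => k ≤ kk i + eN i).card
          ≤ (Finset.Icc (k - 1) n).card := by
        apply Finset.card_le_card_of_injOn (fun i => kk i)
        · intro i hi
          simp only [Finset.coe_filter, Set.mem_setOf_eq, Finset.mem_univ, true_and] at hi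
          have := heN1 i
          exact Finset.mem_Icc.mpr ⟨by dsimp only; omega, hk i⟩
        · intro i hi j hj hij'
          simp only [Finset.coe_filter, Set.mem_setOf_eq, Finset.mem_univ, true_and] at hi hj
          by_contra hne
          have h1i : 1 ≤ kk i := by
            have := heN1 i
            omega
          have h1j : 1 ≤ kk j := by
            have := heN1 j
            omega
          exact h2 i j hne (by rw [hwk i]; exact Nat.cast_ne_zero.mpr (by omega))
            (by rw [hwk j]; exact Nat.cast_ne_zero.mpr (by omega))
            (by rw [hwk i, hwk j]; exact_mod_cast hij')
      rw [Nat.card_Icc] at hcard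
      omega

theorem hull_iter (m n0 : ℕ) (hm : m ≤ n0 + 1) : ∀ n, n0 ≤ n →
    convexHull ℝ (ppVertices m n) =
      convexHull ℝ (ppVertices m n0) + cube m ((n - n0 : ℕ) : ℝ) := by
  intro n hn
  induction n, hn using Nat.le_induction with
  | base =>
    simp only [Nat.sub_self, Nat.cast_zero, cube_zero]
    rw [Set.add_singleton]
    simp
  | succ n hn IH =>
    have hstep := hull_succ m n (by omega)
    rw [hstep, IH, add_assoc, cube_add_cube m (by positivity) (by norm_num)]
    have : (n + 1) - n0 = (n - n0) + 1 := by omega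
    rw [this]
    push_cast
    ring_nf



/-! ### boxes indexed by subsets of coordinates -/

def boxSet (m : ℕ) (L : Finset (Fin m)) (t : ℝ) : Set (Fin m → ℝ) :=
  Set.pi Set.univ fun i => if i ∈ L then Set.Icc 0 t else {0}

theorem boxSet_convex (m : ℕ) (L : Finset (Fin m)) (t : ℝ) : Convex ℝ (boxSet m L t) :=
  convex_pi fun i _ => by
    by_cases h : i ∈ L
    · rw [if_pos h]; exact convex_Icc 0 t
    · rw [if_neg h]; exact convex_singleton 0

theorem boxSet_compact (m : ℕ) (L : Finset (Fin m)) (t : ℝ) : IsCompact (boxSet m L t) :=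
  isCompact_univ_pi fun i => by
    by_cases h : i ∈ L
    · rw [if_pos h]; exact isCompact_Icc
    · rw [if_neg h]; exact isCompact_singleton

theorem boxSet_nonempty (m : ℕ) (L : Finset (Fin m)) {t : ℝ} (ht : 0 ≤ t) :
    (boxSet m L t).Nonempty := by
  refine ⟨0, fun i _ => ?_⟩
  show (0 : ℝ) ∈ (if i ∈ L then Set.Icc (0:ℝ) t else {0})
  by_cases h : i ∈ L
  · rw [if_pos h]; exact ⟨le_rfl, ht⟩
  · rw [if_neg h]; rfl

theorem boxSet_empty (m : ℕ) (t : ℝ) : boxSet m (∅ : Finset (Fin m)) t = {0} := by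
  ext x
  simp only [boxSet, Finset.notMem_empty, if_false, Set.mem_pi, Set.mem_univ, true_implies,
    Set.mem_singleton_iff]
  constructor
  · intro h; funext i; exact h i
  · intro h i; rw [h]; rfl

theorem add_singleton_zero {E : Type*} [AddGroup E] (S : Set E) : S + ({0} : Set E) = S := by
  simp [Set.add_singleton]

/-- generic: images under an additive map distribute over Minkowski sums. -/
theorem image_add' {α β : Type*} [Add α] [Add β] (f : α → β)
    (hf : ∀ a b, f (a + b) = f a + f b) (X Y : Set α) : f '' (X + Y) = f '' X + f '' Y := by
  ext p
  constructor
  · rintro ⟨z, ⟨u, hu, v, hv, rfl⟩, rfl⟩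
    exact ⟨f u, ⟨u, hu, rfl⟩, f v, ⟨v, hv, rfl⟩, (hf u v).symm⟩
  · rintro ⟨_, ⟨u, hu, rfl⟩, _, ⟨v, hv, rfl⟩, rfl⟩
    exact ⟨u + v, ⟨u, hu, v, hv, rfl⟩, hf u v⟩

theorem univ_pi_add_univ_pi' {ι : Type*} {A B : ι → Set ℝ} :
    Set.pi Set.univ A + Set.pi Set.univ B = Set.pi Set.univ fun i => A i + B i := by
  ext x
  constructor
  · rintro ⟨u, hu, v, hv, rfl⟩ i _
    exact ⟨u i, hu i trivial, v i, hv i trivial, rfl⟩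
  · intro hx
    have h := fun i => hx i trivial
    choose u hu v hv hx using h
    exact ⟨u, fun i _ => hu i, v, fun i _ => hv i, by funext i; exact (hx i)⟩

theorem boxSet_decomp {m : ℕ} {L : Finset (Fin m)} {i : Fin m} (hi : i ∈ L) (t : ℝ) :
    boxSet m L t = boxSet m (L.erase i) t + boxSet m {i} t := by
  rw [boxSet, boxSet, boxSet, univ_pi_add_univ_pi']
  apply Set.pi_congr rfl
  intro j _
  rcases eq_or_ne j i with rfl | hj
  · rw [if_pos hi, if_neg (Finset.notMem_erase j L), if_pos (Finset.mem_singleton_self j)]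
    simp [Set.singleton_add]
  · rw [if_neg (by simp [hj] : ¬ j ∈ ({i} : Finset (Fin m)))]
    by_cases hjL : j ∈ L
    · rw [if_pos hjL, if_pos (Finset.mem_erase.mpr ⟨hj, hjL⟩)]
      simp [Set.add_singleton]
    · rw [if_neg hjL, if_neg (fun h => hjL (Finset.mem_of_mem_erase h))]
      simp [Set.add_singleton]

theorem Icc_add_Icc0' {c d t : ℝ} (hcd : c ≤ d) (ht : 0 ≤ t) :
    Set.Icc c d + Set.Icc 0 t = Set.Icc c (d + t) := by
  ext x
  constructor
  · rintro ⟨u, hu, v, hv, rfl⟩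
    exact ⟨le_add_of_le_of_nonneg hu.1 hv.1, add_le_add hu.2 hv.2⟩
  · intro hx
    refine ⟨min x d, ⟨le_min hx.1 hcd, min_le_right _ _⟩, x - min x d,
      ⟨by simp [sub_nonneg, min_le_left], ?_⟩, by ring⟩
    rcases le_total x d with h | h
    · simpa [min_eq_left h] using ht
    · rw [min_eq_right h]
      linarith [hx.2]

/-! ### the key slicing lemma, in a product space -/

theorem add_seg_volume {k : ℕ} {A : Set (ℝ × (Fin k → ℝ))} (hA : IsCompact A) (hc : Convex ℝ A)
    {t : ℝ} (ht : 0 ≤ t) :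
    volume (A + Set.Icc (0:ℝ) t ×ˢ ({0} : Set (Fin k → ℝ))) =
      volume A + ENNReal.ofReal t * volume (Prod.snd '' A) := by
  set S : Set (ℝ × (Fin k → ℝ)) := Set.Icc (0:ℝ) t ×ˢ ({0} : Set (Fin k → ℝ)) with hSdef
  have hS : IsCompact S := isCompact_Icc.prod isCompact_singleton
  have hAS : IsCompact (A + S) := hA.add hS
  have hmA : MeasurableSet A := hA.isClosed.measurableSet
  have hmAS : MeasurableSet (A + S) := hAS.isClosed.measurableSet
  have hsndc : IsCompact (Prod.snd '' A) := hA.image continuous_snd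
  have hmsnd : MeasurableSet (Prod.snd '' A) := hsndc.isClosed.measurableSet
  -- slices of the sum
  have hslice : ∀ y : Fin k → ℝ, ((fun x => (x, y)) ⁻¹' (A + S)) =
      ((fun x => (x, y)) ⁻¹' A) + Set.Icc 0 t := by
    intro y
    ext x
    constructor
    · rintro ⟨⟨a1, a2⟩, ha, ⟨s1, s2⟩, hs, hxy⟩
      rw [hSdef, Set.mem_prod] at hs
      have hs2 : s2 = 0 := hs.2
      have h1 : a1 + s1 = x := congrArg Prod.fst hxy
      have h2 : a2 + s2 = y := congrArg Prod.snd hxy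
      have ha2 : a2 = y := by rw [hs2] at h2; simpa using h2
      refine ⟨a1, ?_, s1, hs.1, h1⟩
      show ((a1 : ℝ), y) ∈ A
      rwa [← ha2]
    · rintro ⟨u, hu, s, hs, rfl⟩
      exact ⟨(u, y), hu, (s, 0), ⟨hs, rfl⟩, by simp [Prod.ext_iff]⟩
  -- pointwise volumes of slices
  have hpt : ∀ y : Fin k → ℝ, volume (((fun x => (x, y)) ⁻¹' A) + Set.Icc 0 t) =
      volume ((fun x => (x, y)) ⁻¹' A) +
        (Prod.snd '' A).indicator (fun _ => ENNReal.ofReal t) y := by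
    intro y
    by_cases hy : y ∈ Prod.snd '' A
    · have hBne : ((fun x : ℝ => (x, y)) ⁻¹' A).Nonempty := by
        obtain ⟨⟨a1, a2⟩, ha, ha2⟩ := hy
        refine ⟨a1, ?_⟩
        show ((a1 : ℝ), y) ∈ A
        rwa [← show a2 = y from ha2]
      have hBeq : ((fun x : ℝ => (x, y)) ⁻¹' A) =
          Prod.fst '' (A ∩ (Set.univ ×ˢ ({y} : Set (Fin k → ℝ)))) := by
        ext x
        constructor
        · intro hx
          exact ⟨(x, y), ⟨hx, ⟨trivial, rfl⟩⟩, rfl⟩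
        · rintro ⟨⟨p1, p2⟩, ⟨hp, ⟨_, hp2⟩⟩, rfl⟩
          have hpy : p2 = y := hp2
          show ((p1 : ℝ), y) ∈ A
          rwa [← hpy]
      have hBcomp : IsCompact ((fun x : ℝ => (x, y)) ⁻¹' A) := by
        rw [hBeq]
        exact (hA.inter_right (isClosed_univ.prod isClosed_singleton)).image continuous_fst
      have hBconv : Convex ℝ ((fun x : ℝ => (x, y)) ⁻¹' A) := by
        intro x1 h1 x2 h2 a b ha hb hab
        show ((a • x1 + b • x2 : ℝ), y) ∈ A
        have : ((a • x1 + b • x2 : ℝ), y) = a • ((x1 : ℝ), y) + b • ((x2 : ℝ), y) := by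
          rw [Prod.smul_mk, Prod.smul_mk, Prod.mk_add_mk, Convex.combo_self hab]
        rw [this]
        exact hc h1 h2 ha hb hab
      have hBIcc := eq_Icc_of_connected_compact ⟨hBne, hBconv.isPreconnected⟩ hBcomp
      have hinfsup : sInf ((fun x : ℝ => (x, y)) ⁻¹' A) ≤ sSup ((fun x : ℝ => (x, y)) ⁻¹' A) :=
        csInf_le_csSup hBne hBcomp.bddBelow hBcomp.bddAbove
      rw [Set.indicator_of_mem hy]
      rw [hBIcc, Icc_add_Icc0' hinfsup ht, Real.volume_Icc, Real.volume_Icc,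
        show sSup ((fun x : ℝ => (x, y)) ⁻¹' A) + t - sInf ((fun x : ℝ => (x, y)) ⁻¹' A) =
          (sSup ((fun x : ℝ => (x, y)) ⁻¹' A) - sInf ((fun x : ℝ => (x, y)) ⁻¹' A)) + t by ring]
      exact ENNReal.ofReal_add (by linarith) ht
    · have hBempty : ((fun x : ℝ => (x, y)) ⁻¹' A) = ∅ := by
        ext x
        simp only [Set.mem_preimage, Set.mem_empty_iff_false, iff_false]
        intro hx
        exact hy ⟨(x, y), hx, rfl⟩
      rw [hBempty, Set.empty_add, Set.indicator_of_notMem hy]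
      simp
  -- integrate
  have hmeas_g : Measurable fun y : Fin k → ℝ => volume ((fun x : ℝ => (x, y)) ⁻¹' A) :=
    measurable_measure_prodMk_right hmA
  rw [Measure.volume_eq_prod, Measure.prod_apply_symm hmAS, Measure.prod_apply_symm hmA]
  calc (∫⁻ y, volume ((fun x : ℝ => (x, y)) ⁻¹' (A + S)))
      = ∫⁻ y, (volume ((fun x : ℝ => (x, y)) ⁻¹' A) +
          (Prod.snd '' A).indicator (fun _ => ENNReal.ofReal t) y) := by
        congr 1
        funext y
        rw [hslice y, hpt y]
    _ = (∫⁻ y, volume ((fun x : ℝ => (x, y)) ⁻¹' A)) +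
          ∫⁻ y, (Prod.snd '' A).indicator (fun _ => ENNReal.ofReal t) y :=
        lintegral_add_left hmeas_g _
    _ = (∫⁻ y, volume ((fun x : ℝ => (x, y)) ⁻¹' A)) +
          ENNReal.ofReal t * volume (Prod.snd '' A) := by
        rw [lintegral_indicator_const hmsnd]

/-! ### splitting off one coordinate -/

def splitMap {k : ℕ} (i : Fin (k + 1)) : (Fin (k + 1) → ℝ) → ℝ × (Fin k → ℝ) :=
  fun x => (x i, fun j => x (i.succAbove j))

theorem splitMap_eq_equiv {k : ℕ} (i : Fin (k + 1)) :
    splitMap i = ⇑(MeasurableEquiv.piFinSuccAbove (fun _ : Fin (k + 1) => ℝ) i) := by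
  funext x
  rfl

theorem splitMap_leftInv {k : ℕ} (i : Fin (k + 1)) (x : Fin (k + 1) → ℝ) :
    i.insertNth (splitMap i x).1 (splitMap i x).2 = x :=
  Fin.insertNth_self_removeNth i x

theorem splitMap_injective {k : ℕ} (i : Fin (k + 1)) : Function.Injective (splitMap i) := by
  intro x y h
  rw [← splitMap_leftInv i x, ← splitMap_leftInv i y, h]

theorem splitMap_surjective {k : ℕ} (i : Fin (k + 1)) : Function.Surjective (splitMap i) := by
  rintro ⟨a, y⟩
  refine ⟨i.insertNth a y, ?_⟩
  unfold splitMap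
  rw [Fin.insertNth_apply_same]
  refine Prod.ext rfl ?_
  funext j
  exact Fin.insertNth_apply_succAbove (α := fun _ => ℝ) i a y j

theorem splitMap_add {k : ℕ} (i : Fin (k + 1)) (x y : Fin (k + 1) → ℝ) :
    splitMap i (x + y) = splitMap i x + splitMap i y := rfl

theorem splitMap_continuous {k : ℕ} (i : Fin (k + 1)) : Continuous (splitMap i) :=
  (continuous_apply i).prodMk (continuous_pi fun j => continuous_apply _)

theorem splitMap_measurePreserving {k : ℕ} (i : Fin (k + 1)) :
    MeasurePreserving (splitMap i) volume volume := by
  rw [splitMap_eq_equiv]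
  exact volume_preserving_piFinSuccAbove (fun _ : Fin (k + 1) => ℝ) i

theorem splitMap_vol_image {k : ℕ} (i : Fin (k + 1)) {X : Set (Fin (k + 1) → ℝ)}
    (hX : MeasurableSet X) (hX' : MeasurableSet (splitMap i '' X)) :
    volume (splitMap i '' X) = volume X := by
  have hmp := splitMap_measurePreserving i
  rw [← hmp.map_eq, Measure.map_apply hmp.measurable hX',
    Function.Injective.preimage_image (splitMap_injective i) X]

theorem splitMap_convex_image {k : ℕ} (i : Fin (k + 1)) {X : Set (Fin (k + 1) → ℝ)}
    (hX : Convex ℝ X) : Convex ℝ (splitMap i '' X) := by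
  rintro _ ⟨u, hu, rfl⟩ _ ⟨v, hv, rfl⟩ a b ha hb hab
  exact ⟨a • u + b • v, hX hu hv ha hb hab, rfl⟩

def projMap {k : ℕ} (i : Fin (k + 1)) : (Fin (k + 1) → ℝ) → (Fin k → ℝ) :=
  fun x => fun j => x (i.succAbove j)

theorem snd_splitMap {k : ℕ} (i : Fin (k + 1)) (X : Set (Fin (k + 1) → ℝ)) :
    Prod.snd '' (splitMap i '' X) = projMap i '' X := by
  rw [Set.image_image]
  rfl

theorem projMap_add {k : ℕ} (i : Fin (k + 1)) (x y : Fin (k + 1) → ℝ) :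
    projMap i (x + y) = projMap i x + projMap i y := rfl

theorem projMap_continuous {k : ℕ} (i : Fin (k + 1)) : Continuous (projMap i) :=
  continuous_pi fun j => continuous_apply _

theorem projMap_convex_image {k : ℕ} (i : Fin (k + 1)) {X : Set (Fin (k + 1) → ℝ)}
    (hX : Convex ℝ X) : Convex ℝ (projMap i '' X) := by
  rintro _ ⟨u, hu, rfl⟩ _ ⟨v, hv, rfl⟩ a b ha hb hab
  exact ⟨a • u + b • v, hX hu hv ha hb hab, rfl⟩

/-- the singleton box corresponds to a segment in the product picture -/
theorem splitMap_image_boxSingle {k : ℕ} (i : Fin (k + 1)) (t : ℝ) :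
    splitMap i '' boxSet (k + 1) {i} t = Set.Icc (0:ℝ) t ×ˢ ({0} : Set (Fin k → ℝ)) := by
  have hpre : boxSet (k + 1) {i} t =
      splitMap i ⁻¹' (Set.Icc (0:ℝ) t ×ˢ ({0} : Set (Fin k → ℝ))) := by
    ext x
    simp only [boxSet, Set.mem_pi, Set.mem_univ, true_implies, Set.mem_preimage,
      Set.mem_prod, Set.mem_singleton_iff, splitMap]
    constructor
    · intro h
      refine ⟨by simpa using h i, ?_⟩
      funext j
      have := h (i.succAbove j)
      rw [if_neg (by simp [Fin.succAbove_ne i j])] at this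
      exact this
    · rintro ⟨h1, h2⟩ l
      rcases eq_or_ne l i with rfl | hl
      · simpa using h1
      · rw [if_neg (by simp [hl])]
        obtain ⟨j, rfl⟩ := Fin.exists_succAbove_eq hl
        exact congrFun h2 j
  rw [hpre, Set.image_preimage_eq _ (splitMap_surjective i)]

/-- projecting a box that does not use coordinate `i` -/
theorem projMap_image_boxSet {k : ℕ} (i : Fin (k + 1)) {L' : Finset (Fin (k + 1))}
    (hi : i ∉ L') (t : ℝ) :
    projMap i '' boxSet (k + 1) L' t =
      boxSet k (Finset.univ.filter fun j => i.succAbove j ∈ L') t := by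
  ext y
  simp only [boxSet, Set.mem_image, Set.mem_pi, Set.mem_univ, true_implies]
  constructor
  · rintro ⟨x, hx, rfl⟩ j
    have hxj := hx (i.succAbove j)
    show x (i.succAbove j) ∈ _
    by_cases hj : i.succAbove j ∈ L'
    · rw [if_pos hj] at hxj
      rw [if_pos (by simp [hj])]
      exact hxj
    · rw [if_neg hj] at hxj
      rw [if_neg (by simp [hj])]
      exact hxj
  · intro hy
    refine ⟨i.insertNth 0 y, fun l => ?_, ?_⟩
    · rcases eq_or_ne l i with rfl | hl
      · rw [if_neg hi, Fin.insertNth_apply_same]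
        rfl
      · obtain ⟨j, rfl⟩ := Fin.exists_succAbove_eq hl
        have hyj := hy j
        rw [Fin.insertNth_apply_succAbove (α := fun _ => ℝ)]
        by_cases hj : i.succAbove j ∈ L'
        · rw [if_pos (by simp [hj])] at hyj
          rw [if_pos hj]
          exact hyj
        · rw [if_neg (by simp [hj])] at hyj
          rw [if_neg hj]
          exact hyj
    · funext j
      exact Fin.insertNth_apply_succAbove (α := fun _ => ℝ) i 0 y j

/-- segment-addition formula in the pi picture -/
theorem seg_volume_pi {k : ℕ} (i : Fin (k + 1)) {X : Set (Fin (k + 1) → ℝ)}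
    (hX : IsCompact X) (hcX : Convex ℝ X) {t : ℝ} (ht : 0 ≤ t) :
    volume (X + boxSet (k + 1) {i} t) =
      volume X + ENNReal.ofReal t * volume (projMap i '' X) := by
  have hbox := boxSet_compact (k + 1) ({i} : Finset (Fin (k + 1))) t
  have hXS : IsCompact (X + boxSet (k + 1) {i} t) := hX.add hbox
  have himgXS : IsCompact (splitMap i '' (X + boxSet (k + 1) {i} t)) :=
    hXS.image (splitMap_continuous i)
  have himgX : IsCompact (splitMap i '' X) := hX.image (splitMap_continuous i)
  rw [← splitMap_vol_image i hXS.isClosed.measurableSet himgXS.isClosed.measurableSet,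
    image_add' (splitMap i) (splitMap_add i) X _, splitMap_image_boxSingle i t,
    add_seg_volume himgX (splitMap_convex_image i hcX) ht,
    splitMap_vol_image i hX.isClosed.measurableSet himgX.isClosed.measurableSet,
    snd_splitMap i X]

/-! ### the main induction: volumes of `K + boxSet` are polynomial -/

theorem poly_volume : ∀ (kc m : ℕ) (L : Finset (Fin m)) (K : Set (Fin m → ℝ)),
    L.card = kc → IsCompact K → Convex ℝ K → K.Nonempty →
    ∃ q : Polynomial ℝ, q.natDegree ≤ kc ∧
      ∀ t : ℕ, (volume (K + boxSet m L (t : ℝ))).toReal = q.eval ((t : ℕ) : ℝ) := by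
  intro kc
  induction kc with
  | zero =>
    intro m L K hcard hK hcK hne
    rw [Finset.card_eq_zero] at hcard
    subst hcard
    refine ⟨Polynomial.C ((volume K).toReal), by simp, fun t => ?_⟩
    rw [boxSet_empty, add_singleton_zero]
    simp
  | succ kc IH =>
    intro m L K hcard hK hcK hne
    obtain ⟨i, hi⟩ := Finset.card_pos.mp (by omega : 0 < L.card)
    rcases m with - | k
    · exact absurd (Finset.card_le_univ L) (by simp [hcard])
    -- L' and L''
    set L' := L.erase i with hL'
    have hcard' : L'.card = kc := by
      rw [hL', Finset.card_erase_of_mem hi, hcard]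
      omega
    have hiL' : i ∉ L' := Finset.notMem_erase i L
    set L'' := (Finset.univ.filter fun j => i.succAbove j ∈ L') with hL''
    have hcard'' : L''.card = kc := by
      have himg : L' = L''.image i.succAbove := by
        ext l
        constructor
        · intro hl
          have hli : l ≠ i := Finset.ne_of_mem_erase hl
          obtain ⟨j, rfl⟩ := Fin.exists_succAbove_eq hli
          exact Finset.mem_image.mpr ⟨j, by simp [hL'', hl], rfl⟩
        · intro hl
          obtain ⟨j, hj, rfl⟩ := Finset.mem_image.mp hl
          simpa [hL''] using hj
      rw [← hcard', himg, Finset.card_image_of_injective _ Fin.succAbove_right_injective]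
    obtain ⟨q₁, hq₁deg, hq₁⟩ := IH (k + 1) L' K hcard' hK hcK hne
    have hKproj : IsCompact (projMap i '' K) := hK.image (projMap_continuous i)
    have hKprojc : Convex ℝ (projMap i '' K) := projMap_convex_image i hcK
    have hKprojne : (projMap i '' K).Nonempty := hne.image _
    obtain ⟨q₂, hq₂deg, hq₂⟩ := IH k L'' (projMap i '' K) hcard'' hKproj hKprojc hKprojne
    refine ⟨q₁ + Polynomial.X * q₂, ?_, ?_⟩
    · apply le_trans (Polynomial.natDegree_add_le _ _)
      apply max_le (by omega)
      apply le_trans (Polynomial.natDegree_mul_le)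
      simp only [Polynomial.natDegree_X]
      omega
    · intro t
      have ht : (0:ℝ) ≤ (t : ℝ) := Nat.cast_nonneg t
      have hXt : IsCompact (K + boxSet (k + 1) L' (t : ℝ)) := hK.add (boxSet_compact _ _ _)
      have hXtc : Convex ℝ (K + boxSet (k + 1) L' (t : ℝ)) :=
        hcK.add (boxSet_convex _ _ _)
      have hvol : volume (K + boxSet (k + 1) L (t : ℝ)) =
          volume (K + boxSet (k + 1) L' (t : ℝ)) +
            ENNReal.ofReal t * volume (projMap i '' K + boxSet k L'' (t : ℝ)) := by
        rw [boxSet_decomp hi (t : ℝ), ← add_assoc, seg_volume_pi i hXt hXtc ht,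
          image_add' (projMap i) (projMap_add i) K _, projMap_image_boxSet i hiL' (t : ℝ)]
      rw [hvol, ENNReal.toReal_add, ENNReal.toReal_mul, ENNReal.toReal_ofReal ht]
      · rw [hq₁ t, hq₂ t]
        simp [Polynomial.eval_add, Polynomial.eval_mul]
      · exact (hXt.measure_lt_top).ne
      · apply LT.lt.ne
        apply ENNReal.mul_lt_top
        · exact ENNReal.ofReal_lt_top
        · exact ((hKproj.add (boxSet_compact _ _ _)).measure_lt_top)



/-- coefficient extraction by squeezing at infinity -/
theorem coeff_eq_one_of_squeeze {q : Polynomial ℝ} {m : ℕ} {R : ℝ} (hR : 0 ≤ R)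
    (hdeg : q.natDegree ≤ m)
    (hlow : ∀ t : ℕ, ((t : ℝ)) ^ m ≤ q.eval (t : ℝ))
    (hup : ∀ t : ℕ, q.eval (t : ℝ) ≤ ((t : ℝ) + R) ^ m) : q.coeff m = 1 := by
  -- the reversed polynomial
  set Q : Polynomial ℝ := ∑ j ∈ Finset.range (m + 1), Polynomial.C (q.coeff j) * Polynomial.X ^ (m - j) with hQ
  have hQ0 : Q.eval 0 = q.coeff m := by
    rw [hQ]
    rw [Polynomial.eval_finset_sum]
    rw [Finset.sum_eq_single m]
    · simp
    · intro j hj hjm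
      have : 0 < m - j := by
        simp only [Finset.mem_range] at hj
        omega
      simp [Polynomial.eval_pow, zero_pow (by omega : m - j ≠ 0)]
    · intro h
      exact absurd (Finset.self_mem_range_succ m) h
  -- key identity for x ≥ 1
  have hkey : ∀ x : ℝ, 1 ≤ x → Q.eval x⁻¹ = q.eval x / x ^ m := by
    intro x hx
    have hx0 : x ≠ 0 := by linarith
    rw [Polynomial.eval_eq_sum_range' (Nat.lt_succ_of_le hdeg), hQ, Polynomial.eval_finset_sum,
      Finset.sum_div]
    apply Finset.sum_congr rfl
    intro j hj
    simp only [Finset.mem_range] at hj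
    have hjm : j ≤ m := by omega
    rw [Polynomial.eval_mul, Polynomial.eval_C, Polynomial.eval_pow, Polynomial.eval_X]
    rw [inv_pow]
    rw [show x ^ m = x ^ j * x ^ (m - j) by rw [← pow_add]; congr 1; omega]
    rw [mul_comm (x ^ j)]
    rw [div_eq_mul_inv, mul_inv, ← mul_assoc, mul_comm (q.coeff j * x ^ j)]
    field_simp
  -- limit of Q.eval x⁻¹ over ℕ
  have htend : Tendsto (fun t : ℕ => Q.eval ((t : ℝ))⁻¹) atTop (nhds (q.coeff m)) := by
    rw [← hQ0]
    have h1 : Tendsto (fun t : ℕ => ((t : ℝ))⁻¹) atTop (nhds 0) :=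
      tendsto_inv_atTop_zero.comp tendsto_natCast_atTop_atTop
    exact (Q.continuous_aeval.tendsto 0).comp h1
  have hev : ∀ᶠ t : ℕ in atTop, Q.eval ((t : ℝ))⁻¹ = q.eval (t : ℝ) / (t : ℝ) ^ m := by
    filter_upwards [eventually_ge_atTop 1] with t ht
    exact hkey t (by exact_mod_cast ht)
  have htend2 : Tendsto (fun t : ℕ => q.eval (t : ℝ) / (t : ℝ) ^ m) atTop (nhds (q.coeff m)) :=
    htend.congr' hev
  -- lower bound
  have hge : 1 ≤ q.coeff m := by
    apply ge_of_tendsto htend2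
    filter_upwards [eventually_ge_atTop 1] with t ht
    have htpos : (0 : ℝ) < (t : ℝ) ^ m := by positivity
    rw [le_div_iff₀ htpos]
    simpa using hlow t
  -- upper bound
  have hub : Tendsto (fun t : ℕ => (1 + R * ((t : ℝ))⁻¹) ^ m) atTop (nhds 1) := by
    have h1 : Tendsto (fun t : ℕ => ((t : ℝ))⁻¹) atTop (nhds 0) :=
      tendsto_inv_atTop_zero.comp tendsto_natCast_atTop_atTop
    have h2 : Tendsto (fun t : ℕ => 1 + R * ((t : ℝ))⁻¹) atTop (nhds 1) := by
      have := (tendsto_const_nhds (x := (1:ℝ)) (f := atTop (α := ℕ))).add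
        ((tendsto_const_nhds (x := R) (f := atTop (α := ℕ))).mul h1)
      simpa using this
    have := h2.pow m
    simpa using this
  have hle : q.coeff m ≤ 1 := by
    apply le_of_tendsto_of_tendsto htend2 hub
    filter_upwards [eventually_ge_atTop 1] with t ht
    have htr : (1:ℝ) ≤ (t:ℝ) := by exact_mod_cast ht
    have ht0 : (t:ℝ) ≠ 0 := by linarith
    have htpos : (0 : ℝ) < (t : ℝ) ^ m := by positivity
    rw [div_le_iff₀ htpos]
    have hfac : (1 + R * (t:ℝ)⁻¹) * (t:ℝ) = (t:ℝ) + R := by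
      rw [add_mul, one_mul, mul_assoc, inv_mul_cancel₀ ht0, mul_one]
    calc q.eval (t:ℝ) ≤ ((t:ℝ) + R) ^ m := hup t
      _ = ((1 + R * ((t:ℝ))⁻¹) * (t:ℝ)) ^ m := by rw [hfac]
      _ = (1 + R * ((t:ℝ))⁻¹) ^ m * (t:ℝ) ^ m := mul_pow _ _ _
  linarith

theorem boxSet_univ (m : ℕ) (t : ℝ) : boxSet m Finset.univ t = cube m t := by
  unfold boxSet cube
  apply Set.pi_congr rfl
  intro i _
  rw [if_pos (Finset.mem_univ i)]

theorem cube_volume (m : ℕ) {t : ℝ} (ht : 0 ≤ t) :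
    volume (cube m t) = (ENNReal.ofReal t) ^ m := by
  unfold cube
  rw [volume_pi_pi]
  simp [Real.volume_Icc]


end PPAux

open PPAux

/-- For fixed `m ≥ 1`, the normalized volume `v(m,n)` with `n ≥ max (m-1) 1`
is given by a polynomial in `n` of degree exactly `m`. -/
theorem nvol_polynomial (m : ℕ) (hm : 0 < m) :
    ∃ p : Polynomial ℝ, p.degree = m ∧
      ∀ n : ℕ, max (m - 1) 1 ≤ n → nvol m n = p.eval (n : ℝ) := by
  set n0 : ℕ := max (m - 1) 1 with hn0
  have hmn0 : m ≤ n0 + 1 := by omega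
  set K0 : Set (Fin m → ℝ) := convexHull ℝ (ppVertices m n0) with hK0
  have hK0c : IsCompact K0 := (ppVertices_finite m n0).isCompact_convexHull ℝ
  have hK0conv : Convex ℝ K0 := convex_convexHull ℝ _
  have h0K0 : (0 : Fin m → ℝ) ∈ K0 := subset_convexHull ℝ _ (zero_mem_ppVertices m n0)
  have hK0ne : K0.Nonempty := ⟨0, h0K0⟩
  obtain ⟨q, hqdeg, hq⟩ := poly_volume m m Finset.univ K0 (by simp) hK0c hK0conv hK0ne
  simp only [boxSet_univ] at hq
  have hsub : K0 ⊆ cube m n0 :=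
    convexHull_min (ppVertices_subset_cube m n0) (cube_convex m _)
  -- upper and lower bounds on the volume polynomial
  have hupset : ∀ t : ℕ, K0 + cube m (t:ℝ) ⊆ cube m ((n0 : ℝ) + t) := by
    intro t
    rw [← cube_add_cube m (by positivity : (0:ℝ) ≤ (n0:ℝ)) (by positivity : (0:ℝ) ≤ (t:ℝ))]
    exact Set.add_subset_add hsub subset_rfl
  have hlowset : ∀ t : ℕ, cube m (t:ℝ) ⊆ K0 + cube m (t:ℝ) := by
    intro t x hx
    exact ⟨0, h0K0, x, hx, zero_add x⟩
  have hfin : ∀ t : ℕ, volume (K0 + cube m (t:ℝ)) ≠ ⊤ := by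
    intro t
    exact (hK0c.add (cube_compact m (t:ℝ))).measure_lt_top.ne
  have hlow : ∀ t : ℕ, ((t:ℝ))^m ≤ q.eval (t:ℝ) := by
    intro t
    rw [← hq t]
    have h1 : volume (cube m (t:ℝ)) ≤ volume (K0 + cube m (t:ℝ)) :=
      measure_mono (hlowset t)
    have h2 := ENNReal.toReal_mono (hfin t) h1
    rw [cube_volume m (by positivity : (0:ℝ) ≤ (t:ℝ))] at h2
    rw [ENNReal.toReal_pow, ENNReal.toReal_ofReal (by positivity : (0:ℝ) ≤ (t:ℝ))] at h2
    exact h2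
  have hup : ∀ t : ℕ, q.eval (t:ℝ) ≤ ((t:ℝ) + (n0:ℝ))^m := by
    intro t
    rw [← hq t]
    have h1 : volume (K0 + cube m (t:ℝ)) ≤ volume (cube m ((n0:ℝ) + t)) :=
      measure_mono (hupset t)
    have h2 := ENNReal.toReal_mono ((cube_compact m _).measure_lt_top.ne) h1
    rw [cube_volume m (by positivity : (0:ℝ) ≤ (n0:ℝ) + t), ENNReal.toReal_pow,
      ENNReal.toReal_ofReal (by positivity : (0:ℝ) ≤ (n0:ℝ) + t)] at h2
    calc (volume (K0 + cube m (t:ℝ))).toReal ≤ ((n0:ℝ) + t)^m := h2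
      _ = ((t:ℝ) + (n0:ℝ))^m := by ring
  have hco : q.coeff m = 1 :=
    coeff_eq_one_of_squeeze (by positivity : (0:ℝ) ≤ (n0:ℝ)) hqdeg hlow hup
  have hqnat : q.natDegree = m :=
    le_antisymm hqdeg (Polynomial.le_natDegree_of_ne_zero (by rw [hco]; exact one_ne_zero))
  -- the polynomial
  refine ⟨Polynomial.C ((m.factorial : ℝ)) * (q.comp (Polynomial.X - Polynomial.C (n0:ℝ))), ?_, ?_⟩
  · have hcompdeg : (q.comp (Polynomial.X - Polynomial.C (n0:ℝ))).natDegree = m := by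
      rw [Polynomial.natDegree_comp, Polynomial.natDegree_X_sub_C, hqnat, mul_one]
    have hcompne : q.comp (Polynomial.X - Polynomial.C (n0:ℝ)) ≠ 0 := by
      intro h
      rw [h, Polynomial.natDegree_zero] at hcompdeg
      omega
    rw [Polynomial.degree_C_mul (by exact_mod_cast m.factorial_ne_zero :
        ((m.factorial : ℝ)) ≠ 0), Polynomial.degree_eq_natDegree hcompne, hcompdeg]
  · intro n hn
    have hhull := hull_iter m n0 hmn0 n hn
    show (m.factorial : ℝ) * (volume (partialPermutohedron m n)).toReal = _
    rw [partialPermutohedron, hhull, ← hK0, hq (n - n0)]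
    rw [Polynomial.eval_mul, Polynomial.eval_C, Polynomial.eval_comp, Polynomial.eval_sub,
      Polynomial.eval_X, Polynomial.eval_C]
    congr 2
    rw [Nat.cast_sub hn]
end
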